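/- arXiv:1311.7307 — 5 statements merged into one kernel-verified Lean document; each statement's English description precedes it below -/
import Mathlib

section
/- For any two DIMEs E and E': L(E) = L(E') if and only if Δ_E = Δ_{E'} (i.e., C_E = C_{E'}, N_E = N_{E'}, P_E = P_{E'}, and K_E = K_{E'}). -/
set_option autoImplicit false

universe u v w

/-- An unordered word over an alphabet `σ`: a multiset over `σ`,
viewed as a function giving the number of occurrences of each symbol. -/
def UWord (σ : Type u) : Type u := σ → ℕ

/-- The empty unordered word `ε`. -/
def UWord.zero {σ : Type u} : UWord σ := fun _ => 0

/-- Unordered concatenation (multiset union) of two unordered words. -/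
def UWord.add {σ : Type u} (w₁ w₂ : UWord σ) : UWord σ := fun a => w₁ a + w₂ a

/-- The unordered word consisting of a single occurrence of `a`. -/
def UWord.single {σ : Type u} [DecidableEq σ] (a : σ) : UWord σ :=
  fun b => if b = a then 1 else 0

/-- Unordered concatenation of a list of unordered words. -/
def listSum {σ : Type u} (l : List (UWord σ)) : UWord σ := l.foldr UWord.add UWord.zero

/-- An interval multiplicity `[lo,hi]` (with `hi ∈ ℕ ∪ {∞}`), where the flag
`opt` marks the variant `[lo,hi]?` that additionally allows zero iterations. -/
structure Iv : Type where
  lo : ℕ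
  hi : ℕ∞
  opt : Bool

/-- Membership of a number of iterations in the set denoted by an interval multiplicity. -/
def Iv.Mem (I : Iv) (n : ℕ) : Prop :=
  (I.lo ≤ n ∧ (n : ℕ∞) ≤ I.hi) ∨ (I.opt = true ∧ n = 0)

/-- The multiplicity `1 = [1,1]`. -/
def Iv.one : Iv := ⟨1, 1, false⟩
/-- The multiplicity `? = [0,1]`. -/
def Iv.qmark : Iv := ⟨0, 1, false⟩
/-- The multiplicity `+ = [1,∞]`. -/
def Iv.iplus : Iv := ⟨1, ⊤, false⟩
/-- The multiplicity `* = [0,∞]`. -/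
def Iv.istar : Iv := ⟨0, ⊤, false⟩

/-- An atom `(a₁^{I₁} || ⋯ || a_k^{I_k})`: a list of symbols, each with a
multiplicity `1` (flag `true`) or `?` (flag `false`). -/
abbrev Atom (σ : Type u) : Type u := List (σ × Bool)

/-- A clause `(A₁^{I₁} | ⋯ | A_k^{I_k})`: a list of atoms with interval multiplicities. -/
abbrev Clause (σ : Type u) : Type u := List (Atom σ × Iv)

/-- A disjunctive interval multiplicity expression `(D₁^{I₁} || ⋯ || D_k^{I_k})`
(as raw syntax; well-formedness is `DIME.WF`). -/
structure DIME (σ : Type u) : Type u where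
  clauses : List (Clause σ × Iv)

/-- Language of a single symbol with its multiplicity (`1` or `?`) inside an atom. -/
def atomEntryLang {σ : Type u} [DecidableEq σ] (p : σ × Bool) : Set (UWord σ) :=
  if p.2 = true then {UWord.single p.1} else {UWord.single p.1, UWord.zero}

/-- Unordered concatenation of the languages of the items of a list. -/
def listConcLang {σ : Type u} {α : Type v} (f : α → Set (UWord σ)) :
    List α → Set (UWord σ)
  | [] => {UWord.zero}
  | x :: xs => {w | ∃ w₁ ∈ f x, ∃ w₂ ∈ listConcLang f xs, w = w₁.add w₂}

/-- The language of an atom. -/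
def Atom.lang {σ : Type u} [DecidableEq σ] (A : Atom σ) : Set (UWord σ) :=
  listConcLang atomEntryLang A

/-- The language `L(E^I)` obtained by iterating a language `L` according to
an interval multiplicity `I`. -/
def iterLang {σ : Type u} (L : Set (UWord σ)) (I : Iv) : Set (UWord σ) :=
  {w | (∃ l : List (UWord σ),
          (∀ x ∈ l, x ∈ L) ∧ I.lo ≤ l.length ∧ (l.length : ℕ∞) ≤ I.hi ∧ w = listSum l) ∨
       (I.opt = true ∧ w = UWord.zero)}

/-- The language of a clause: disjunction of its atoms with intervals. -/
def Clause.lang {σ : Type u} [DecidableEq σ] (D : Clause σ) : Set (UWord σ) :=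
  {w | ∃ p ∈ D, w ∈ iterLang (Atom.lang p.1) p.2}

/-- The language of a DIME: the unordered concatenation of its clauses with intervals. -/
def DIME.lang {σ : Type u} [DecidableEq σ] (E : DIME σ) : Set (UWord σ) :=
  listConcLang (fun p => iterLang (Clause.lang p.1) p.2) E.clauses

/-- A clause is simple if all its atoms carry multiplicity `1` or `?`. -/
def Clause.Simple {σ : Type u} (D : Clause σ) : Prop :=
  ∀ p ∈ D, p.2 = Iv.one ∨ p.2 = Iv.qmark

/-- The list of all symbol occurrences in a DIME. -/
def DIME.symbols {σ : Type u} (E : DIME σ) : List σ :=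
  E.clauses.flatMap fun p => p.1.flatMap fun q => q.1.map Prod.fst

/-- Well-formedness of a DIME `(D₁^{I₁} || ⋯ || D_k^{I_k})`: each `D_i` is either a
simple clause with `I_i ∈ {+,*}`, or a clause with `I_i ∈ {1,?}`; moreover no symbol
occurs twice in the whole expression. -/
def DIME.WF {σ : Type u} (E : DIME σ) : Prop :=
  (∀ p ∈ E.clauses,
      (Clause.Simple p.1 ∧ (p.2 = Iv.iplus ∨ p.2 = Iv.istar)) ∨
      (p.2 = Iv.one ∨ p.2 = Iv.qmark)) ∧
  E.symbols.Nodup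

/-- Conflicting pairs of siblings `C_E` of a language of unordered words. -/
def Cset {σ : Type u} (L : Set (UWord σ)) : Set (σ × σ) :=
  {p | ∀ w ∈ L, ¬(w p.1 ≠ 0 ∧ w p.2 ≠ 0)}

/-- Extended cardinality map `N_E` of a language of unordered words. -/
def Nset {σ : Type u} (L : Set (UWord σ)) : Set (σ × ℕ) :=
  {p | ∃ w ∈ L, w p.1 = p.2}

/-- Collections of required symbols `P_E` of a language of unordered words. -/
def Pset {σ : Type u} (L : Set (UWord σ)) : Set (Set σ) :=
  {X | ∀ w ∈ L, ∃ a ∈ X, w a ≠ 0}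

/-- Counting dependencies `K_E` of a language of unordered words. -/
def Kset {σ : Type u} (L : Set (UWord σ)) : Set (σ × σ) :=
  {p | ∀ w ∈ L, w p.2 ≤ w p.1}

/-- Satisfaction `w ⊨ Δ_E` of the characterizing tuple `(C_E, N_E, P_E, K_E)`
of the language `L = L(E)` by an unordered word `w`. -/
def SatTuple {σ : Type u} (L : Set (UWord σ)) (w : UWord σ) : Prop :=
  (∀ p ∈ Cset L, ¬(w p.1 ≠ 0 ∧ w p.2 ≠ 0)) ∧
  (∀ a : σ, (a, w a) ∈ Nset L) ∧
  (∀ X ∈ Pset L, ∃ a ∈ X, w a ≠ 0) ∧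
  (∀ p ∈ Kset L, w p.2 ≤ w p.1)

/-- Subsumption `Δ_{E'} ≼ Δ_E` of characterizing tuples, for `L' = L(E')` and `L = L(E)`:
`C_E ⊆ C_{E'}`, `N_{E'} ⊆ N_E`, `P_E ⊆ P_{E'}`, and `K_E ⊆ K_{E'}`. -/
def TupleLE {σ : Type u} (L' L : Set (UWord σ)) : Prop :=
  Cset L ⊆ Cset L' ∧ Nset L' ⊆ Nset L ∧ Pset L ⊆ Pset L' ∧ Kset L ⊆ Kset L'

namespace S5

set_option linter.unusedSectionVars false

variable {σ : Type} [DecidableEq σ]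

lemma add_apply (w₁ w₂ : UWord σ) (a : σ) : w₁.add w₂ a = w₁ a + w₂ a := rfl
lemma zero_apply (a : σ) : (UWord.zero : UWord σ) a = 0 := rfl
lemma add_zero' (w : UWord σ) : w.add UWord.zero = w := funext fun _ => Nat.add_zero _

lemma listSum_nil : (listSum ([] : List (UWord σ))) = UWord.zero := rfl
lemma listSum_cons (x : UWord σ) (l : List (UWord σ)) :
    listSum (x :: l) = x.add (listSum l) := rfl

lemma listSum_append (l₁ l₂ : List (UWord σ)) (a : σ) :
    listSum (l₁ ++ l₂) a = listSum l₁ a + listSum l₂ a := by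
  induction l₁ with
  | nil => simp [listSum_nil, zero_apply]
  | cons x t ih =>
    simp only [List.cons_append, listSum_cons, add_apply, ih]
    omega

lemma listSum_le {l : List (UWord σ)} {a b : σ} (h : ∀ x ∈ l, x a ≤ x b) :
    listSum l a ≤ listSum l b := by
  induction l with
  | nil => exact le_refl _
  | cons x t ih =>
    simp only [listSum_cons, add_apply]
    exact Nat.add_le_add (h x (by simp)) (ih fun y hy => h y (by simp [hy]))

lemma listSum_eq {l : List (UWord σ)} {a b : σ} (h : ∀ x ∈ l, x a = x b) :
    listSum l a = listSum l b := by
  induction l with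
  | nil => rfl
  | cons x t ih =>
    simp only [listSum_cons, add_apply]
    rw [h x (by simp), ih fun y hy => h y (by simp [hy])]

lemma listSum_eq_zero {l : List (UWord σ)} {a : σ} (h : ∀ x ∈ l, x a = 0) :
    listSum l a = 0 := by
  induction l with
  | nil => rfl
  | cons x t ih =>
    simp only [listSum_cons, add_apply]
    rw [h x (by simp), ih fun y hy => h y (by simp [hy])]

lemma listSum_ne_zero {l : List (UWord σ)} {a : σ} (h : listSum l a ≠ 0) :
    ∃ x ∈ l, x a ≠ 0 := by
  by_contra hall
  push_neg at hall
  exact h (listSum_eq_zero hall)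

lemma listSum_apply_eq_length {l : List (UWord σ)} {a : σ} (h : ∀ x ∈ l, x a = 1) :
    listSum l a = l.length := by
  induction l with
  | nil => rfl
  | cons x t ih =>
    simp only [listSum_cons, add_apply, List.length_cons]
    rw [h x (by simp), ih fun y hy => h y (by simp [hy])]
    omega

lemma listSum_apply_le_length {l : List (UWord σ)} {a : σ} (h : ∀ x ∈ l, x a ≤ 1) :
    listSum l a ≤ l.length := by
  induction l with
  | nil => exact le_refl _
  | cons x t ih =>
    simp only [listSum_cons, add_apply, List.length_cons]
    have := h x (by simp)
    have := ih fun y hy => h y (by simp [hy])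
    omega

lemma listSum_map_apply {α : Type} (F : α → UWord σ) (l : List α) (a : σ) :
    listSum (l.map F) a = (l.map (fun e => F e a)).sum := by
  induction l with
  | nil => rfl
  | cons x t ih => simp only [List.map_cons, listSum_cons, add_apply, List.sum_cons, ih]

lemma listSum_flatMap_apply {α : Type} (F : α → List (UWord σ)) (l : List α) (a : σ) :
    listSum (l.flatMap F) a = (l.map (fun e => listSum (F e) a)).sum := by
  induction l with
  | nil => rfl
  | cons x t ih =>
    simp only [List.flatMap_cons, List.map_cons, List.sum_cons, listSum_append, ih]

/-! ### listConcLang membership -/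

lemma mem_listConcLang_iff {α : Type} (f : α → Set (UWord σ)) (l : List α) (w : UWord σ) :
    w ∈ listConcLang f l ↔
      ∃ ws, List.Forall₂ (fun x u => u ∈ f x) l ws ∧ w = listSum ws := by
  induction l generalizing w with
  | nil =>
    constructor
    · intro h; exact ⟨[], List.Forall₂.nil, h⟩
    · rintro ⟨ws, h2, rfl⟩; cases h2; rfl
  | cons x t ih =>
    constructor
    · rintro ⟨w₁, hw₁, w₂, hw₂, rfl⟩
      obtain ⟨ws, h2, rfl⟩ := (ih w₂).1 hw₂
      exact ⟨w₁ :: ws, List.Forall₂.cons hw₁ h2, rfl⟩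
    · rintro ⟨ws, h2, rfl⟩
      rcases h2 with _ | ⟨hw₁, h2⟩
      exact ⟨_, hw₁, _, (ih _).2 ⟨_, h2, rfl⟩, rfl⟩

lemma forall₂_map_self {α β : Type} (R : α → β → Prop) (F : α → β) (l : List α)
    (h : ∀ x ∈ l, R x (F x)) : List.Forall₂ R l (l.map F) := by
  induction l with
  | nil => exact List.Forall₂.nil
  | cons x t ih =>
    exact List.Forall₂.cons (h x (by simp)) (ih fun y hy => h y (by simp [hy]))

lemma forall₂_mem_right {α β : Type} {R : α → β → Prop} {l : List α} {ws : List β}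
    (h : List.Forall₂ R l ws) {x : β} (hx : x ∈ ws) : ∃ y ∈ l, R y x := by
  induction h with
  | nil => cases hx
  | cons hr _ ih =>
    rcases List.mem_cons.1 hx with rfl | hx
    · exact ⟨_, by simp, hr⟩
    · obtain ⟨y, hy, hry⟩ := ih hx
      exact ⟨y, by simp [hy], hry⟩

lemma forall₂_append_split {α β : Type} {R : α → β → Prop} {l₁ l₂ : List α} {p : α}
    {ws : List β} (h : List.Forall₂ R (l₁ ++ p :: l₂) ws) :
    ∃ ws₁ u ws₂, ws = ws₁ ++ u :: ws₂ ∧ List.Forall₂ R l₁ ws₁ ∧ R p u ∧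
      List.Forall₂ R l₂ ws₂ := by
  induction l₁ generalizing ws with
  | nil =>
    rcases h with _ | ⟨hr, h⟩
    exact ⟨[], _, _, rfl, List.Forall₂.nil, hr, h⟩
  | cons x t ih =>
    rcases h with _ | ⟨hr, h⟩
    obtain ⟨ws₁, u, ws₂, rfl, h1, h2, h3⟩ := ih h
    exact ⟨_ :: ws₁, u, ws₂, rfl, List.Forall₂.cons hr h1, h2, h3⟩

/-! ### Nodup helpers -/

lemma nodup_flatMap_nodup {α : Type} {l : List α} {g : α → List σ}
    (h : (l.flatMap g).Nodup) {x : α} (hx : x ∈ l) : (g x).Nodup := by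
  induction l with
  | nil => cases hx
  | cons z t ih =>
    rw [List.flatMap_cons, List.nodup_append] at h
    rcases List.mem_cons.1 hx with rfl | hx
    · exact h.1
    · exact ih h.2.1 hx

lemma nodup_flatMap_uniq {α : Type} {l : List α} {g : α → List σ}
    (h : (l.flatMap g).Nodup) {x y : α} (hx : x ∈ l) (hy : y ∈ l) {a : σ}
    (hax : a ∈ g x) (hay : a ∈ g y) : x = y := by
  induction l with
  | nil => cases hx
  | cons z t ih =>
    rw [List.flatMap_cons, List.nodup_append] at h
    rcases List.mem_cons.1 hx with hx1 | hx1
    · rcases List.mem_cons.1 hy with hy1 | hy1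
      · rw [hx1, hy1]
      · rw [hx1] at hax
        exact (h.2.2 _ hax _ (List.mem_flatMap.2 ⟨y, hy1, hay⟩) rfl).elim
    · rcases List.mem_cons.1 hy with hy1 | hy1
      · rw [hy1] at hay
        exact (h.2.2 _ hay _ (List.mem_flatMap.2 ⟨x, hx1, hax⟩) rfl).elim
      · exact ih h.2.1 hx1 hy1

lemma nodup_sum {α : Type} {l : List α} {g : α → List σ}
    (h : (l.flatMap g).Nodup) (c : α → ℕ) (a : σ) (m : ℕ)
    (hc : ∀ e ∈ l, (a ∈ g e → c e = m) ∧ (a ∉ g e → c e = 0)) :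
    (l.map c).sum = if a ∈ l.flatMap g then m else 0 := by
  induction l with
  | nil => simp
  | cons z t ih =>
    rw [List.flatMap_cons, List.nodup_append] at h
    have ht := ih h.2.1 fun e he => hc e (by simp [he])
    by_cases hz : a ∈ g z
    · have hcz : c z = m := (hc z (by simp)).1 hz
      have hnt : a ∉ t.flatMap g := fun hmem => h.2.2 _ hz _ hmem rfl
      rw [List.map_cons, List.sum_cons, hcz, ht, if_neg hnt,
        List.flatMap_cons, if_pos (List.mem_append.2 (Or.inl hz))]
      omega
    · have hcz : c z = 0 := (hc z (by simp)).2 hz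
      rw [List.map_cons, List.sum_cons, hcz, ht, List.flatMap_cons]
      by_cases hat : a ∈ t.flatMap g
      · rw [if_pos hat, if_pos (List.mem_append.2 (Or.inr hat))]
        omega
      · rw [if_neg hat, if_neg (by simp [hz, hat])]

lemma mem_le_sum {l : List ℕ} {x : ℕ} (hx : x ∈ l) : x ≤ l.sum := by
  induction l with
  | nil => cases hx
  | cons z t ih =>
    rcases List.mem_cons.1 hx with rfl | hx
    · simp
    · simp only [List.sum_cons]; exact le_add_of_nonneg_of_le (Nat.zero_le _) (ih hx)

end S5
namespace S5

set_option linter.unusedSectionVars false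

variable {σ : Type} [DecidableEq σ]

/-! ### Symbols -/

def atomSyms (A : Atom σ) : List σ := A.map Prod.fst

def clSyms (p : Clause σ × Iv) : List σ := p.1.flatMap (fun q => atomSyms q.1)

lemma symbols_eq (E : DIME σ) : E.symbols = E.clauses.flatMap clSyms := rfl

def restrict (w : UWord σ) (s : List σ) : UWord σ := fun a => if a ∈ s then w a else 0

lemma restrict_mem {w : UWord σ} {s : List σ} {a : σ} (ha : a ∈ s) :
    restrict w s a = w a := if_pos ha

lemma restrict_not_mem {w : UWord σ} {s : List σ} {a : σ} (ha : a ∉ s) :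
    restrict w s a = 0 := if_neg ha

/-! ### Support lemmas -/

lemma supp_atomEntry {q : σ × Bool} {u : UWord σ} (hu : u ∈ atomEntryLang q)
    {a : σ} (ha : u a ≠ 0) : a = q.1 := by
  unfold atomEntryLang at hu
  by_contra hne
  split at hu
  · rw [Set.mem_singleton_iff] at hu
    rw [hu] at ha
    exact ha (by simp [UWord.single, hne])
  · rcases hu with hu | hu
    · rw [hu] at ha; exact ha (by simp [UWord.single, hne])
    · rw [hu] at ha; exact ha rfl

lemma supp_listConcLang {α : Type} {f : α → Set (UWord σ)} {g : α → List σ}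
    (hsub : ∀ x, ∀ u ∈ f x, ∀ a, u a ≠ 0 → a ∈ g x) {l : List α} {u : UWord σ}
    (hu : u ∈ listConcLang f l) {a : σ} (ha : u a ≠ 0) : a ∈ l.flatMap g := by
  induction l generalizing u with
  | nil => exact absurd (congrFun hu a) ha
  | cons x t ih =>
    obtain ⟨w₁, hw₁, w₂, hw₂, rfl⟩ := hu
    rw [List.flatMap_cons, List.mem_append]
    have : w₁ a + w₂ a ≠ 0 := ha
    rcases Nat.eq_zero_or_pos (w₁ a) with h1 | h1
    · exact Or.inr (ih hw₂ (by omega))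
    · exact Or.inl (hsub x w₁ hw₁ a (by omega))

lemma supp_atomLang {A : Atom σ} {u : UWord σ} (hu : u ∈ Atom.lang A)
    {a : σ} (ha : u a ≠ 0) : a ∈ atomSyms A := by
  have := supp_listConcLang (g := fun q => [q.1])
    (fun q u hu a ha => by simp [supp_atomEntry hu ha]) hu ha
  rw [List.mem_flatMap] at this
  obtain ⟨q, hq, hmem⟩ := this
  simp only [List.mem_singleton] at hmem
  exact hmem ▸ List.mem_map.2 ⟨q, hq, rfl⟩

lemma supp_iterLang {L : Set (UWord σ)} {s : List σ}
    (hsub : ∀ x ∈ L, ∀ a, x a ≠ 0 → a ∈ s) {I : Iv} {u : UWord σ}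
    (hu : u ∈ iterLang L I) {a : σ} (ha : u a ≠ 0) : a ∈ s := by
  rcases hu with ⟨l, hl, _, _, rfl⟩ | ⟨_, rfl⟩
  · obtain ⟨x, hx, hxa⟩ := listSum_ne_zero ha
    exact hsub x (hl x hx) a hxa
  · exact absurd rfl ha

lemma supp_clauseLang {D : Clause σ} {u : UWord σ} (hu : u ∈ Clause.lang D)
    {a : σ} (ha : u a ≠ 0) : a ∈ D.flatMap (fun q => atomSyms q.1) := by
  obtain ⟨q, hq, hu⟩ := hu
  exact List.mem_flatMap.2 ⟨q, hq, supp_iterLang (fun x hx b hb => supp_atomLang hx hb) hu ha⟩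

lemma supp_clauseIter {p : Clause σ × Iv} {u : UWord σ}
    (hu : u ∈ iterLang (Clause.lang p.1) p.2) {a : σ} (ha : u a ≠ 0) : a ∈ clSyms p :=
  supp_iterLang (fun x hx b hb => supp_clauseLang hx hb) hu ha

lemma supp_dime {E : DIME σ} {u : UWord σ} (hu : u ∈ E.lang)
    {a : σ} (ha : u a ≠ 0) : a ∈ E.symbols := by
  rw [symbols_eq]
  exact supp_listConcLang (fun p u hu a ha => supp_clauseIter hu ha) hu ha

/-! ### iterLang helpers -/

lemma mem_iter_single {L : Set (UWord σ)} {I : Iv} {x : UWord σ} (hx : x ∈ L)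
    (hlo : I.lo ≤ 1) (hhi : (1 : ℕ∞) ≤ I.hi) : x ∈ iterLang L I :=
  Or.inl ⟨[x], by simpa using hx, by simpa using hlo, by simpa using hhi,
    by rw [listSum_cons, listSum_nil, add_zero']⟩

lemma mem_iter_zero {L : Set (UWord σ)} {I : Iv} (hlo : I.lo = 0) :
    UWord.zero ∈ iterLang L I :=
  Or.inl ⟨[], by simp, by simp [hlo], by simp, rfl⟩

lemma iter_one_cases {L : Set (UWord σ)} {I : Iv} (hI : I = Iv.one ∨ I = Iv.qmark)
    {x : UWord σ} (hx : x ∈ iterLang L I) : x = UWord.zero ∨ x ∈ L := by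
  have hopt : I.opt = false := by rcases hI with rfl | rfl <;> rfl
  have hhi : I.hi = 1 := by rcases hI with rfl | rfl <;> rfl
  rcases hx with ⟨l, hl, _, hlen, rfl⟩ | ⟨h, _⟩
  · rw [hhi] at hlen
    have hlen' : l.length ≤ 1 := by exact_mod_cast hlen
    match l, hlen' with
    | [], _ => exact Or.inl rfl
    | [x], _ =>
      right
      rw [listSum_cons, listSum_nil, add_zero']
      exact hl x (by simp)
  · rw [hopt] at h; cases h

lemma iter_opt_false {L : Set (UWord σ)} {I : Iv} (hopt : I.opt = false)
    {x : UWord σ} (hx : x ∈ iterLang L I) :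
    ∃ l : List (UWord σ), (∀ y ∈ l, y ∈ L) ∧ I.lo ≤ l.length ∧
      ((l.length : ℕ∞)) ≤ I.hi ∧ x = listSum l := by
  rcases hx with h | ⟨h, _⟩
  · exact h
  · rw [hopt] at h; cases h

/-! ### Atom language characterization -/

lemma nodup_pair_uniq {A : Atom σ} (hnd : (atomSyms A).Nodup) {a : σ} {b₁ b₂ : Bool}
    (h1 : (a, b₁) ∈ A) (h2 : (a, b₂) ∈ A) : b₁ = b₂ := by
  have := List.inj_on_of_nodup_map (f := Prod.fst) hnd h1 h2 rfl
  exact congrArg Prod.snd this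

lemma single_apply (a b : σ) : UWord.single a b = if b = a then 1 else 0 := rfl

lemma atomEntry_cases {q : σ × Bool} {u : UWord σ} (hu : u ∈ atomEntryLang q) :
    u = UWord.single q.1 ∨ (q.2 = false ∧ u = UWord.zero) := by
  unfold atomEntryLang at hu
  split at hu
  · exact Or.inl hu
  · rcases hu with hu | hu
    · exact Or.inl hu
    · rename_i h
      exact Or.inr ⟨by simpa using h, hu⟩

lemma mem_atomLang_iff {A : Atom σ} (hnd : (atomSyms A).Nodup) (x : UWord σ) :
    x ∈ Atom.lang A ↔
      ((∀ q ∈ A, (q.2 = true → x q.1 = 1) ∧ (q.2 = false → x q.1 ≤ 1)) ∧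
        (∀ a, a ∉ atomSyms A → x a = 0)) := by
  induction A generalizing x with
  | nil =>
    constructor
    · intro hx
      refine ⟨by simp, fun a _ => ?_⟩
      exact congrFun (Set.mem_singleton_iff.1 hx) a
    · rintro ⟨-, h⟩
      exact Set.mem_singleton_iff.2 (funext fun a => h a (by simp [atomSyms]))
  | cons q A' ih =>
    have hq1 : q.1 ∉ atomSyms A' := by
      have h := hnd
      rw [atomSyms, List.map_cons, List.nodup_cons] at h
      exact h.1
    have hnd' : (atomSyms A').Nodup := by
      have h := hnd
      rw [atomSyms, List.map_cons, List.nodup_cons] at h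
      exact h.2
    constructor
    · rintro ⟨w₁, hw₁, w₂, hw₂, rfl⟩
      have hw₂facts := (ih hnd' w₂).1 hw₂
      have hw₁out : ∀ a, a ≠ q.1 → w₁ a = 0 := by
        intro a ha
        rcases atomEntry_cases hw₁ with rfl | ⟨-, rfl⟩
        · simp [single_apply, ha]
        · rfl
      constructor
      · intro q' hq'
        rcases List.mem_cons.1 hq' with rfl | hq'
        · have hw₂q : w₂ q'.1 = 0 := by
            by_contra h
            exact hq1 (supp_atomLang hw₂ h)
          rcases atomEntry_cases hw₁ with rfl | ⟨hf, rfl⟩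
          · constructor <;> intro _ <;> simp [add_apply, hw₂q, single_apply]
          · refine ⟨fun ht => absurd ht (by simp [hf]), fun _ => ?_⟩
            simp [add_apply, hw₂q, zero_apply]
        · have hne : q'.1 ≠ q.1 := by
            intro h
            exact hq1 (h ▸ List.mem_map.2 ⟨q', hq', rfl⟩)
          have h1 : w₁ q'.1 = 0 := hw₁out _ hne
          have h2 := hw₂facts.1 q' hq'
          constructor <;> intro hb <;> simp only [add_apply, h1, Nat.zero_add]
          · exact h2.1 hb
          · exact h2.2 hb
      · intro a ha
        have ha1 : a ≠ q.1 := fun h => ha (by simp [atomSyms, h])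
        have ha2 : a ∉ atomSyms A' := fun h => ha (by
          rw [atomSyms, List.map_cons, List.mem_cons]
          exact Or.inr h)
        simp only [add_apply, hw₁out a ha1, hw₂facts.2 a ha2]
    · rintro ⟨h1, h2⟩
      refine ⟨fun b => if b = q.1 then x q.1 else 0, ?_,
        fun b => if b = q.1 then 0 else x b, ?_, ?_⟩
      · have hx1 := h1 q (by simp)
        unfold atomEntryLang
        split
        · rename_i ht
          refine Set.mem_singleton_iff.2 ?_
          funext b
          simp only [single_apply, hx1.1 ht]
        · rename_i ht
          have hf : q.2 = false := by simpa using ht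
          rcases Nat.le_one_iff_eq_zero_or_eq_one.1 (hx1.2 hf) with h0 | h0
          · right
            refine Set.mem_singleton_iff.2 ?_
            funext b
            simp [h0, zero_apply]
          · left
            funext b
            simp [single_apply, h0]
      · refine (ih hnd' _).2 ⟨fun q' hq' => ?_, fun a ha => ?_⟩
        · have hne : q'.1 ≠ q.1 := by
            intro h
            exact hq1 (h ▸ List.mem_map.2 ⟨q', hq', rfl⟩)
          simpa only [if_neg hne] using h1 q' (by simp [hq'])
        · by_cases hb : a = q.1
          · simp [hb]
          · simp only [if_neg hb]
            refine h2 a fun h => ?_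
            rw [atomSyms, List.map_cons, List.mem_cons] at h
            rcases h with h | h
            · exact hb h
            · exact ha h
      · funext b
        by_cases hb : b = q.1
        · show x b = (if b = q.1 then x q.1 else 0) + (if b = q.1 then 0 else x b)
          simp [hb]
        · show x b = (if b = q.1 then x q.1 else 0) + (if b = q.1 then 0 else x b)
          simp [hb]

end S5
namespace S5

set_option linter.unusedSectionVars false

variable {σ : Type} [DecidableEq σ]

/-! ### Witness construction for atom iteration -/

def mkWord (A : Atom σ) (v : UWord σ) (i : ℕ) : UWord σ :=
  fun a => if (a, true) ∈ A then 1 else if (a, false) ∈ A ∧ i < v a then 1 else 0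

def mkList (A : Atom σ) (v : UWord σ) (n : ℕ) : List (UWord σ) :=
  (List.range n).map (mkWord A v)

lemma sum_map_const_one (n : ℕ) : ((List.range n).map (fun _ => (1 : ℕ))).sum = n := by
  induction n with
  | zero => rfl
  | succ k ih => rw [List.range_succ, List.map_append, List.sum_append, ih]; simp

lemma sum_map_ite_lt (n m : ℕ) :
    ((List.range n).map (fun i => if i < m then (1 : ℕ) else 0)).sum = min m n := by
  induction n with
  | zero => simp
  | succ k ih =>
    rw [List.range_succ, List.map_append, List.sum_append, ih]
    by_cases h : k < m
    · simp only [List.map_cons, List.map_nil, if_pos h, List.sum_cons, List.sum_nil]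
      omega
    · simp only [List.map_cons, List.map_nil, if_neg h, List.sum_cons, List.sum_nil]
      omega

lemma mem_of_fst_mem_atomSyms {A : Atom σ} {a : σ} (h : a ∈ atomSyms A) :
    (a, true) ∈ A ∨ (a, false) ∈ A := by
  obtain ⟨q, hq, rfl⟩ := List.mem_map.1 h
  rcases Bool.eq_false_or_eq_true q.2 with hb | hb
  · refine Or.inl ?_
    have hq' : q = (q.1, true) := by rw [← hb]
    exact hq' ▸ hq
  · refine Or.inr ?_
    have hq' : q = (q.1, false) := by rw [← hb]
    exact hq' ▸ hq


lemma mkList_spec {A : Atom σ} (hnd : (atomSyms A).Nodup) {v : UWord σ} {n : ℕ}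
    (hreq : ∀ q ∈ A, q.2 = true → v q.1 = n)
    (hopt : ∀ q ∈ A, q.2 = false → v q.1 ≤ n)
    (hsupp : ∀ a, a ∉ atomSyms A → v a = 0) :
    (∀ x ∈ mkList A v n, x ∈ Atom.lang A) ∧
      (∀ a, listSum (mkList A v n) a = v a) ∧ (mkList A v n).length = n := by
  refine ⟨?_, ?_, by simp [mkList]⟩
  · intro x hx
    obtain ⟨i, _, rfl⟩ := List.mem_map.1 hx
    refine (mem_atomLang_iff hnd _).2 ⟨fun q hqA => ?_, fun a ha => ?_⟩
    · constructor
      · intro ht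
        have : (q.1, true) ∈ A := by rw [← ht]; exact hqA
        simp [mkWord, this]
      · intro ht
        have hmem : (q.1, false) ∈ A := by rw [← ht]; exact hqA
        have hnt : (q.1, true) ∉ A := fun h =>
          Bool.noConfusion (nodup_pair_uniq hnd h hmem)
        unfold mkWord
        rw [if_neg hnt]
        split <;> omega
    · have h1 : (a, true) ∉ A := fun h => ha (List.mem_map.2 ⟨_, h, rfl⟩)
      have h2 : (a, false) ∉ A := fun h => ha (List.mem_map.2 ⟨_, h, rfl⟩)
      simp [mkWord, h1, h2]
  · intro a
    rw [mkList, listSum_map_apply]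
    by_cases h1 : (a, true) ∈ A
    · have : ∀ i, mkWord A v i a = 1 := fun i => by simp [mkWord, h1]
      simp only [Function.comp_def, this]
      rw [sum_map_const_one, hreq (a, true) h1 rfl]
    · by_cases h2 : (a, false) ∈ A
      · have : ∀ i, mkWord A v i a = if i < v a then 1 else 0 := fun i => by
          simp [mkWord, h1, h2]
        simp only [Function.comp_def, this]
        rw [sum_map_ite_lt]
        have hle : v a ≤ n := hopt (a, false) h2 rfl
        omega
      · have ha : a ∉ atomSyms A := fun h => by
          rcases mem_of_fst_mem_atomSyms h with h | h
          · exact h1 h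
          · exact h2 h
        have : ∀ i, mkWord A v i a = 0 := fun i => by simp [mkWord, h1, h2]
        simp only [Function.comp_def, this]
        rw [hsupp a ha]
        simp

/-! ### Projection lemma -/

lemma project {α : Type} {f : α → Set (UWord σ)} {g : α → List σ}
    (hsub : ∀ x, ∀ u ∈ f x, ∀ a, u a ≠ 0 → a ∈ g x)
    {l : List α} (hnd : (l.flatMap g).Nodup)
    {p : α} (hp : p ∈ l) {w : UWord σ} (hw : w ∈ listConcLang f l) :
    ∃ v ∈ f p, ∀ a, a ∈ g p → v a = w a := by
  obtain ⟨l₁, l₂, rfl⟩ := List.append_of_mem hp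
  obtain ⟨ws, h2, rfl⟩ := (mem_listConcLang_iff f _ _).1 hw
  obtain ⟨ws₁, u, ws₂, rfl, hf1, hfu, hf2⟩ := forall₂_append_split h2
  refine ⟨u, hfu, fun a ha => ?_⟩
  rw [List.flatMap_append, List.flatMap_cons, List.nodup_append] at hnd
  have hnd2 := (List.nodup_append.1 hnd.2.1)
  have ha1 : a ∉ l₁.flatMap g := fun hmem =>
    hnd.2.2 _ hmem _ (List.mem_append.2 (Or.inl ha)) rfl
  have ha2 : a ∉ l₂.flatMap g := fun hmem => hnd2.2.2 _ ha _ hmem rfl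
  have hz1 : listSum ws₁ a = 0 := by
    apply listSum_eq_zero
    intro x hx
    by_contra hxa
    obtain ⟨y, hy, hry⟩ := forall₂_mem_right hf1 hx
    exact ha1 (List.mem_flatMap.2 ⟨y, hy, hsub y x hry a hxa⟩)
  have hz2 : listSum ws₂ a = 0 := by
    apply listSum_eq_zero
    intro x hx
    by_contra hxa
    obtain ⟨y, hy, hry⟩ := forall₂_mem_right hf2 hx
    exact ha2 (List.mem_flatMap.2 ⟨y, hy, hsub y x hry a hxa⟩)
  rw [listSum_append, listSum_cons, add_apply, hz1, hz2]
  omega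

/-- Projection of a word in `L(E)` to the part for a given clause occurrence. -/
lemma project_dime {E : DIME σ} (hnd : E.symbols.Nodup) {u : UWord σ} (hu : u ∈ E.lang)
    {p : Clause σ × Iv} (hp : p ∈ E.clauses) :
    ∃ v ∈ iterLang (Clause.lang p.1) p.2, (∀ a, a ∈ clSyms p → v a = u a) ∧
      (∀ a, v a ≠ 0 → a ∈ clSyms p) := by
  rw [symbols_eq] at hnd
  obtain ⟨v, hv, hag⟩ := project (fun x u hu a ha => supp_clauseIter hu ha) hnd hp hu
  exact ⟨v, hv, hag, fun a ha => supp_clauseIter hv ha⟩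

end S5
namespace S5

set_option linter.unusedSectionVars false
set_option maxHeartbeats 1000000

variable {σ : Type} [DecidableEq σ]

lemma fst_mem_atomSyms {A : Atom σ} {q : σ × Bool} (hq : q ∈ A) :
    q.1 ∈ atomSyms A := List.mem_map.2 ⟨q, hq, rfl⟩

def atomCnt (A : Atom σ) (v : UWord σ) : ℕ :=
  match A.find? (fun q => q.2) with
  | some q => v q.1
  | none => (A.map (fun q => v q.1)).sum

lemma atomCnt_some {A : Atom σ} {v : UWord σ} {q₀ : σ × Bool}
    (h : A.find? (fun q => q.2) = some q₀) : atomCnt A v = v q₀.1 := by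
  unfold atomCnt
  rw [h]

lemma atomCnt_none {A : Atom σ} {v : UWord σ}
    (h : A.find? (fun q => q.2) = none) : atomCnt A v = (A.map (fun q => v q.1)).sum := by
  unfold atomCnt
  rw [h]

/-- In a word of a clause language, within each atom the count of any symbol is at most the
count of any required symbol, with equality for required symbols. -/
lemma clause_word_le {D : Clause σ} (hnd : (D.flatMap (fun q => atomSyms q.1)).Nodup)
    {d : UWord σ} (hd : d ∈ Clause.lang D) {A : Atom σ} {J : Iv} (hAJ : (A, J) ∈ D)
    {q' : σ × Bool} (hq' : q' ∈ A) (ht' : q'.2 = true) {q : σ × Bool} (hq : q ∈ A) :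
    d q.1 ≤ d q'.1 ∧ (q.2 = true → d q.1 = d q'.1) := by
  obtain ⟨e, he, hde⟩ := hd
  have hndA : (atomSyms A).Nodup := nodup_flatMap_nodup hnd hAJ
  have hq'm : q'.1 ∈ atomSyms A := fst_mem_atomSyms hq'
  have hqm : q.1 ∈ atomSyms A := fst_mem_atomSyms hq
  by_cases hin : q'.1 ∈ atomSyms e.1
  · have heq : e = (A, J) := nodup_flatMap_uniq hnd he hAJ hin hq'm
    rw [heq] at hde
    rcases hde with ⟨l, hl, -, -, rfl⟩ | ⟨-, rfl⟩
    · have h1 : ∀ x ∈ l, x q'.1 = 1 := fun x hx =>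
        (((mem_atomLang_iff hndA x).1 (hl x hx)).1 q' hq').1 ht'
      constructor
      · apply listSum_le
        intro x hx
        rw [h1 x hx]
        rcases Bool.eq_false_or_eq_true q.2 with hb | hb
        · exact le_of_eq ((((mem_atomLang_iff hndA x).1 (hl x hx)).1 q hq).1 hb)
        · exact (((mem_atomLang_iff hndA x).1 (hl x hx)).1 q hq).2 hb
      · intro ht
        apply listSum_eq
        intro x hx
        rw [h1 x hx]
        exact (((mem_atomLang_iff hndA x).1 (hl x hx)).1 q hq).1 ht
    · exact ⟨le_refl _, fun _ => rfl⟩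
  · have hsup : ∀ a, d a ≠ 0 → a ∈ atomSyms e.1 :=
      fun a ha => supp_iterLang (fun x hx b hb => supp_atomLang hx hb) hde ha
    have h0' : d q'.1 = 0 := by
      by_contra h
      exact hin (hsup _ h)
    have h0 : d q.1 = 0 := by
      by_contra h
      have hin2 : q.1 ∈ atomSyms e.1 := hsup _ h
      have heq : e = (A, J) := nodup_flatMap_uniq hnd he hAJ hin2 hqm
      exact hin (heq ▸ hq'm)
    rw [h0, h0']
    exact ⟨le_refl _, fun _ => rfl⟩

lemma clause_mem (E : DIME σ) (hWF : E.WF) (w : UWord σ) (hsat : SatTuple E.lang w)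
    {p : Clause σ × Iv} (hp : p ∈ E.clauses) :
    restrict w (clSyms p) ∈ iterLang (Clause.lang p.1) p.2 := by
  obtain ⟨hcl, hnd⟩ := hWF
  obtain ⟨hC, hN, hP, hK⟩ := hsat
  have hndE : (E.clauses.flatMap clSyms).Nodup := by rw [← symbols_eq]; exact hnd
  have hndD : (p.1.flatMap (fun q => atomSyms q.1)).Nodup := nodup_flatMap_nodup hndE hp
  set S := clSyms p with hSdef
  set v := restrict w S with hvdef
  have hvw : ∀ a, a ∈ S → v a = w a := fun a ha => restrict_mem ha
  have hvS : ∀ a, a ∉ S → v a = 0 := fun a ha => restrict_not_mem ha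
  have hoptF : p.2.opt = false := by
    rcases hcl p hp with ⟨-, h | h⟩ | h | h <;> rw [h] <;> rfl
  have hmemS : ∀ {A : Atom σ} {J : Iv}, (A, J) ∈ p.1 → ∀ {a : σ}, a ∈ atomSyms A → a ∈ S := by
    intro A J hAJ a ha
    exact List.mem_flatMap.2 ⟨(A, J), hAJ, ha⟩
  have hWle : ∀ {A : Atom σ} {J : Iv}, (A, J) ∈ p.1 → ∀ q' ∈ A, q'.2 = true →
      ∀ q ∈ A, w q.1 ≤ w q'.1 := by
    intro A J hAJ q' hq' ht' q hq
    refine hK (q'.1, q.1) ?_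
    intro u hu
    show u q.1 ≤ u q'.1
    obtain ⟨vu, hvu, hag, -⟩ := project_dime hnd hu hp
    have hm1 : q.1 ∈ clSyms p := List.mem_flatMap.2 ⟨(A, J), hAJ, fst_mem_atomSyms hq⟩
    have hm2 : q'.1 ∈ clSyms p := List.mem_flatMap.2 ⟨(A, J), hAJ, fst_mem_atomSyms hq'⟩
    rw [← hag _ hm1, ← hag _ hm2]
    obtain ⟨l, hl, -, -, rfl⟩ := iter_opt_false hoptF hvu
    exact listSum_le fun x hx => (clause_word_le hndD (hl x hx) hAJ hq' ht' hq).1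
  have hWeq : ∀ {A : Atom σ} {J : Iv}, (A, J) ∈ p.1 → ∀ q' ∈ A, q'.2 = true →
      ∀ q ∈ A, q.2 = true → w q.1 = w q'.1 := fun hAJ q' hq' ht' q hq ht =>
    le_antisymm (hWle hAJ q' hq' ht' q hq) (hWle hAJ q hq ht q' hq')
  by_cases hz : ∀ a, v a = 0
  · have hveq : v = UWord.zero := funext hz
    by_cases h0 : UWord.zero ∈ iterLang (Clause.lang p.1) p.2
    · rw [hveq]; exact h0
    · exfalso
      have hPS : {a | a ∈ S} ∈ Pset E.lang := by
        intro u hu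
        obtain ⟨vu, hvu, hag, hsupp⟩ := project_dime hnd hu hp
        have hvune : ¬ ∀ a, vu a = 0 := by
          intro hall
          have hz' : vu = UWord.zero := funext hall
          exact h0 (hz' ▸ hvu)
        push_neg at hvune
        obtain ⟨a, ha⟩ := hvune
        exact ⟨a, hsupp a ha, by rw [← hag a (hsupp a ha)]; exact ha⟩
      obtain ⟨a, haS, haw⟩ := hP _ hPS
      exact haw (by rw [← hvw a haS]; exact hz a)
  · push_neg at hz
    obtain ⟨c₀, hc₀⟩ := hz
    have hc₀S : c₀ ∈ S := by by_contra h; exact hc₀ (hvS _ h)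
    rcases hcl p hp with ⟨hsimp, hI⟩ | hI
    · -- starred simple clause
      set bigL := p.1.flatMap
        (fun e => mkList e.1 (restrict v (atomSyms e.1)) (atomCnt e.1 v)) with hbigL
      have hentry : ∀ A (J : Iv), (A, J) ∈ p.1 →
          (∀ x ∈ mkList A (restrict v (atomSyms A)) (atomCnt A v), x ∈ Atom.lang A) ∧
          (∀ a, listSum (mkList A (restrict v (atomSyms A)) (atomCnt A v)) a
              = restrict v (atomSyms A) a) ∧
          (mkList A (restrict v (atomSyms A)) (atomCnt A v)).length = atomCnt A v := by
        intro A J he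
        have hndA : (atomSyms A).Nodup := nodup_flatMap_nodup hndD he
        apply mkList_spec hndA
        · intro q hq ht
          rw [restrict_mem (fst_mem_atomSyms hq)]
          cases hfind : A.find? (fun q => q.2) with
          | some q₀ =>
            have hq₀A : q₀ ∈ A := List.mem_of_find?_eq_some hfind
            have hq₀t : q₀.2 = true := by simpa using List.find?_some hfind
            rw [atomCnt_some hfind, hvw _ (hmemS he (fst_mem_atomSyms hq)),
              hvw _ (hmemS he (fst_mem_atomSyms hq₀A))]
            exact hWeq he q₀ hq₀A hq₀t q hq ht
          | none =>
            exact absurd ht (by simpa using List.find?_eq_none.1 hfind q hq)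
        · intro q hq hf
          rw [restrict_mem (fst_mem_atomSyms hq)]
          cases hfind : A.find? (fun q => q.2) with
          | some q₀ =>
            have hq₀A : q₀ ∈ A := List.mem_of_find?_eq_some hfind
            have hq₀t : q₀.2 = true := by simpa using List.find?_some hfind
            rw [atomCnt_some hfind, hvw _ (hmemS he (fst_mem_atomSyms hq)),
              hvw _ (hmemS he (fst_mem_atomSyms hq₀A))]
            exact hWle he q₀ hq₀A hq₀t q hq
          | none =>
            rw [atomCnt_none hfind]
            exact mem_le_sum (List.mem_map.2 ⟨q, hq, rfl⟩)
        · intro a ha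
          exact restrict_not_mem ha
      have hsum : ∀ a, listSum bigL a = v a := by
        intro a
        rw [hbigL, listSum_flatMap_apply]
        rw [nodup_sum hndD
          (fun e => listSum (mkList e.1 (restrict v (atomSyms e.1)) (atomCnt e.1 v)) a) a (v a)
          (fun e he =>
            ⟨fun hmem => ((hentry e.1 e.2 (by rwa [Prod.mk.eta])).2.1 a).trans
                (restrict_mem hmem),
             fun hmem => ((hentry e.1 e.2 (by rwa [Prod.mk.eta])).2.1 a).trans
                (restrict_not_mem hmem)⟩)]
        by_cases haS : a ∈ p.1.flatMap (fun e => atomSyms e.1)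
        · rw [if_pos haS]
        · rw [if_neg haS]
          exact (hvS a haS).symm
      have hmem : ∀ x ∈ bigL, x ∈ Clause.lang p.1 := by
        intro x hx
        obtain ⟨e, he, hxe⟩ := List.mem_flatMap.1 hx
        have hxA : x ∈ Atom.lang e.1 := (hentry e.1 e.2 (by rwa [Prod.mk.eta]) ).1 x hxe
        refine ⟨e, he, mem_iter_single hxA ?_ ?_⟩
        · rcases hsimp e he with h | h <;> rw [h]
          · exact le_refl 1
          · exact Nat.zero_le 1
        · rcases hsimp e he with h | h <;> rw [h] <;> exact le_refl (1 : ℕ∞)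
      have hlen1 : 1 ≤ bigL.length := by
        obtain ⟨e₀, he₀, hc₀A⟩ := List.mem_flatMap.1 hc₀S
        obtain ⟨q_c, hq_cA, hq_c1⟩ := List.mem_map.1 hc₀A
        have hn₀ : 1 ≤ atomCnt e₀.1 v := by
          cases hfind : e₀.1.find? (fun q => q.2) with
          | some q₀ =>
            have hq₀A : q₀ ∈ e₀.1 := List.mem_of_find?_eq_some hfind
            have hq₀t : q₀.2 = true := by simpa using List.find?_some hfind
            rw [atomCnt_some hfind]
            have hle : w q_c.1 ≤ w q₀.1 :=
              hWle (A := e₀.1) (J := e₀.2) (by rwa [Prod.mk.eta]) q₀ hq₀A hq₀t q_c hq_cA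
            have h1 : v q₀.1 = w q₀.1 :=
              hvw _ (hmemS (A := e₀.1) (J := e₀.2) (by rwa [Prod.mk.eta])
                (fst_mem_atomSyms hq₀A))
            have h2 : v q_c.1 = w q_c.1 :=
              hvw _ (hmemS (A := e₀.1) (J := e₀.2) (by rwa [Prod.mk.eta])
                (fst_mem_atomSyms hq_cA))
            have h3 : v q_c.1 ≠ 0 := by rw [hq_c1]; exact hc₀
            omega
          | none =>
            rw [atomCnt_none hfind]
            have hm : v c₀ ∈ e₀.1.map (fun q => v q.1) :=
              List.mem_map.2 ⟨q_c, hq_cA, by rw [hq_c1]⟩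
            have := mem_le_sum hm
            omega
        calc 1 ≤ atomCnt e₀.1 v := hn₀
          _ = (mkList e₀.1 (restrict v (atomSyms e₀.1)) (atomCnt e₀.1 v)).length :=
              ((hentry e₀.1 e₀.2 (by rwa [Prod.mk.eta])).2.2).symm
          _ ≤ bigL.length := by
              rw [hbigL, List.length_flatMap]
              exact mem_le_sum (List.mem_map.2 ⟨e₀, he₀, rfl⟩)
      refine Or.inl ⟨bigL, hmem, ?_, ?_, funext fun a => (hsum a).symm⟩
      · rcases hI with h | h <;> rw [h]
        · exact hlen1
        · exact Nat.zero_le _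
      · rcases hI with h | h <;> rw [h] <;> exact le_top
    · -- clause with multiplicity 1 or ?
      have hSne : S.toFinset.Nonempty := ⟨c₀, List.mem_toFinset.2 hc₀S⟩
      obtain ⟨b₀, hb₀mem, hb₀max⟩ := Finset.exists_max_image S.toFinset v hSne
      have hb₀S : b₀ ∈ S := List.mem_toFinset.1 hb₀mem
      have hmax : ∀ c ∈ S, v c ≤ v b₀ := fun c hc => hb₀max c (List.mem_toFinset.2 hc)
      have hb₀pos : v b₀ ≠ 0 := fun h => hc₀ (Nat.le_zero.1 (h ▸ hmax c₀ hc₀S))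
      obtain ⟨A, J, hAJ, hb₀A⟩ : ∃ A J, (A, J) ∈ p.1 ∧ b₀ ∈ atomSyms A := by
        obtain ⟨e, he, hmem⟩ := List.mem_flatMap.1 hb₀S
        exact ⟨e.1, e.2, by rwa [Prod.mk.eta], hmem⟩
      have hndA : (atomSyms A).Nodup := nodup_flatMap_nodup hndD hAJ
      have hsv : ∀ c, v c ≠ 0 → c ∈ atomSyms A := by
        intro c hc
        have hcS : c ∈ S := by by_contra h; exact hc (hvS _ h)
        by_contra hcA
        have hCmem : (b₀, c) ∈ Cset E.lang := by
          intro u hu hcon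
          obtain ⟨vu, hvu, hag, hsupp⟩ := project_dime hnd hu hp
          have hvb : vu b₀ ≠ 0 := by rw [hag b₀ hb₀S]; exact hcon.1
          have hvc : vu c ≠ 0 := by rw [hag c hcS]; exact hcon.2
          rcases iter_one_cases hI hvu with rfl | hvu'
          · exact hvb rfl
          · obtain ⟨e'', he'', hvu''⟩ := hvu'
            have hsup : ∀ a, vu a ≠ 0 → a ∈ atomSyms e''.1 :=
              fun a ha => supp_iterLang (fun x hx b hb => supp_atomLang hx hb) hvu'' ha
            have h1 : e'' = (A, J) := nodup_flatMap_uniq hndD he'' hAJ (hsup b₀ hvb) hb₀A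
            have hce : c ∈ atomSyms e''.1 := hsup c hvc
            rw [h1] at hce
            exact hcA hce
        exact hC (b₀, c) hCmem
          ⟨by rw [← hvw b₀ hb₀S]; exact hb₀pos, by rw [← hvw c hcS]; exact hc⟩
      have hbuild : ∃ n, (∀ q ∈ A, q.2 = true → v q.1 = n) ∧
          (∀ q ∈ A, q.2 = false → v q.1 ≤ n) ∧ J.lo ≤ n ∧ (n : ℕ∞) ≤ J.hi := by
        by_cases hreqA : ∃ q ∈ A, q.2 = true
        · obtain ⟨q₀, hq₀A, hq₀t⟩ := hreqA
          have hq₀S : q₀.1 ∈ S := hmemS hAJ (fst_mem_atomSyms hq₀A)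
          have hn1 : 1 ≤ v q₀.1 := by
            obtain ⟨q_b, hq_bA, hq_b1⟩ := List.mem_map.1 hb₀A
            have h1 : w q_b.1 ≤ w q₀.1 := hWle hAJ q₀ hq₀A hq₀t q_b hq_bA
            have h2 : v q_b.1 = w q_b.1 :=
              hvw _ (hmemS hAJ (fst_mem_atomSyms hq_bA))
            have h3 : v q₀.1 = w q₀.1 := hvw _ hq₀S
            have h4 : v q_b.1 ≠ 0 := by rw [hq_b1]; exact hb₀pos
            omega
          have hlohi : J.lo ≤ v q₀.1 ∧ (v q₀.1 : ℕ∞) ≤ J.hi := by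
            obtain ⟨u, hu, hua⟩ := hN q₀.1
            obtain ⟨vu, hvu, hag, -⟩ := project_dime hnd hu hp
            have hvq : vu q₀.1 = v q₀.1 := by
              rw [hag _ hq₀S]
              show u q₀.1 = v q₀.1
              rw [hua, ← hvw _ hq₀S]
            have hvne : vu q₀.1 ≠ 0 := by rw [hvq]; omega
            rcases iter_one_cases hI hvu with rfl | hvu'
            · exact absurd rfl hvne
            · obtain ⟨e'', he'', hvu''⟩ := hvu'
              have hq₀e : q₀.1 ∈ atomSyms e''.1 :=
                supp_iterLang (fun x hx b hb => supp_atomLang hx hb) hvu'' hvne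
              have he : e'' = (A, J) :=
                nodup_flatMap_uniq hndD he'' hAJ hq₀e (fst_mem_atomSyms hq₀A)
              rw [he] at hvu''
              rcases hvu'' with ⟨l, hl, hlo, hhi, heq⟩ | ⟨-, rfl⟩
              · have hlen : vu q₀.1 = l.length := by
                  rw [heq]
                  exact listSum_apply_eq_length fun x hx =>
                    (((mem_atomLang_iff hndA x).1 (hl x hx)).1 q₀ hq₀A).1 hq₀t
                rw [← hvq, hlen]
                exact ⟨hlo, hhi⟩
              · exact absurd rfl hvne
          refine ⟨v q₀.1, ?_, ?_, hlohi.1, hlohi.2⟩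
          · intro q hq ht
            rw [hvw _ (hmemS hAJ (fst_mem_atomSyms hq)), hvw _ hq₀S]
            exact hWeq hAJ q₀ hq₀A hq₀t q hq ht
          · intro q hq _
            rw [hvw _ (hmemS hAJ (fst_mem_atomSyms hq)), hvw _ hq₀S]
            exact hWle hAJ q₀ hq₀A hq₀t q hq
        · push_neg at hreqA
          obtain ⟨u, hu, hub⟩ := hN b₀
          obtain ⟨vu, hvu, hag, -⟩ := project_dime hnd hu hp
          have hvb : vu b₀ = v b₀ := by
            rw [hag _ hb₀S]
            show u b₀ = v b₀
            rw [hub, ← hvw _ hb₀S]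
          have hvbne : vu b₀ ≠ 0 := by rw [hvb]; exact hb₀pos
          rcases iter_one_cases hI hvu with rfl | hvu'
          · exact absurd rfl hvbne
          · obtain ⟨e'', he'', hvu''⟩ := hvu'
            have hb₀e : b₀ ∈ atomSyms e''.1 :=
              supp_iterLang (fun x hx b hb => supp_atomLang hx hb) hvu'' hvbne
            have he : e'' = (A, J) := nodup_flatMap_uniq hndD he'' hAJ hb₀e hb₀A
            rw [he] at hvu''
            rcases hvu'' with ⟨l, hl, hlo, hhi, heq⟩ | ⟨-, rfl⟩
            · refine ⟨l.length, ?_, ?_, hlo, hhi⟩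
              · intro q hq ht
                exact absurd ht (by simpa using hreqA q hq)
              · intro q hq _
                obtain ⟨q_b, hq_bA, hq_b1⟩ := List.mem_map.1 hb₀A
                have hq_bf : q_b.2 = false := by simpa using hreqA q_b hq_bA
                have hble : vu b₀ ≤ l.length := by
                  rw [heq]
                  refine listSum_apply_le_length fun x hx => ?_
                  have := (((mem_atomLang_iff hndA x).1 (hl x hx)).1 q_b hq_bA).2 hq_bf
                  rwa [hq_b1] at this
                calc v q.1 ≤ v b₀ := hmax _ (hmemS hAJ (fst_mem_atomSyms hq))
                  _ = vu b₀ := hvb.symm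
                  _ ≤ l.length := hble
            · exact absurd rfl hvbne
      obtain ⟨n, hreq, hopt, hlo, hhi⟩ := hbuild
      obtain ⟨hmemA, hsumA, hlenA⟩ := mkList_spec hndA hreq hopt
        (fun a ha => by by_contra h; exact ha (hsv a h))
      have hvA : v ∈ iterLang (Atom.lang A) J :=
        Or.inl ⟨mkList A v n, hmemA, by rw [hlenA]; exact hlo, by rw [hlenA]; exact hhi,
          funext fun a => (hsumA a).symm⟩
      have hvD : v ∈ Clause.lang p.1 := ⟨(A, J), hAJ, hvA⟩
      refine mem_iter_single hvD ?_ ?_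
      · rcases hI with h | h <;> rw [h]
        · exact le_refl 1
        · exact Nat.zero_le 1
      · rcases hI with h | h <;> rw [h] <;> exact le_refl (1 : ℕ∞)

lemma mem_sat {L : Set (UWord σ)} {w : UWord σ} (hw : w ∈ L) : SatTuple L w :=
  ⟨fun p hp => hp w hw, fun _ => ⟨w, hw, rfl⟩, fun X hX => hX w hw, fun p hp => hp w hw⟩

lemma sat_congr {L L' : Set (UWord σ)} (hC : Cset L = Cset L') (hN' : Nset L = Nset L')
    (hP' : Pset L = Pset L') (hK' : Kset L = Kset L') {w : UWord σ}
    (h : SatTuple L w) : SatTuple L' w := by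
  unfold SatTuple at h ⊢
  rw [← hC, ← hN', ← hP', ← hK']
  exact h

lemma sat_mem (E : DIME σ) (hWF : E.WF) (w : UWord σ) (hsat : SatTuple E.lang w) :
    w ∈ E.lang := by
  have hnd := hWF.2
  have hndE : (E.clauses.flatMap clSyms).Nodup := by rw [← symbols_eq]; exact hnd
  have hparts : ∀ p ∈ E.clauses, restrict w (clSyms p) ∈ iterLang (Clause.lang p.1) p.2 :=
    fun p hp => clause_mem E hWF w hsat hp
  refine (mem_listConcLang_iff _ _ _).2
    ⟨E.clauses.map (fun p => restrict w (clSyms p)),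
     forall₂_map_self _ _ _ hparts, funext fun a => ?_⟩
  rw [listSum_map_apply]
  rw [nodup_sum hndE (fun p => restrict w (clSyms p) a) a (w a)
    (fun e _ => ⟨fun hm => restrict_mem hm, fun hm => restrict_not_mem hm⟩)]
  by_cases ha : a ∈ E.clauses.flatMap clSyms
  · rw [if_pos ha]
  · rw [if_neg ha]
    obtain ⟨u, hu, hua⟩ := hsat.2.1 a
    rw [show w a = u a from hua.symm]
    by_contra h
    exact ha (symbols_eq E ▸ supp_dime hu h)

end S5
/-- For any two DIMEs `E` and `E'`: `L(E) = L(E')` if and only if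
`Δ_E = Δ_{E'}` (i.e. `C_E = C_{E'}`, `N_E = N_{E'}`, `P_E = P_{E'}` and `K_E = K_{E'}`). -/
theorem statement5 {σ : Type} [DecidableEq σ] [Fintype σ]
    (E E' : DIME σ) (hE : E.WF) (hE' : E'.WF) :
    DIME.lang E = DIME.lang E' ↔
      (Cset (DIME.lang E) = Cset (DIME.lang E') ∧
       Nset (DIME.lang E) = Nset (DIME.lang E') ∧
       Pset (DIME.lang E) = Pset (DIME.lang E') ∧
       Kset (DIME.lang E) = Kset (DIME.lang E')) := by
  constructor
  · intro h
    rw [h]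
    exact ⟨rfl, rfl, rfl, rfl⟩
  · rintro ⟨hC, hN, hP, hK⟩
    apply Set.Subset.antisymm
    · intro w hw
      exact S5.sat_mem E' hE' w (S5.sat_congr hC hN hP hK (S5.mem_sat hw))
    · intro w hw
      exact S5.sat_mem E hE w (S5.sat_congr hC.symm hN.symm hP.symm hK.symm (S5.mem_sat hw))
end

section
/- For every reduced DIME E and every unordered word w: w ⊨ Δ_E if and only if w ⊨ Δ̂_E. -/
set_option autoImplicit false

universe u v w

/-- Type 1 of a clause with interval in a reduced DIME:
`(A₁|…|A_k)^+` with `k ≥ 2` and every atom containing a symbol with multiplicity `1`. -/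
def EntryType1 {σ : Type u} (D : Clause σ) (I : Iv) : Prop :=
  I = Iv.iplus ∧ 2 ≤ D.length ∧ ∀ p ∈ D, p.2 = Iv.one ∧ ∃ q ∈ p.1, q.2 = true

/-- Type 2 of a clause with interval in a reduced DIME:
`(A₁^{I₁}|…|A_k^{I_k})` where every atom contains a symbol with multiplicity `1`
and `0` belongs to no interval `I_i`. -/
def EntryType2 {σ : Type u} (D : Clause σ) (I : Iv) : Prop :=
  I = Iv.one ∧ ∀ p ∈ D, (∃ q ∈ p.1, q.2 = true) ∧ ¬ p.2.Mem 0

/-- Type 3 of a clause with interval in a reduced DIME: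
`(A₁^{I₁}|…|A_k^{I_k})` where `0` belongs to every interval `I_i`. -/
def EntryType3 {σ : Type u} (D : Clause σ) (I : Iv) : Prop :=
  I = Iv.one ∧ ∀ p ∈ D, p.2.Mem 0

/-- A DIME is reduced if each of its clauses with interval has type 1, 2 or 3. -/
def DIME.Reduced {σ : Type u} (E : DIME σ) : Prop :=
  ∀ p ∈ E.clauses, EntryType1 p.1 p.2 ∨ EntryType2 p.1 p.2 ∨ EntryType3 p.1 p.2

/-- `a = Φ(A)`: `a` is the smallest symbol of the atom `A` carrying multiplicity `1`. -/
def IsPhi {σ : Type u} [LinearOrder σ] (A : Atom σ) (a : σ) : Prop :=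
  (a, true) ∈ A ∧ ∀ b : σ, (b, true) ∈ A → a ≤ b

/-- `n ∈ N̂_E(a)`: the compact representation of the extended cardinality map of a
reduced DIME `E`.  `N̂_E(a) = [0,0]` if `a` occurs in no clause of `E`; `[0,∞]` if `a`
occurs in a clause of type 1; `I^A` if `I^a = 1` and the atom `A` containing `a` is the
unique atom of its clause (of type 2 or 3); `I^A ∪ {0}` if `I^a = 1` and `A` is one of at
least two atoms of its clause (of type 2 or 3); `[0, max(I^A)]` if `I^a = ?`. -/
def DIME.NhatMem {σ : Type u} [LinearOrder σ] (E : DIME σ) (a : σ) (n : ℕ) : Prop :=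
  ((a ∉ E.symbols) ∧ n = 0) ∨
  (∃ p ∈ E.clauses, EntryType1 p.1 p.2 ∧ ∃ q ∈ p.1, ∃ r ∈ q.1, r.1 = a) ∨
  (∃ p ∈ E.clauses, (EntryType2 p.1 p.2 ∨ EntryType3 p.1 p.2) ∧
      ∃ q ∈ p.1, (a, true) ∈ q.1 ∧
        ((p.1.length = 1 ∧ q.2.Mem n) ∨ (2 ≤ p.1.length ∧ (q.2.Mem n ∨ n = 0)))) ∨
  (∃ p ∈ E.clauses, (EntryType2 p.1 p.2 ∨ EntryType3 p.1 p.2) ∧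
      ∃ q ∈ p.1, (a, false) ∈ q.1 ∧ (n : ℕ∞) ≤ q.2.hi)

/-- `X ∈ P̂_E`: the compact representation of the collections of required symbols of a
reduced DIME `E`: the sets `Φ(D^I) = {Φ(A) | A atom of D}` for the clauses with interval
`D^I` of type 1 or 2 of `E`. -/
def DIME.PhatMem {σ : Type u} [LinearOrder σ] (E : DIME σ) (X : Set σ) : Prop :=
  ∃ p ∈ E.clauses, (EntryType1 p.1 p.2 ∨ EntryType2 p.1 p.2) ∧
    X = {a | ∃ q ∈ p.1, IsPhi q.1 a}

/-- Satisfaction `w ⊨ Δ̂_E` of the compact representation `(C_E, N̂_E, P̂_E, K_E)` of the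
characterizing tuple of a reduced DIME `E`. -/
def DIME.SatHat {σ : Type u} [LinearOrder σ] (E : DIME σ) (w : UWord σ) : Prop :=
  (∀ p ∈ Cset (DIME.lang E), ¬(w p.1 ≠ 0 ∧ w p.2 ≠ 0)) ∧
  (∀ a : σ, E.NhatMem a (w a)) ∧
  (∀ X : Set σ, E.PhatMem X → ∃ a ∈ X, w a ≠ 0) ∧
  (∀ p ∈ Kset (DIME.lang E), w p.2 ≤ w p.1)

/-- The symbols implied by a language (of a DIME `E`) in the presence of a set of
symbols `X`: `impl_E(X) = X ∪ {a | ∃ b ∈ X, (a,b) ∈ K_E ∧ (b,a) ∈ K_E}`. -/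
def implSet {σ : Type u} (L : Set (UWord σ)) (X : Set σ) : Set σ :=
  X ∪ {a | ∃ b ∈ X, (a, b) ∈ Kset L ∧ (b, a) ∈ Kset L}

/-- Subsumption `Δ̂_{E'} ≼ Δ̂_E` of the compact representations of the characterizing
tuples of two reduced DIMEs. -/
def HatLE {σ : Type u} [LinearOrder σ] (E' E : DIME σ) : Prop :=
  Cset (DIME.lang E) ⊆ Cset (DIME.lang E') ∧
  Kset (DIME.lang E) ⊆ Kset (DIME.lang E') ∧
  (∀ a : σ, ∀ n : ℕ, DIME.NhatMem E' a n → DIME.NhatMem E a n) ∧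
  (∀ X : Set σ, DIME.PhatMem E X →
      ∃ Y : Set σ, DIME.PhatMem E' Y ∧ Y ⊆ implSet (DIME.lang E') X)

set_option linter.unusedSectionVars false
set_option maxHeartbeats 1000000

section AuxStmt6
variable {σ : Type} [LinearOrder σ]

lemma UWord.add_apply (u v : UWord σ) (a : σ) : u.add v a = u a + v a := rfl
lemma UWord.zero_apply (a : σ) : (UWord.zero : UWord σ) a = 0 := rfl
lemma UWord.add_zero' (u : UWord σ) : u.add UWord.zero = u := funext fun _ => Nat.add_zero _

lemma listSum_apply_eq {l : List (UWord σ)} {a : σ} (h : ∀ x ∈ l, x a = 1) :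
    listSum l a = l.length := by
  induction l with
  | nil => rfl
  | cons x xs ih =>
    have e : listSum (x :: xs) a = x a + listSum xs a := rfl
    rw [e, h x (by simp), ih (fun y hy => h y (by simp [hy]))]; simp [Nat.add_comm]

lemma listSum_apply_le {l : List (UWord σ)} {a : σ} (h : ∀ x ∈ l, x a ≤ 1) :
    listSum l a ≤ l.length := by
  induction l with
  | nil => exact Nat.le_refl _
  | cons x xs ih =>
    have e : listSum (x :: xs) a = x a + listSum xs a := rfl
    have := h x (by simp)
    have := ih (fun y hy => h y (by simp [hy]))
    simp only [e, List.length_cons]; omega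

lemma listSum_apply_zero {l : List (UWord σ)} {a : σ} (h : ∀ x ∈ l, x a = 0) :
    listSum l a = 0 := by
  induction l with
  | nil => rfl
  | cons x xs ih =>
    have e : listSum (x :: xs) a = x a + listSum xs a := rfl
    rw [e, h x (by simp), ih (fun y hy => h y (by simp [hy]))]

lemma listSum_append (l₁ l₂ : List (UWord σ)) (a : σ) :
    listSum (l₁ ++ l₂) a = listSum l₁ a + listSum l₂ a := by
  induction l₁ with
  | nil => show listSum l₂ a = 0 + listSum l₂ a; omega
  | cons x xs ih =>
    have e : ∀ m : List (UWord σ), listSum (x :: m) a = x a + listSum m a := fun _ => rfl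
    rw [List.cons_append, e, e, ih]; omega

lemma listSum_replicate (n : ℕ) (v : UWord σ) (a : σ) :
    listSum (List.replicate n v) a = n * v a := by
  induction n with
  | zero => show (UWord.zero : UWord σ) a = 0 * v a; simp [UWord.zero]
  | succ k ih =>
    have e : listSum (v :: List.replicate k v) a = v a + listSum (List.replicate k v) a := rfl
    rw [List.replicate_succ, e, ih]; ring

/-! ### predicate combinators -/

lemma pred_listSum {P : UWord σ → Prop} (h0 : P UWord.zero)
    (hadd : ∀ u v, P u → P v → P (u.add v)) :
    ∀ l : List (UWord σ), (∀ x ∈ l, P x) → P (listSum l) := by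
  intro l hl
  induction l with
  | nil => exact h0
  | cons x xs ih =>
    exact hadd _ _ (hl x (by simp)) (ih (fun y hy => hl y (by simp [hy])))

lemma pred_iterLang {P : UWord σ → Prop} (h0 : P UWord.zero)
    (hadd : ∀ u v, P u → P v → P (u.add v)) {L : Set (UWord σ)} {I : Iv}
    (hL : ∀ v ∈ L, P v) : ∀ u ∈ iterLang L I, P u := by
  rintro u (⟨l, hl, -, -, rfl⟩ | ⟨-, rfl⟩)
  · exact pred_listSum h0 hadd l (fun x hx => hL x (hl x hx))
  · exact h0

lemma pred_listConcLang {α : Type v} {P : UWord σ → Prop} (h0 : P UWord.zero)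
    (hadd : ∀ u v, P u → P v → P (u.add v)) {f : α → Set (UWord σ)} :
    ∀ l : List α, (∀ x ∈ l, ∀ v ∈ f x, P v) → ∀ u ∈ listConcLang f l, P u := by
  intro l
  induction l with
  | nil => rintro - u hu; obtain rfl : u = UWord.zero := hu; exact h0
  | cons x xs ih =>
    rintro h u ⟨w₁, hw₁, w₂, hw₂, rfl⟩
    exact hadd _ _ (h x (by simp) w₁ hw₁) (ih (fun y hy => h y (by simp [hy])) w₂ hw₂)

/-! ### list and nodup helpers -/

lemma sublist_flatMap {α : Type v} {β : Type w} (g : α → List β) {x : α} {l : List α}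
    (h : x ∈ l) : (g x).Sublist (l.flatMap g) := by
  induction l with
  | nil => cases h
  | cons y ys ih =>
    rw [List.flatMap_cons]
    rcases List.mem_cons.mp h with rfl | h
    · exact List.sublist_append_left _ _
    · exact (ih h).trans (List.sublist_append_right _ _)

lemma flatMap_nodup_disjoint {α : Type v} {β : Type w} {g : α → List β}
    {l₁ l₂ : List α} {x : α} {b : β}
    (h : ((l₁ ++ x :: l₂).flatMap g).Nodup) (hb : b ∈ g x) :
    ∀ y ∈ l₁ ++ l₂, b ∉ g y := by
  rw [List.flatMap_append, List.flatMap_cons] at h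
  intro y hy hby
  rcases List.mem_append.mp hy with hy | hy
  · have h1 := (List.nodup_append'.mp h).2.2
    exact h1 (List.mem_flatMap.mpr ⟨y, hy, hby⟩) (List.mem_append_left _ hb)
  · have h2 := (List.nodup_append'.mp (List.nodup_append'.mp h).2.1).2.2
    exact h2 hb (List.mem_flatMap.mpr ⟨y, hy, hby⟩)

lemma flatMap_nodup_unique {α : Type v} {β : Type w} {g : α → List β} {l : List α}
    {x y : α} {b : β}
    (h : (l.flatMap g).Nodup) (hx : x ∈ l) (hy : y ∈ l) (hbx : b ∈ g x) (hby : b ∈ g y) :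
    x = y := by
  by_contra hne
  obtain ⟨s, t, rfl⟩ := List.append_of_mem hx
  have hy' : y ∈ s ++ t := by
    rcases List.mem_append.mp hy with h' | h'
    · exact List.mem_append_left _ h'
    · rcases List.mem_cons.mp h' with rfl | h'
      · exact absurd rfl hne
      · exact List.mem_append_right _ h'
  exact flatMap_nodup_disjoint h hbx y hy' hby

lemma two_mem_length {α : Type v} {l : List α} {x y : α}
    (hx : x ∈ l) (hy : y ∈ l) (hne : x ≠ y) : 2 ≤ l.length := by
  match l with
  | [] => exact absurd hx List.not_mem_nil
  | [z] =>
    simp only [List.mem_singleton] at hx hy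
    exact absurd (hx.trans hy.symm) hne
  | a :: b :: t => simp

lemma existsPhi : ∀ {A : Atom σ}, (∃ r ∈ A, r.2 = true) → ∃ a, IsPhi A a := by
  intro A
  induction A with
  | nil => rintro ⟨r, hr, -⟩; cases hr
  | cons q A ih =>
    rintro ⟨r, hr, hr2⟩
    by_cases hA : ∃ r ∈ A, r.2 = true
    · obtain ⟨b, hb1, hb2⟩ := ih hA
      by_cases hq : q.2 = true
      · refine ⟨min q.1 b, ?_, ?_⟩
        · rcases min_choice q.1 b with h | h <;> rw [h]
          · have : q = (q.1, true) := by rw [← hq]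
            rw [this] at *
            exact List.mem_cons_self
          · exact List.mem_cons_of_mem _ hb1
        · intro c hc
          rcases List.mem_cons.mp hc with h | h
          · have : c = q.1 := by
              have := congrArg Prod.fst h; simpa using this
            rw [this]; exact min_le_left _ _
          · exact le_trans (min_le_right _ _) (hb2 c h)
      · refine ⟨b, List.mem_cons_of_mem _ hb1, ?_⟩
        intro c hc
        rcases List.mem_cons.mp hc with h | h
        · exact absurd (by rw [← h]) hq
        · exact hb2 c h
    · have hq : q.2 = true := by
        rcases List.mem_cons.mp hr with rfl | h
        · exact hr2
        · exact absurd ⟨r, h, hr2⟩ hA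
      refine ⟨q.1, ?_, ?_⟩
      · have : q = (q.1, true) := by rw [← hq]
        rw [this] at *; exact List.mem_cons_self
      · intro c hc
        rcases List.mem_cons.mp hc with h | h
        · have : c = q.1 := by have := congrArg Prod.fst h; simpa using this
          rw [this]
        · exact absurd ⟨(c, true), h, rfl⟩ hA

/-! ### symbols -/

def atomSyms (A : Atom σ) : List σ := A.map Prod.fst
def clauseSyms (D : Clause σ) : List σ := D.flatMap fun q => atomSyms q.1

lemma symbols_eq (E : DIME σ) :
    E.symbols = E.clauses.flatMap fun p => clauseSyms p.1 := rfl

lemma mem_clauseSyms {D : Clause σ} {q : Atom σ × Iv} {s : σ}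
    (hq : q ∈ D) (hs : s ∈ atomSyms q.1) : s ∈ clauseSyms D :=
  List.mem_flatMap.mpr ⟨q, hq, hs⟩

lemma mem_atomSyms_of_pair {A : Atom σ} {s : σ} {b : Bool} (h : (s, b) ∈ A) :
    s ∈ atomSyms A := List.mem_map.mpr ⟨(s, b), h, rfl⟩

lemma atom_pair_unique {A : Atom σ} (h : (atomSyms A).Nodup) {a : σ} {x y : Bool}
    (hx : (a, x) ∈ A) (hy : (a, y) ∈ A) : x = y := by
  have := List.inj_on_of_nodup_map h hx hy rfl
  exact congrArg Prod.snd this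

lemma clause_nodup_of {E : DIME σ} (hsym : E.symbols.Nodup) {p : Clause σ × Iv}
    (hp : p ∈ E.clauses) : (clauseSyms p.1).Nodup := by
  rw [symbols_eq] at hsym
  exact List.Nodup.sublist (sublist_flatMap (fun p => clauseSyms p.1) hp) hsym

lemma atom_nodup_of {D : Clause σ} (h : (clauseSyms D).Nodup) {q : Atom σ × Iv}
    (hq : q ∈ D) : (atomSyms q.1).Nodup := by
  unfold clauseSyms at h
  exact List.Nodup.sublist (sublist_flatMap (fun q => atomSyms q.1) hq) h

/-! ### atom language -/

lemma atomEntry_cases {p : σ × Bool} {v : UWord σ} (h : v ∈ atomEntryLang p) :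
    v = UWord.single p.1 ∨ (p.2 = false ∧ v = UWord.zero) := by
  unfold atomEntryLang at h
  by_cases hb : p.2 = true
  · rw [if_pos hb] at h; exact Or.inl h
  · rw [if_neg hb] at h
    rcases h with h | h
    · exact Or.inl h
    · exact Or.inr ⟨by simpa using hb, h⟩

lemma single_apply (a b : σ) : (UWord.single a : UWord σ) b = if b = a then 1 else 0 := rfl

lemma atomLang_support : ∀ {A : Atom σ} {v : UWord σ}, v ∈ Atom.lang A →
    ∀ s, s ∉ atomSyms A → v s = 0 := by
  intro A
  induction A with
  | nil => rintro v hv s -; obtain rfl : v = UWord.zero := hv; rfl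
  | cons q A ih =>
    rintro v ⟨w₁, h₁, w₂, h₂, rfl⟩ s hs
    have hs1 : s ≠ q.1 := fun h => hs (by rw [h]; exact List.mem_map.mpr ⟨q, by simp, rfl⟩)
    have hs2 : s ∉ atomSyms A := fun h => hs (by
      unfold atomSyms; rw [List.map_cons]; exact List.mem_cons_of_mem _ h)
    have e1 : w₁ s = 0 := by
      rcases atomEntry_cases h₁ with rfl | ⟨-, rfl⟩
      · rw [single_apply, if_neg hs1]
      · rfl
    have := ih h₂ s hs2
    show w₁ s + w₂ s = 0
    omega

lemma atomLang_elim {A : Atom σ} (hA : (atomSyms A).Nodup) {v : UWord σ}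
    (hv : v ∈ Atom.lang A) :
    ∀ q ∈ A, (q.2 = true → v q.1 = 1) ∧ (q.2 = false → v q.1 ≤ 1) := by
  induction A generalizing v with
  | nil => rintro q hq; cases hq
  | cons q0 A ih =>
    obtain ⟨w₁, h₁, w₂, h₂, rfl⟩ := hv
    have hnd0 : q0.1 ∉ atomSyms A := by
      unfold atomSyms at hA ⊢; rw [List.map_cons] at hA
      exact (List.nodup_cons.mp hA).1
    have hndA : (atomSyms A).Nodup := by
      unfold atomSyms at hA ⊢; rw [List.map_cons] at hA
      exact (List.nodup_cons.mp hA).2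
    intro q hq
    rcases List.mem_cons.mp hq with rfl | hq
    · have e2 : w₂ q.1 = 0 := atomLang_support h₂ _ hnd0
      constructor
      · intro hb
        have : w₁ = UWord.single q.1 := by
          rcases atomEntry_cases h₁ with h | ⟨h, -⟩
          · exact h
          · rw [hb] at h; cases h
        show w₁ q.1 + w₂ q.1 = 1
        rw [this, single_apply, if_pos rfl, e2]
      · intro hb
        have : w₁ q.1 ≤ 1 := by
          rcases atomEntry_cases h₁ with rfl | ⟨-, rfl⟩
          · rw [single_apply]; split <;> omega
          · exact Nat.zero_le _
        show w₁ q.1 + w₂ q.1 ≤ 1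
        omega
    · have e1 : w₁ q.1 = 0 := by
        have hne : q.1 ≠ q0.1 := fun h => hnd0 (h ▸ mem_atomSyms_of_pair (by
          have : (q.1, q.2) = q := rfl
          rw [this]; exact hq))
        rcases atomEntry_cases h₁ with rfl | ⟨-, rfl⟩
        · rw [single_apply, if_neg hne]
        · rfl
      have hrec := ih hndA h₂ q hq
      constructor
      · intro hb; show w₁ q.1 + w₂ q.1 = 1; rw [e1, hrec.1 hb]
      · intro hb; show w₁ q.1 + w₂ q.1 ≤ 1; have := hrec.2 hb; omega

lemma atomLang_intro {A : Atom σ} (hA : (atomSyms A).Nodup) {v : UWord σ}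
    (h1 : ∀ q ∈ A, (q.2 = true → v q.1 = 1) ∧ (q.2 = false → v q.1 ≤ 1))
    (h0 : ∀ s, s ∉ atomSyms A → v s = 0) : v ∈ Atom.lang A := by
  induction A generalizing v with
  | nil =>
    have : v = UWord.zero := funext fun s => h0 s (by simp [atomSyms])
    rw [this]; exact rfl
  | cons q0 A ih =>
    have hnd0 : q0.1 ∉ atomSyms A := by
      unfold atomSyms at hA; rw [List.map_cons] at hA
      exact (List.nodup_cons.mp hA).1
    have hndA : (atomSyms A).Nodup := by
      unfold atomSyms at hA; rw [List.map_cons] at hA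
      exact (List.nodup_cons.mp hA).2
    have hmemsingle : (UWord.single q0.1 : UWord σ) ∈ atomEntryLang q0 := by
      unfold atomEntryLang
      by_cases hb : q0.2 = true
      · rw [if_pos hb]; rfl
      · rw [if_neg hb]; exact Or.inl rfl
    by_cases hq : v q0.1 = 0
    · -- head entry contributes zero; q0.2 must be false
      have hb : q0.2 = false := by
        by_contra h
        have hb' : q0.2 = true := by simpa using h
        have := (h1 q0 (by simp)).1 hb'
        omega
      refine ⟨UWord.zero, ?_, v, ih hndA ?_ ?_, funext fun s => (Nat.zero_add _).symm⟩
      · unfold atomEntryLang; rw [if_neg (by simp [hb])]; exact Or.inr rfl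
      · exact fun q hq' => h1 q (List.mem_cons_of_mem _ hq')
      · intro s hs
        by_cases he : s = q0.1
        · rw [he]; exact hq
        · refine h0 s (fun hmem => ?_)
          unfold atomSyms at hmem; rw [List.map_cons] at hmem
          rcases List.mem_cons.mp hmem with h | h
          · exact he h
          · exact hs h
    · -- v q0.1 = 1
      have hv1 : v q0.1 = 1 := by
        by_cases hb : q0.2 = true
        · exact (h1 q0 (by simp)).1 hb
        · have := (h1 q0 (by simp)).2 (by simpa using hb); omega
      refine ⟨UWord.single q0.1, hmemsingle, fun s => if s = q0.1 then 0 else v s,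
        ih hndA ?_ ?_, ?_⟩
      · intro q hq'
        have hne : q.1 ≠ q0.1 := fun h => hnd0 (h ▸ mem_atomSyms_of_pair (by
          have : (q.1, q.2) = q := rfl
          rw [this]; exact hq'))
        constructor
        · intro hb; simp only [if_neg hne]; exact (h1 q (List.mem_cons_of_mem _ hq')).1 hb
        · intro hb; simp only [if_neg hne]; exact (h1 q (List.mem_cons_of_mem _ hq')).2 hb
      · intro s hs
        by_cases he : s = q0.1
        · simp [he]
        · simp only [if_neg he]
          refine h0 s (fun hmem => ?_)
          unfold atomSyms at hmem; rw [List.map_cons] at hmem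
          rcases List.mem_cons.mp hmem with h | h
          · exact he h
          · exact hs h
      · funext s
        show v s = UWord.single q0.1 s + _
        rw [single_apply]
        by_cases he : s = q0.1
        · simp only [if_pos he]; rw [he, hv1]
        · simp only [if_neg he]; omega

/-! ### iterLang and clause language -/

lemma mem_iterLang_of_list {L : Set (UWord σ)} {I : Iv} {l : List (UWord σ)}
    (h : ∀ x ∈ l, x ∈ L) (h1 : I.lo ≤ l.length) (h2 : (l.length : ℕ∞) ≤ I.hi) :
    listSum l ∈ iterLang L I :=
  Or.inl ⟨l, h, h1, h2, rfl⟩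

lemma zero_mem_iterLang {L : Set (UWord σ)} {I : Iv} (h : I.Mem 0) :
    UWord.zero ∈ iterLang L I := by
  rcases h with ⟨h1, -⟩ | ⟨h1, -⟩
  · exact Or.inl ⟨[], by simp, by simpa using h1, by simp, rfl⟩
  · exact Or.inr ⟨h1, rfl⟩

lemma mem_iterOne {L : Set (UWord σ)} {v : UWord σ} : v ∈ iterLang L Iv.one ↔ v ∈ L := by
  constructor
  · rintro (⟨l, hl, h1, h2, rfl⟩ | ⟨h, -⟩)
    · have h1' : 1 ≤ l.length := h1
      have h2' : (l.length : ℕ∞) ≤ ((1 : ℕ) : ℕ∞) := h2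
      have h2'' : l.length ≤ 1 := by exact_mod_cast h2'
      have hlen : l.length = 1 := by omega
      match l, hlen with
      | [x], _ =>
        rw [show listSum [x] = x.add UWord.zero from rfl, UWord.add_zero']
        exact hl x (by simp)
    · exact Bool.noConfusion (show false = true from h)
  · intro hv
    exact Or.inl ⟨[v], by simpa using hv, le_refl _, by
      show ((1 : ℕ) : ℕ∞) ≤ ((1 : ℕ) : ℕ∞); exact le_refl _, (UWord.add_zero' v).symm⟩

/-! ### indicator words -/

def trueInd (A : Atom σ) : UWord σ := fun s => if (s, true) ∈ A then 1 else 0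
def trueIndW (A : Atom σ) (a : σ) : UWord σ := fun s => if (s, true) ∈ A ∨ s = a then 1 else 0

lemma trueInd_mem {A : Atom σ} (hA : (atomSyms A).Nodup) : trueInd A ∈ Atom.lang A := by
  apply atomLang_intro hA
  · intro q hq
    constructor
    · intro hb
      show (if (q.1, true) ∈ A then 1 else 0) = 1
      rw [if_pos (by rw [← hb]; exact (show (q.1, q.2) = q from rfl) ▸ hq)]
    · intro _
      show (if (q.1, true) ∈ A then 1 else 0) ≤ 1
      split <;> omega
  · intro s hs
    show (if (s, true) ∈ A then 1 else 0) = 0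
    rw [if_neg (fun h => hs (mem_atomSyms_of_pair h))]

lemma trueInd_apply_one {A : Atom σ} {s : σ} (h : (s, true) ∈ A) : trueInd A s = 1 := if_pos h
lemma trueInd_apply_zero {A : Atom σ} {s : σ} (h : (s, true) ∉ A) : trueInd A s = 0 := if_neg h

lemma trueIndW_mem {A : Atom σ} (hA : (atomSyms A).Nodup) {a : σ} (ha : a ∈ atomSyms A) :
    trueIndW A a ∈ Atom.lang A := by
  apply atomLang_intro hA
  · intro q hq
    refine ⟨fun hb => ?_, fun _ => ?_⟩
    · show (if (q.1, true) ∈ A ∨ q.1 = a then 1 else 0) = 1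
      rw [if_pos (Or.inl (by rw [← hb]; exact (show (q.1, q.2) = q from rfl) ▸ hq))]
    · show (if (q.1, true) ∈ A ∨ q.1 = a then 1 else 0) ≤ 1
      split <;> omega
  · intro s hs
    show (if (s, true) ∈ A ∨ s = a then 1 else 0) = 0
    rw [if_neg]
    rintro (h | rfl)
    · exact hs (mem_atomSyms_of_pair h)
    · exact hs ha

lemma trueIndW_apply_self (A : Atom σ) (a : σ) : trueIndW A a a = 1 := if_pos (Or.inr rfl)

/-! ### clause-level structure -/

lemma Pzero_add {s : σ} (u v : UWord σ) (hu : u s = 0) (hv : v s = 0) : u.add v s = 0 := by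
  rw [UWord.add_apply, hu, hv]

lemma Peq_add {s t : σ} (u v : UWord σ) (hu : u s = u t) (hv : v s = v t) :
    u.add v s = u.add v t := by
  rw [UWord.add_apply, UWord.add_apply, hu, hv]

lemma clause_support {D : Clause σ} {I : Iv} {s : σ} (hs : s ∉ clauseSyms D) :
    ∀ u ∈ iterLang (Clause.lang D) I, u s = 0 := by
  apply pred_iterLang (P := fun u => u s = 0) rfl
    Pzero_add
  rintro v ⟨q, hq, hv⟩
  refine pred_iterLang (P := fun u => u s = 0) rfl
    Pzero_add ?_ v hv
  intro x hx
  exact atomLang_support hx s (fun h => hs (mem_clauseSyms hq h))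

lemma clause_eq {D : Clause σ} {I : Iv} (hnd : (clauseSyms D).Nodup) {q : Atom σ × Iv}
    (hq : q ∈ D) {s t : σ} (hs : (s, true) ∈ q.1) (ht : (t, true) ∈ q.1) :
    ∀ u ∈ iterLang (Clause.lang D) I, u s = u t := by
  apply pred_iterLang (P := fun u => u s = u t) rfl
    Peq_add
  rintro v ⟨q', hq', hv⟩
  by_cases hsq : s ∈ atomSyms q'.1
  · have hqq : q' = q := flatMap_nodup_unique
      (by unfold clauseSyms at hnd; exact hnd) hq' hq hsq (mem_atomSyms_of_pair hs)
    subst hqq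
    refine pred_iterLang (P := fun u => u s = u t) rfl
      Peq_add ?_ v hv
    intro x hx
    have h := atomLang_elim (atom_nodup_of hnd hq') hx
    rw [(h (s, true) hs).1 rfl, (h (t, true) ht).1 rfl]
  · have htq : t ∉ atomSyms q'.1 := fun h => hsq (by
      have hqq : q' = q := flatMap_nodup_unique
        (by unfold clauseSyms at hnd; exact hnd) hq' hq h (mem_atomSyms_of_pair ht)
      rw [hqq]; exact mem_atomSyms_of_pair hs)
    have h1 : v s = 0 := pred_iterLang (P := fun u => u s = 0) rfl
      Pzero_add
      (fun x hx => atomLang_support hx s hsq) v hv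
    have h2 : v t = 0 := pred_iterLang (P := fun u => u t = 0) rfl
      Pzero_add
      (fun x hx => atomLang_support hx t htq) v hv
    rw [h1, h2]

lemma clause_one_elim {D : Clause σ} (hnd : (clauseSyms D).Nodup) {u : UWord σ}
    (hu : u ∈ iterLang (Clause.lang D) Iv.one) :
    ∃ q ∈ D, ∃ m : ℕ, q.2.Mem m ∧
      (∀ r ∈ q.1, (r.2 = true → u r.1 = m) ∧ (r.2 = false → u r.1 ≤ m)) ∧
      (∀ s, s ∉ atomSyms q.1 → u s = 0) := by
  rw [mem_iterOne] at hu
  obtain ⟨q, hq, hv⟩ := hu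
  have hndA := atom_nodup_of hnd hq
  rcases hv with ⟨l, hl, h1, h2, rfl⟩ | ⟨hopt, rfl⟩
  · refine ⟨q, hq, l.length, Or.inl ⟨h1, h2⟩, ?_, ?_⟩
    · intro r hr
      constructor
      · intro hb
        exact listSum_apply_eq (fun x hx => ((atomLang_elim hndA (hl x hx)) r hr).1 hb)
      · intro hb
        exact listSum_apply_le (fun x hx => ((atomLang_elim hndA (hl x hx)) r hr).2 hb)
    · intro s hs
      exact listSum_apply_zero (fun x hx => atomLang_support (hl x hx) s hs)
  · exact ⟨q, hq, 0, Or.inr ⟨hopt, rfl⟩,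
      fun r hr => ⟨fun _ => rfl, fun _ => Nat.zero_le _⟩, fun s hs => rfl⟩

lemma clause_plus_elim {D : Clause σ} {u : UWord σ} (htype : ∀ p ∈ D, p.2 = Iv.one)
    (hu : u ∈ iterLang (Clause.lang D) Iv.iplus) :
    ∃ q ∈ D, ∃ v ∈ Atom.lang q.1, ∀ s, v s ≤ u s := by
  rcases hu with ⟨l, hl, h1, -, rfl⟩ | ⟨h, -⟩
  · have h1' : 1 ≤ l.length := h1
    match l, h1' with
    | x :: l', _ =>
      obtain ⟨q, hq, hx⟩ := hl x (by simp)
      rw [htype q hq, mem_iterOne] at hx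
      refine ⟨q, hq, x, hx, fun s => ?_⟩
      show x s ≤ x s + listSum l' s
      omega
  · exact Bool.noConfusion (show false = true from h)

/-! ### listConcLang structure -/

lemma listConcLang_map_intro {α : Type v} {f : α → Set (UWord σ)} (c : α → UWord σ) :
    ∀ l : List α, (∀ x ∈ l, c x ∈ f x) → listSum (l.map c) ∈ listConcLang f l := by
  intro l
  induction l with
  | nil => intro _; exact rfl
  | cons x xs ih =>
    intro h
    exact ⟨c x, h x (by simp), listSum (xs.map c), ih (fun y hy => h y (by simp [hy])), rfl⟩

lemma listConcLang_append_intro {α : Type v} {f : α → Set (UWord σ)} {x : α} {v : UWord σ} :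
    ∀ {l₁ l₂ : List α} {w₁ w₂ : UWord σ}, w₁ ∈ listConcLang f l₁ → v ∈ f x →
      w₂ ∈ listConcLang f l₂ → w₁.add (v.add w₂) ∈ listConcLang f (l₁ ++ x :: l₂) := by
  intro l₁
  induction l₁ with
  | nil =>
    intro l₂ w₁ w₂ h₁ hv h₂
    obtain rfl : w₁ = UWord.zero := h₁
    have e : UWord.zero.add (v.add w₂) = v.add w₂ := funext fun s => Nat.zero_add _
    rw [List.nil_append, e]
    exact ⟨v, hv, w₂, h₂, rfl⟩
  | cons y ys ih =>
    rintro l₂ w₁ w₂ ⟨a, ha, b, hb, rfl⟩ hv h₂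
    rw [List.cons_append]
    refine ⟨a, ha, b.add (v.add w₂), ih hb hv h₂, funext fun s => ?_⟩
    show (a s + b s) + (v s + w₂ s) = a s + (b s + (v s + w₂ s))
    omega

lemma listConcLang_append_elim {α : Type v} {f : α → Set (UWord σ)} {x : α} :
    ∀ {l₁ l₂ : List α} {u : UWord σ}, u ∈ listConcLang f (l₁ ++ x :: l₂) →
      ∃ w₁ v w₂, w₁ ∈ listConcLang f l₁ ∧ v ∈ f x ∧ w₂ ∈ listConcLang f l₂ ∧
        ∀ s, u s = w₁ s + v s + w₂ s := by
  intro l₁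
  induction l₁ with
  | nil =>
    rintro l₂ u ⟨v, hv, w₂, h₂, rfl⟩
    refine ⟨UWord.zero, v, w₂, rfl, hv, h₂, fun s => ?_⟩
    show v s + w₂ s = 0 + v s + w₂ s
    omega
  | cons y ys ih =>
    rintro l₂ u ⟨a, ha, b, hb, rfl⟩
    obtain ⟨w₁, v, w₂, h₁, hv, h₂, hsum⟩ := ih hb
    refine ⟨a.add w₁, v, w₂, ⟨a, ha, w₁, h₁, rfl⟩, hv, h₂, fun s => ?_⟩
    show a s + b s = (a s + w₁ s) + v s + w₂ s
    have := hsum s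
    omega

/-! ### DIME-level structure -/

lemma mem_symbols_iff {E : DIME σ} {a : σ} :
    a ∈ E.symbols ↔ ∃ p ∈ E.clauses, a ∈ clauseSyms p.1 := by
  rw [symbols_eq]; exact List.mem_flatMap

lemma dime_lang_def (E : DIME σ) :
    DIME.lang E = listConcLang (fun p => iterLang (Clause.lang p.1) p.2) E.clauses := rfl

lemma dime_support {E : DIME σ} {s : σ} (hs : s ∉ E.symbols) :
    ∀ u ∈ DIME.lang E, u s = 0 := by
  rw [dime_lang_def]
  apply pred_listConcLang (P := fun u => u s = 0) rfl Pzero_add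
  intro x hx v hv
  exact clause_support (fun h => hs (mem_symbols_iff.mpr ⟨x, hx, h⟩)) v hv

lemma dime_eq {E : DIME σ} (hsym : E.symbols.Nodup) {p : Clause σ × Iv}
    (hp : p ∈ E.clauses) {q : Atom σ × Iv} (hq : q ∈ p.1) {s t : σ}
    (hs : (s, true) ∈ q.1) (ht : (t, true) ∈ q.1) :
    ∀ u ∈ DIME.lang E, u s = u t := by
  have hsym' : (E.clauses.flatMap fun p => clauseSyms p.1).Nodup := by
    rw [← symbols_eq]; exact hsym
  rw [dime_lang_def]
  apply pred_listConcLang (P := fun u => u s = u t) rfl Peq_add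
  intro x hx v hv
  by_cases hxs : s ∈ clauseSyms x.1
  · have hxp : x = p := flatMap_nodup_unique hsym' hx hp hxs
      (mem_clauseSyms hq (mem_atomSyms_of_pair hs))
    subst hxp
    exact clause_eq (clause_nodup_of hsym hx) hq hs ht v hv
  · have hxt : t ∉ clauseSyms x.1 := fun h => hxs (by
      have hxp : x = p := flatMap_nodup_unique hsym' hx hp h
        (mem_clauseSyms hq (mem_atomSyms_of_pair ht))
      rw [hxp]; exact mem_clauseSyms hq (mem_atomSyms_of_pair hs))
    rw [clause_support hxs v hv, clause_support hxt v hv]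

lemma dime_zero_at {E : DIME σ} (hsym : E.symbols.Nodup) {p : Clause σ × Iv}
    (hp : p ∈ E.clauses) {q : Atom σ × Iv} (hq : q ∈ p.1) {a : σ}
    (ha : a ∈ atomSyms q.1)
    (hty : EntryType2 p.1 p.2 ∨ EntryType3 p.1 p.2)
    (hz : ∀ m, q.2.Mem m → m = 0) :
    ∀ u ∈ DIME.lang E, u a = 0 := by
  have hsym' : (E.clauses.flatMap fun p => clauseSyms p.1).Nodup := by
    rw [← symbols_eq]; exact hsym
  have hone : p.2 = Iv.one := by rcases hty with h | h; exacts [h.1, h.1]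
  rw [dime_lang_def]
  apply pred_listConcLang (P := fun u => u a = 0) rfl Pzero_add
  intro x hx v hv
  by_cases hxa : a ∈ clauseSyms x.1
  · have hxp : x = p := flatMap_nodup_unique hsym' hx hp hxa
      (mem_clauseSyms hq ha)
    subst hxp
    rw [hone] at hv
    have hndc := clause_nodup_of hsym hx
    obtain ⟨q', hq', m, hm, hpt, hout⟩ := clause_one_elim hndc hv
    by_cases haq' : a ∈ atomSyms q'.1
    · have hqq : q' = q := flatMap_nodup_unique
        (by unfold clauseSyms at hndc; exact hndc) hq' hq haq' ha
      subst hqq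
      have hm0 : m = 0 := hz m hm
      obtain ⟨r, hr, hra⟩ := List.mem_map.mp ha
      rcases Bool.eq_false_or_eq_true r.2 with hb | hb
      · have := (hpt r hr).1 hb; rw [← hra]; omega
      · have := (hpt r hr).2 hb; rw [← hra]; omega
    · exact hout a haq'
  · exact clause_support hxa v hv

lemma side_zero {E : DIME σ} (hsym : E.symbols.Nodup) {l₁ l₂ : List (Clause σ × Iv)}
    {p : Clause σ × Iv} (hcl : E.clauses = l₁ ++ p :: l₂) {a : σ}
    (ha : a ∈ clauseSyms p.1) :
    ∀ y ∈ l₁ ++ l₂, a ∉ clauseSyms y.1 := by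
  rw [symbols_eq, hcl] at hsym
  exact flatMap_nodup_disjoint hsym ha

lemma appended_middle {E : DIME σ} (hsym : E.symbols.Nodup)
    {l₁ l₂ : List (Clause σ × Iv)} {p : Clause σ × Iv}
    (hcl : E.clauses = l₁ ++ p :: l₂) {u : UWord σ} (hu : u ∈ DIME.lang E)
    {a : σ} (ha : a ∈ clauseSyms p.1) :
    ∃ v ∈ iterLang (Clause.lang p.1) p.2, u a = v a := by
  have hu' : u ∈ listConcLang (fun p => iterLang (Clause.lang p.1) p.2) (l₁ ++ p :: l₂) := by
    rw [← hcl]; exact hu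
  obtain ⟨w₁, v, w₂, h₁, hv, h₂, hsum⟩ := listConcLang_append_elim hu'
  have hside := side_zero hsym hcl ha
  have z₁ : w₁ a = 0 := pred_listConcLang (P := fun u => u a = 0) rfl Pzero_add l₁
    (fun y hy v hv => clause_support (hside y (List.mem_append_left _ hy)) v hv) w₁ h₁
  have z₂ : w₂ a = 0 := pred_listConcLang (P := fun u => u a = 0) rfl Pzero_add l₂
    (fun y hy v hv => clause_support (hside y (List.mem_append_right _ hy)) v hv) w₂ h₂
  refine ⟨v, hv, ?_⟩
  have := hsum a
  rw [z₁, z₂] at this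
  omega

/-! ### forward direction -/

lemma nhat_fwd {E : DIME σ} (hE : E.WF) (hred : E.Reduced) {u : UWord σ}
    (hu : u ∈ DIME.lang E) (a : σ) : E.NhatMem a (u a) := by
  classical
  have hsym := hE.2
  by_cases haS : a ∈ E.symbols
  · obtain ⟨p, hp, hcp⟩ := mem_symbols_iff.mp haS
    obtain ⟨q, hq, haq⟩ := List.mem_flatMap.mp (by unfold clauseSyms at hcp; exact hcp)
    obtain ⟨r, hr, hra⟩ := List.mem_map.mp haq
    obtain ⟨ra, rb⟩ := r
    dsimp only at hra
    subst hra
    rcases hred p hp with h1 | hty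
    · exact Or.inr (Or.inl ⟨p, hp, h1, q, hq, (ra, rb), hr, rfl⟩)
    · have hone : p.2 = Iv.one := by rcases hty with h | h; exacts [h.1, h.1]
      obtain ⟨l₁, l₂, hcl⟩ := List.append_of_mem hp
      obtain ⟨v, hv, hva⟩ := appended_middle hsym hcl hu hcp
      rw [hone] at hv
      have hndc := clause_nodup_of hsym hp
      obtain ⟨q', hq', m, hm, hpt, hout⟩ := clause_one_elim hndc hv
      by_cases haq' : ra ∈ atomSyms q'.1
      · have hqq : q' = q := flatMap_nodup_unique
          (by unfold clauseSyms at hndc; exact hndc) hq' hq haq' haq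
        subst hqq
        cases rb with
        | false =>
          refine Or.inr (Or.inr (Or.inr ⟨p, hp, hty, q', hq', hr, ?_⟩))
          have hle : v ra ≤ m := (hpt (ra, false) hr).2 rfl
          rcases hm with ⟨-, hhi⟩ | ⟨-, rfl⟩
          · have hcast : (u ra : ℕ∞) ≤ (m : ℕ∞) := by
              rw [hva]; exact_mod_cast hle
            exact le_trans hcast hhi
          · have hz : u ra = 0 := by omega
            rw [hz]; simp
        | true =>
          have hv' : u ra = m := by rw [hva]; exact (hpt (ra, true) hr).1 rfl
          refine Or.inr (Or.inr (Or.inl ⟨p, hp, hty, q', hq', hr, ?_⟩))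
          have hlen : 1 ≤ p.1.length := List.length_pos_of_mem hq'
          rcases Nat.lt_or_ge p.1.length 2 with hl2 | hl2
          · exact Or.inl ⟨by omega, by rw [hv']; exact hm⟩
          · exact Or.inr ⟨hl2, Or.inl (by rw [hv']; exact hm)⟩
      · have hua : u ra = 0 := by rw [hva]; exact hout ra haq'
        cases rb with
        | false =>
          refine Or.inr (Or.inr (Or.inr ⟨p, hp, hty, q, hq, hr, ?_⟩))
          rw [hua]; simp
        | true =>
          have hne : q ≠ q' := fun h => haq' (h ▸ haq)
          refine Or.inr (Or.inr (Or.inl ⟨p, hp, hty, q, hq, hr,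
            Or.inr ⟨two_mem_length hq hq' hne, Or.inr hua⟩⟩))
  · exact Or.inl ⟨haS, dime_support haS u hu⟩

lemma phat_fwd {E : DIME σ} (hE : E.WF) (hred : E.Reduced) {X : Set σ}
    (hX : E.PhatMem X) : X ∈ Pset (DIME.lang E) := by
  obtain ⟨p, hp, hty, rfl⟩ := hX
  intro u hu
  have hsym := hE.2
  obtain ⟨l₁, l₂, hcl⟩ := List.append_of_mem hp
  have hu' : u ∈ listConcLang (fun p => iterLang (Clause.lang p.1) p.2) (l₁ ++ p :: l₂) := by
    rw [← hcl]; exact hu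
  obtain ⟨w₁, v, w₂, -, hv, -, hsum⟩ := listConcLang_append_elim hu'
  rcases hty with h1 | h2
  · rw [h1.1] at hv
    obtain ⟨q, hq, x, hx, hle⟩ := clause_plus_elim (fun r hr => (h1.2.2 r hr).1) hv
    obtain ⟨φ, hφ⟩ := existsPhi ((h1.2.2 q hq).2)
    refine ⟨φ, ⟨q, hq, hφ⟩, ?_⟩
    have hx1 : x φ = 1 :=
      ((atomLang_elim (atom_nodup_of (clause_nodup_of hsym hp) hq) hx) (φ, true) hφ.1).1 rfl
    have h1' := hle φ
    have h2' := hsum φ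
    omega
  · rw [h2.1] at hv
    obtain ⟨q, hq, m, hm, hpt, -⟩ := clause_one_elim (clause_nodup_of hsym hp) hv
    have hm1 : 1 ≤ m := by
      rcases Nat.eq_zero_or_pos m with rfl | h
      · exact absurd hm ((h2.2 q hq).2)
      · exact h
    obtain ⟨φ, hφ⟩ := existsPhi ((h2.2 q hq).1)
    refine ⟨φ, ⟨q, hq, hφ⟩, ?_⟩
    have hvφ : v φ = m := (hpt (φ, true) hφ.1).1 rfl
    have h2' := hsum φ
    omega

/-! ### backward direction -/

lemma nhat_inv {E : DIME σ} (hsym : E.symbols.Nodup) {p : Clause σ × Iv} {q : Atom σ × Iv}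
    {a : σ} {b : Bool} {n : ℕ}
    (hp : p ∈ E.clauses) (hq : q ∈ p.1) (hab : (a, b) ∈ q.1)
    (hty : EntryType2 p.1 p.2 ∨ EntryType3 p.1 p.2)
    (hn : E.NhatMem a n) :
    (b = true ∧ ((p.1.length = 1 ∧ q.2.Mem n) ∨ (2 ≤ p.1.length ∧ (q.2.Mem n ∨ n = 0)))) ∨
    (b = false ∧ (n : ℕ∞) ≤ q.2.hi) := by
  have hclause : a ∈ clauseSyms p.1 := mem_clauseSyms hq (mem_atomSyms_of_pair hab)
  have haS : a ∈ E.symbols := mem_symbols_iff.mpr ⟨p, hp, hclause⟩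
  have hone : p.2 = Iv.one := by rcases hty with h | h; exacts [h.1, h.1]
  have hsym' : (E.clauses.flatMap fun p => clauseSyms p.1).Nodup := by
    rw [← symbols_eq]; exact hsym
  have hndc := clause_nodup_of hsym hp
  rcases hn with ⟨h, -⟩ | ⟨p', hp', h1, q', hq', r, hr, hra⟩ |
    ⟨p', hp', -, q', hq', hq'a, hcase⟩ | ⟨p', hp', -, q', hq', hq'a, hcase⟩
  · exact absurd haS h
  · have hpp : p' = p := flatMap_nodup_unique hsym' hp' hp
      (mem_clauseSyms hq' (hra ▸ mem_atomSyms_of_pair (show (r.1, r.2) ∈ q'.1 from hr)))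
      hclause
    subst hpp
    have h11 := h1.1
    rw [hone] at h11
    exact absurd (congrArg Iv.hi h11) (by simp [Iv.one, Iv.iplus])
  · have hpp : p' = p := flatMap_nodup_unique hsym' hp' hp
      (mem_clauseSyms hq' (mem_atomSyms_of_pair hq'a)) hclause
    subst hpp
    have hqq : q' = q := flatMap_nodup_unique
      (by unfold clauseSyms at hndc; exact hndc) hq' hq
      (mem_atomSyms_of_pair hq'a) (mem_atomSyms_of_pair hab)
    subst hqq
    have hb : b = true := atom_pair_unique (atom_nodup_of hndc hq') hab hq'a
    exact Or.inl ⟨hb, hcase⟩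
  · have hpp : p' = p := flatMap_nodup_unique hsym' hp' hp
      (mem_clauseSyms hq' (mem_atomSyms_of_pair hq'a)) hclause
    subst hpp
    have hqq : q' = q := flatMap_nodup_unique
      (by unfold clauseSyms at hndc; exact hndc) hq' hq
      (mem_atomSyms_of_pair hq'a) (mem_atomSyms_of_pair hab)
    subst hqq
    have hb : b = false := atom_pair_unique (atom_nodup_of hndc hq') hab hq'a
    exact Or.inr ⟨hb, hcase⟩

lemma avoidClause {E : DIME σ} (hE : E.WF) (hred : E.Reduced) {w : UWord σ}
    (hsat : E.SatHat w) {X : Set σ} (hX : ∀ a ∈ X, w a = 0)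
    {p : Clause σ × Iv} (hp : p ∈ E.clauses) :
    ∃ v ∈ iterLang (Clause.lang p.1) p.2, ∀ a ∈ X, v a = 0 := by
  classical
  have hsym := hE.2
  have hndc := clause_nodup_of hsym hp
  rcases hred p hp with h1 | h2 | h3
  · -- type 1
    by_cases hA : ∃ q ∈ p.1, ∀ s, (s, true) ∈ q.1 → s ∉ X
    · obtain ⟨q, hq, hqX⟩ := hA
      refine ⟨trueInd q.1, ?_, ?_⟩
      · rw [h1.1]
        have hmem : trueInd q.1 ∈ Clause.lang p.1 := ⟨q, hq, by
          rw [(h1.2.2 q hq).1, mem_iterOne]; exact trueInd_mem (atom_nodup_of hndc hq)⟩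
        have hres := mem_iterLang_of_list (I := Iv.iplus) (l := [trueInd q.1])
          (by simpa using hmem) (le_refl _) le_top
        rwa [show listSum [trueInd q.1] = (trueInd q.1).add UWord.zero from rfl,
          UWord.add_zero'] at hres
      · intro a ha
        exact trueInd_apply_zero (fun h => hqX a h ha)
    · exfalso
      push_neg at hA
      obtain ⟨φ, hφX, hφ0⟩ := hsat.2.2.1 _ ⟨p, hp, Or.inl h1, rfl⟩
      obtain ⟨q, hq, hIs⟩ := hφX
      obtain ⟨t, htq, htX⟩ := hA q hq
      have hK : ((t, φ) : σ × σ) ∈ Kset (DIME.lang E) :=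
        fun u hu => le_of_eq (dime_eq hsym hp hq hIs.1 htq u hu)
      have hle : w φ ≤ w t := hsat.2.2.2 (t, φ) hK
      rw [hX t htX] at hle
      omega
  · -- type 2
    by_cases hA : ∃ q ∈ p.1, (∃ m, q.2.Mem m) ∧ ∀ s, (s, true) ∈ q.1 → s ∉ X
    · obtain ⟨q, hq, ⟨m, hm⟩, hqX⟩ := hA
      have hmpos : q.2.lo ≤ m ∧ (m : ℕ∞) ≤ q.2.hi := by
        rcases hm with h | h
        · exact h
        · exact absurd (Or.inr ⟨h.1, rfl⟩ : q.2.Mem 0) ((h2.2 q hq).2)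
      refine ⟨listSum (List.replicate m (trueInd q.1)), ?_, ?_⟩
      · rw [h2.1, mem_iterOne]
        exact ⟨q, hq, mem_iterLang_of_list
          (fun x hx => by
            rw [List.eq_of_mem_replicate hx]
            exact trueInd_mem (atom_nodup_of hndc hq))
          (by rw [List.length_replicate]; exact hmpos.1)
          (by rw [List.length_replicate]; exact hmpos.2)⟩
      · intro a ha
        rw [listSum_replicate, trueInd_apply_zero (fun h => hqX a h ha), Nat.mul_zero]
    · exfalso
      push_neg at hA
      obtain ⟨φ, hφX, hφ0⟩ := hsat.2.2.1 _ ⟨p, hp, Or.inr h2, rfl⟩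
      obtain ⟨q, hq, hIs⟩ := hφX
      have hinv := nhat_inv hsym hp hq hIs.1 (Or.inl h2) (hsat.2.1 φ)
      have hmem : ∃ m, q.2.Mem m := by
        rcases hinv with ⟨-, hc⟩ | ⟨hfalse, -⟩
        · rcases hc with ⟨-, hm⟩ | ⟨-, hm | hm⟩
          · exact ⟨_, hm⟩
          · exact ⟨_, hm⟩
          · exact absurd hm hφ0
        · exact Bool.noConfusion hfalse
      obtain ⟨t, htq, htX⟩ := hA q hq hmem
      have hK : ((t, φ) : σ × σ) ∈ Kset (DIME.lang E) :=
        fun u hu => le_of_eq (dime_eq hsym hp hq hIs.1 htq u hu)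
      have hle : w φ ≤ w t := hsat.2.2.2 (t, φ) hK
      rw [hX t htX] at hle
      omega
  · -- type 3
    by_cases hnil : p.1 = []
    · exfalso
      have h2 : EntryType2 p.1 p.2 := ⟨h3.1, fun r hr => absurd hr (by rw [hnil]; simp)⟩
      obtain ⟨φ, hφX, -⟩ := hsat.2.2.1 _ ⟨p, hp, Or.inr h2, rfl⟩
      obtain ⟨q, hq, -⟩ := hφX
      rw [hnil] at hq
      exact absurd hq List.not_mem_nil
    · obtain ⟨q0, D', hD⟩ : ∃ q0 D', p.1 = q0 :: D' := by
        cases hcc : p.1 with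
        | nil => exact absurd hcc hnil
        | cons x xs => exact ⟨x, xs, rfl⟩
      refine ⟨UWord.zero, ?_, fun a _ => rfl⟩
      rw [h3.1, mem_iterOne]
      exact ⟨q0, by rw [hD]; simp, zero_mem_iterLang (h3.2 q0 (by rw [hD]; simp))⟩

lemma avoidAll {E : DIME σ} (hE : E.WF) (hred : E.Reduced) {w : UWord σ}
    (hsat : E.SatHat w) {X : Set σ} (hX : ∀ a ∈ X, w a = 0) :
    ∃ u ∈ DIME.lang E, ∀ a ∈ X, u a = 0 := by
  classical
  have hchoice : ∀ x : Clause σ × Iv, x ∈ E.clauses →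
      ∃ v, v ∈ iterLang (Clause.lang x.1) x.2 ∧ ∀ a ∈ X, v a = 0 := by
    intro x hx
    obtain ⟨v, hv1, hv2⟩ := avoidClause hE hred hsat hX hx
    exact ⟨v, hv1, hv2⟩
  obtain ⟨c, hcmem, hczero⟩ : ∃ c : Clause σ × Iv → UWord σ,
      (∀ x ∈ E.clauses, c x ∈ iterLang (Clause.lang x.1) x.2) ∧
      (∀ x ∈ E.clauses, ∀ a ∈ X, c x a = 0) := by
    choose g hg1 hg2 using hchoice
    refine ⟨fun x => if hx : x ∈ E.clauses then g x hx else UWord.zero, ?_, ?_⟩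
    · intro x hx
      show (if hx' : x ∈ E.clauses then g x hx' else UWord.zero) ∈ _
      rw [dif_pos hx]; exact hg1 x hx
    · intro x hx a ha
      show (if hx' : x ∈ E.clauses then g x hx' else UWord.zero) a = 0
      rw [dif_pos hx]; exact hg2 x hx a ha
  refine ⟨listSum (E.clauses.map c), ?_, ?_⟩
  · rw [dime_lang_def]
    exact listConcLang_map_intro c E.clauses (fun x hx => hcmem x hx)
  · intro a ha
    apply listSum_apply_zero
    intro x hx
    obtain ⟨y, hy, rfl⟩ := List.mem_map.mp hx
    exact hczero y hy a ha

lemma assemble {E : DIME σ} (hE : E.WF) (hred : E.Reduced) {w : UWord σ}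
    (hsat : E.SatHat w) {p : Clause σ × Iv} (hp : p ∈ E.clauses) {v : UWord σ}
    (hv : v ∈ iterLang (Clause.lang p.1) p.2) {a : σ} (ha : a ∈ clauseSyms p.1) :
    ∃ u ∈ DIME.lang E, u a = v a := by
  classical
  have hsym := hE.2
  obtain ⟨l₁, l₂, hcl⟩ := List.append_of_mem hp
  have hchoice : ∀ x : Clause σ × Iv, x ∈ E.clauses →
      ∃ vx, vx ∈ iterLang (Clause.lang x.1) x.2 := by
    intro x hx
    obtain ⟨vx, hv1, -⟩ := avoidClause hE hred hsat (X := (∅ : Set σ)) (by simp) hx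
    exact ⟨vx, hv1⟩
  obtain ⟨c, hcmem⟩ : ∃ c : Clause σ × Iv → UWord σ,
      ∀ x ∈ E.clauses, c x ∈ iterLang (Clause.lang x.1) x.2 := by
    choose g hg using hchoice
    refine ⟨fun x => if hx : x ∈ E.clauses then g x hx else UWord.zero, ?_⟩
    intro x hx
    show (if hx' : x ∈ E.clauses then g x hx' else UWord.zero) ∈ _
    rw [dif_pos hx]; exact hg x hx
  have hm1 : ∀ x ∈ l₁, x ∈ E.clauses := fun x hx => by
    rw [hcl]; exact List.mem_append_left _ hx
  have hm2 : ∀ x ∈ l₂, x ∈ E.clauses := fun x hx => by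
    rw [hcl]; exact List.mem_append_right _ (List.mem_cons_of_mem _ hx)
  have h1 : listSum (l₁.map c) ∈ listConcLang (fun p => iterLang (Clause.lang p.1) p.2) l₁ :=
    listConcLang_map_intro c l₁ (fun x hx => hcmem x (hm1 x hx))
  have h2 : listSum (l₂.map c) ∈ listConcLang (fun p => iterLang (Clause.lang p.1) p.2) l₂ :=
    listConcLang_map_intro c l₂ (fun x hx => hcmem x (hm2 x hx))
  refine ⟨(listSum (l₁.map c)).add (v.add (listSum (l₂.map c))), ?_, ?_⟩
  · rw [dime_lang_def, hcl]
    exact listConcLang_append_intro h1 hv h2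
  · have hside := side_zero hsym hcl ha
    have z₁ : listSum (l₁.map c) a = 0 := listSum_apply_zero (fun x hx => by
      obtain ⟨y, hy, rfl⟩ := List.mem_map.mp hx
      exact clause_support (hside y (List.mem_append_left _ hy)) _ (hcmem y (hm1 y hy)))
    have z₂ : listSum (l₂.map c) a = 0 := listSum_apply_zero (fun x hx => by
      obtain ⟨y, hy, rfl⟩ := List.mem_map.mp hx
      exact clause_support (hside y (List.mem_append_right _ hy)) _ (hcmem y (hm2 y hy)))
    show listSum (l₁.map c) a + (v a + listSum (l₂.map c) a) = v a
    rw [z₁, z₂]; omega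

lemma realize {E : DIME σ} (hE : E.WF) (hred : E.Reduced) {w : UWord σ}
    (hsat : E.SatHat w) (a : σ) : ∃ u ∈ DIME.lang E, u a = w a := by
  classical
  have hsym := hE.2
  rcases Nat.eq_zero_or_pos (w a) with h0 | hpos
  · obtain ⟨u, hu, hz⟩ := avoidAll hE hred hsat (X := {a}) (by
      intro b hb; rw [Set.mem_singleton_iff] at hb; rw [hb]; exact h0)
    exact ⟨u, hu, by rw [hz a rfl, h0]⟩
  · by_cases haS : a ∈ E.symbols
    · obtain ⟨p, hp, hcp⟩ := mem_symbols_iff.mp haS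
      obtain ⟨q, hq, haq⟩ := List.mem_flatMap.mp (by unfold clauseSyms at hcp; exact hcp)
      obtain ⟨r, hr, hra⟩ := List.mem_map.mp haq
      obtain ⟨ra, rb⟩ := r
      dsimp only at hra
      subst hra
      have hndc := clause_nodup_of hsym hp
      have hndA := atom_nodup_of hndc hq
      rcases hred p hp with h1 | hty
      · -- type 1
        have hmemA : trueIndW q.1 ra ∈ Atom.lang q.1 := trueIndW_mem hndA haq
        have hvmem : listSum (List.replicate (w ra) (trueIndW q.1 ra)) ∈
            iterLang (Clause.lang p.1) p.2 := by
          rw [h1.1]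
          apply mem_iterLang_of_list
          · intro x hx
            rw [List.eq_of_mem_replicate hx]
            exact ⟨q, hq, by rw [(h1.2.2 q hq).1, mem_iterOne]; exact hmemA⟩
          · rw [List.length_replicate]; exact hpos
          · exact le_top
        refine (assemble hE hred hsat hp hvmem (mem_clauseSyms hq haq)).imp
          (fun u h => ⟨h.1, ?_⟩)
        rw [h.2, listSum_replicate, trueIndW_apply_self, Nat.mul_one]
      · have hone : p.2 = Iv.one := by rcases hty with h | h; exacts [h.1, h.1]
        have hinv := nhat_inv hsym hp hq hr hty (hsat.2.1 ra)
        rcases hinv with ⟨hb, hcase⟩ | ⟨hb, hhi⟩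
        · subst hb
          have hmem : q.2.Mem (w ra) := by
            rcases hcase with ⟨-, hm⟩ | ⟨-, hm | hm⟩
            · exact hm
            · exact hm
            · exact absurd hm (Nat.pos_iff_ne_zero.mp hpos)
          have hlohi : q.2.lo ≤ w ra ∧ ((w ra : ℕ∞)) ≤ q.2.hi := by
            rcases hmem with h | h
            · exact h
            · exact absurd h.2 (Nat.pos_iff_ne_zero.mp hpos)
          have hvmem : listSum (List.replicate (w ra) (trueInd q.1)) ∈
              iterLang (Clause.lang p.1) p.2 := by
            rw [hone, mem_iterOne]
            exact ⟨q, hq, mem_iterLang_of_list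
              (fun x hx => by rw [List.eq_of_mem_replicate hx]; exact trueInd_mem hndA)
              (by rw [List.length_replicate]; exact hlohi.1)
              (by rw [List.length_replicate]; exact hlohi.2)⟩
          refine (assemble hE hred hsat hp hvmem (mem_clauseSyms hq haq)).imp
            (fun u h => ⟨h.1, ?_⟩)
          rw [h.2, listSum_replicate, trueInd_apply_one hr, Nat.mul_one]
        · subst hb
          by_cases hlohi : (q.2.lo : ℕ∞) ≤ q.2.hi
          · set m := max (w ra) q.2.lo with hm
            have hm1 : q.2.lo ≤ m := le_max_right _ _
            have hm2 : (m : ℕ∞) ≤ q.2.hi := by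
              rw [hm]; push_cast
              exact max_le hhi hlohi
            have hwm : w ra ≤ m := le_max_left _ _
            set l := List.replicate (w ra) (trueIndW q.1 ra) ++
              List.replicate (m - w ra) (trueInd q.1) with hl
            have hlen : l.length = m := by rw [hl]; simp; omega
            have hvmem : listSum l ∈ iterLang (Clause.lang p.1) p.2 := by
              rw [hone, mem_iterOne]
              refine ⟨q, hq, mem_iterLang_of_list ?_ ?_ ?_⟩
              · intro x hx
                rw [hl] at hx
                rcases List.mem_append.mp hx with h | h
                · rw [List.eq_of_mem_replicate h]; exact trueIndW_mem hndA haq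
                · rw [List.eq_of_mem_replicate h]; exact trueInd_mem hndA
              · rw [hlen]; exact hm1
              · rw [hlen]; exact hm2
            have hnot : (ra, true) ∉ q.1 := fun hmem' =>
              Bool.noConfusion (atom_pair_unique hndA hmem' hr)
            have hval : listSum l ra = w ra := by
              rw [hl, listSum_append, listSum_replicate, listSum_replicate,
                trueIndW_apply_self, trueInd_apply_zero hnot,
                Nat.mul_one, Nat.mul_zero, Nat.add_zero]
            refine (assemble hE hred hsat hp hvmem (mem_clauseSyms hq haq)).imp
              (fun u h => ⟨h.1, ?_⟩)
            rw [h.2, hval]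
          · exfalso
            have hz : ∀ m, q.2.Mem m → m = 0 := by
              rintro m (⟨hlo, hhi'⟩ | ⟨-, rfl⟩)
              · exact absurd (le_trans (Nat.cast_le.mpr hlo) hhi') hlohi
              · rfl
            have hC : ((ra, ra) : σ × σ) ∈ Cset (DIME.lang E) := by
              intro u hu
              have hz0 := dime_zero_at hsym hp hq haq hty hz u hu
              simp [hz0]
            have hC' := hsat.1 (ra, ra) hC
            have h0 : w ra = 0 := by
              by_contra hne
              exact hC' ⟨hne, hne⟩
            omega
    · exfalso
      rcases hsat.2.1 a with ⟨-, h⟩ | ⟨p, hp, -, q, hq, r, hr, hra⟩ |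
        ⟨p, hp, -, q, hq, hqa, -⟩ | ⟨p, hp, -, q, hq, hqa, -⟩
      · omega
      · exact haS (mem_symbols_iff.mpr ⟨p, hp, mem_clauseSyms hq
          (hra ▸ mem_atomSyms_of_pair (show (r.1, r.2) ∈ q.1 from hr))⟩)
      · exact haS (mem_symbols_iff.mpr ⟨p, hp, mem_clauseSyms hq (mem_atomSyms_of_pair hqa)⟩)
      · exact haS (mem_symbols_iff.mpr ⟨p, hp, mem_clauseSyms hq (mem_atomSyms_of_pair hqa)⟩)

end AuxStmt6


/-- For every reduced DIME `E` and every unordered word `w`: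
`w ⊨ Δ_E` if and only if `w ⊨ Δ̂_E`. -/
theorem statement6 {σ : Type} [LinearOrder σ] [Fintype σ]
    (E : DIME σ) (hE : E.WF) (hred : E.Reduced) (w : UWord σ) :
    SatTuple (DIME.lang E) w ↔ E.SatHat w := by
  constructor
  · rintro ⟨hC, hN, hP, hK⟩
    refine ⟨hC, fun a => ?_, fun X hX => hP X (phat_fwd hE hred hX), hK⟩
    obtain ⟨u, hu, hua⟩ := hN a
    have hua' : u a = w a := hua
    rw [← hua']
    exact nhat_fwd hE hred hu a
  · intro hsat
    refine ⟨hsat.1, fun a => realize hE hred hsat a, fun X hX => ?_, hsat.2.2.2⟩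
    by_contra hcon
    push_neg at hcon
    obtain ⟨u, hu, hz⟩ := avoidAll hE hred hsat hcon
    obtain ⟨b, hbX, hb0⟩ := hX u hu
    exact hb0 (hz b hbX)
end

section
/- Let φ = c₁ ∧ … ∧ c_k be a 3CNF formula over variables x₁,…,x_n. Over the alphabet {d₁,…,d_k, v₁,…,v_n}, let w_φ be the unordered word containing each symbol exactly once, and let E_φ = X₁ || … || X_n where, for 1 ≤ j ≤ n, X_j = (v_j || d_{t₁} || … || d_{t_l})? || (v_j || d_{f₁} || … || d_{f_m})? with d_{t₁},…,d_{t_l} the symbols of the clauses that use the positive literal x_j and d_{f₁},…,d_{f_m} the symbols of the clauses that use the literal ¬x_j. Then φ has a valuation making exactly one literal of each clause true (a 1-in-3 valuation) if and only if w_φ ∈ L(E_φ). -/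
set_option autoImplicit false

universe u v w

/-- Unordered regular expressions (UREs):
`E ::= ε | a | E* | (E|E) | (E||E)`. -/
inductive URE (σ : Type u) : Type u where
  | eps : URE σ
  | sym : σ → URE σ
  | star : URE σ → URE σ
  | alt : URE σ → URE σ → URE σ
  | conc : URE σ → URE σ → URE σ

/-- The language of unordered words defined by a URE. -/
def URE.lang {σ : Type u} [DecidableEq σ] : URE σ → Set (UWord σ)
  | .eps => {UWord.zero}
  | .sym a => {UWord.single a}
  | .star E => {w | ∃ l : List (UWord σ), (∀ x ∈ l, x ∈ URE.lang E) ∧ w = listSum l}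
  | .alt E₁ E₂ => URE.lang E₁ ∪ URE.lang E₂
  | .conc E₁ E₂ => {w | ∃ w₁ ∈ URE.lang E₁, ∃ w₂ ∈ URE.lang E₂, w = w₁.add w₂}

/-- The macro `E? = E | ε`. -/
def URE.opt {σ : Type u} (E : URE σ) : URE σ := URE.alt E URE.eps

/-- The macro `E⁺ = E || E*`. -/
def URE.plus {σ : Type u} (E : URE σ) : URE σ := URE.conc E (URE.star E)

/-- Unordered concatenation `E₁ || ⋯ || E_k` of a list of UREs. -/
def URE.concList {σ : Type u} (l : List (URE σ)) : URE σ := l.foldr URE.conc URE.eps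

/-- Disjunction `E₁ | ⋯ | E_k` of a (nonempty) list of UREs. -/
def URE.altList {σ : Type u} : List (URE σ) → URE σ
  | [] => URE.eps
  | [E] => E
  | E :: F :: rest => URE.alt E (URE.altList (F :: rest))

/-- The language of the interval multiplicity `E^[lo,hi]` (finite bounds):
unordered concatenations of between `lo` and `hi` words of `L(E)`. -/
def URE.langIter {σ : Type u} [DecidableEq σ] (E : URE σ) (lo hi : ℕ) : Set (UWord σ) :=
  {w | ∃ l : List (UWord σ),
      (∀ x ∈ l, x ∈ URE.lang E) ∧ lo ≤ l.length ∧ l.length ≤ hi ∧ w = listSum l}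

/- The alphabet `{d₁,…,d_k, v₁,…,v_n}`: `Sum.inl i` is the symbol `d_i` of the clause
`c_i`, and `Sum.inr j` is the symbol `v_j` of the variable `x_j`.  A 3CNF formula
`φ = c₁ ∧ … ∧ c_k` over variables `x₁,…,x_n` is given by its sets of literals
`lits i` (a literal is a pair of a variable and a sign). -/

/-- The URE `d_i`. -/
def dsym (k n : ℕ) (i : Fin k) : URE (Fin k ⊕ Fin n) := URE.sym (Sum.inl i)

/-- The URE `v_j`. -/
def vsym (k n : ℕ) (j : Fin n) : URE (Fin k ⊕ Fin n) := URE.sym (Sum.inr j)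

/-- `X_j = (v_j || d_{t₁} || … || d_{t_l})? || (v_j || d_{f₁} || … || d_{f_m})?` where
`d_{t₁},…,d_{t_l}` correspond to the clauses using the literal `x_j` and
`d_{f₁},…,d_{f_m}` to the clauses using the literal `¬x_j`. -/
def X8 {k n : ℕ} (lits : Fin k → Finset (Fin n × Bool)) (j : Fin n) :
    URE (Fin k ⊕ Fin n) :=
  URE.conc
    (URE.opt (URE.concList
      (vsym k n j :: ((List.finRange k).filter (fun i => (j, true) ∈ lits i)).map (dsym k n))))
    (URE.opt (URE.concList
      (vsym k n j :: ((List.finRange k).filter (fun i => (j, false) ∈ lits i)).map (dsym k n))))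

/-- `E_φ = X₁ || … || X_n`. -/
def E8 {k n : ℕ} (lits : Fin k → Finset (Fin n × Bool)) : URE (Fin k ⊕ Fin n) :=
  URE.concList ((List.finRange n).map (X8 lits))

/-- `w_φ = d₁ … d_k v₁ … v_n`: every symbol of the alphabet occurs exactly once. -/
def w8 (k n : ℕ) : UWord (Fin k ⊕ Fin n) := fun _ => 1


set_option linter.unusedSectionVars false
section aux
variable {σ : Type u} [DecidableEq σ]

lemma listSum_cons (w : UWord σ) (l : List (UWord σ)) :
    listSum (w :: l) = w.add (listSum l) := rfl

lemma listSum_apply (l : List (UWord σ)) (a : σ) :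
    listSum l a = (l.map (fun w => w a)).sum := by
  induction l with
  | nil => rfl
  | cons w l ih => simp [listSum_cons, UWord.add, ih]

lemma listSum_map_single (l : List σ) (hnd : l.Nodup) (a : σ) :
    listSum (l.map UWord.single) a = if a ∈ l then 1 else 0 := by
  induction l with
  | nil => rfl
  | cons b l ih =>
    rw [List.nodup_cons] at hnd
    rw [List.map_cons, listSum_cons]
    show UWord.single b a + _ = _
    rw [ih hnd.2, UWord.single]
    by_cases h : a = b
    · subst h
      simp [hnd.1]
    · simp [h, List.mem_cons]

lemma mem_lang_concList_sym (l : List σ) (w : UWord σ) :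
    w ∈ URE.lang (URE.concList (l.map URE.sym)) ↔ w = listSum (l.map UWord.single) := by
  induction l generalizing w with
  | nil => simp [URE.concList, URE.lang, listSum]
  | cons a l ih =>
    show (∃ w₁ ∈ URE.lang (URE.sym a), ∃ w₂ ∈ URE.lang (URE.concList (l.map URE.sym)),
        w = w₁.add w₂) ↔ _
    constructor
    · rintro ⟨w₁, h₁, w₂, h₂, rfl⟩
      rw [show w₁ = UWord.single a from h₁, (ih w₂).1 h₂]; rfl
    · rintro rfl
      exact ⟨UWord.single a, rfl, listSum (l.map UWord.single), (ih _).2 rfl, rfl⟩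

lemma mem_lang_opt (E : URE σ) (w : UWord σ) :
    w ∈ URE.lang (URE.opt E) ↔ w ∈ URE.lang E ∨ w = UWord.zero := by
  show w ∈ URE.lang E ∪ {UWord.zero} ↔ _
  simp [or_comm]

lemma mem_lang_concList_map {α : Type v} (F : α → URE σ) (L : List α) (hL : L.Nodup)
    (w : UWord σ) :
    w ∈ URE.lang (URE.concList (L.map F)) ↔
      ∃ g : α → UWord σ, (∀ a ∈ L, g a ∈ URE.lang (F a)) ∧ w = listSum (L.map g) := by
  classical
  induction L generalizing w with
  | nil =>
    simp only [List.map_nil]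
    show w ∈ ({UWord.zero} : Set (UWord σ)) ↔ _
    constructor
    · intro h
      exact ⟨fun _ => UWord.zero, fun a h => absurd h List.not_mem_nil, h⟩
    · rintro ⟨g, _, rfl⟩; rfl
  | cons a L ih =>
    rw [List.nodup_cons] at hL
    show w ∈ URE.lang (URE.conc (F a) _) ↔ _
    simp only [URE.lang, Set.mem_setOf_eq]
    constructor
    · rintro ⟨w₁, h₁, w₂, h₂, rfl⟩
      obtain ⟨g, hg, rfl⟩ := (ih hL.2 w₂).1 h₂
      refine ⟨Function.update g a w₁, ?_, ?_⟩
      · intro b hb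
        rcases List.mem_cons.1 hb with rfl | hb
        · simpa using h₁
        · rw [Function.update_of_ne (fun h => hL.1 (by rw [← h]; exact hb))]; exact hg b hb
      · rw [List.map_cons, listSum_cons, Function.update_self]
        have hm : List.map (Function.update g a w₁) L = List.map g L :=
          List.map_congr_left
            (fun b hb => Function.update_of_ne (fun (h : b = a) => hL.1 (h ▸ hb)) _ _)
        rw [hm]
    · rintro ⟨g, hg, rfl⟩
      exact ⟨g a, hg a List.mem_cons_self, listSum (L.map g),
        (ih hL.2 _).2 ⟨g, fun b hb => hg b (List.mem_cons_of_mem a hb), rfl⟩,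
        by rw [List.map_cons, listSum_cons]⟩

end aux

section main
set_option linter.unusedSectionVars false
variable {k n : ℕ}

/-- The word contributed by choosing side `s` of variable `j`. -/
def cw (lits : Fin k → Finset (Fin n × Bool)) (j : Fin n) (s : Bool) :
    UWord (Fin k ⊕ Fin n) := fun x =>
  match x with
  | .inl i => if (j, s) ∈ lits i then 1 else 0
  | .inr j' => if j' = j then 1 else 0

lemma cw_eq (lits : Fin k → Finset (Fin n × Bool)) (j : Fin n) (s : Bool) :
    listSum (((Sum.inr j : Fin k ⊕ Fin n) ::
      ((List.finRange k).filter (fun i => (j, s) ∈ lits i)).map Sum.inl).map UWord.single)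
      = cw lits j s := by
  have hnd : ((Sum.inr j : Fin k ⊕ Fin n) ::
      ((List.finRange k).filter (fun i => (j, s) ∈ lits i)).map Sum.inl).Nodup := by
    rw [List.nodup_cons]
    refine ⟨by simp, ?_⟩
    exact ((List.nodup_finRange k).filter _).map Sum.inl_injective
  funext x
  rw [listSum_map_single _ hnd]
  cases x with
  | inl i =>
    by_cases h : (j, s) ∈ lits i <;> simp [cw, h, List.mem_filter]
  | inr j' =>
    by_cases h : j' = j <;> simp [cw, h]

lemma mem_lang_X8 (lits : Fin k → Finset (Fin n × Bool)) (j : Fin n)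
    (w : UWord (Fin k ⊕ Fin n)) :
    w ∈ URE.lang (X8 lits j) ↔ ∃ a b : Bool,
      w = (if a then cw lits j true else UWord.zero).add
          (if b then cw lits j false else UWord.zero) := by
  have hrw : ∀ s : Bool,
      (vsym k n j :: ((List.finRange k).filter (fun i => (j, s) ∈ lits i)).map (dsym k n))
        = ((Sum.inr j : Fin k ⊕ Fin n) ::
            ((List.finRange k).filter (fun i => (j, s) ∈ lits i)).map Sum.inl).map URE.sym := by
    intro s
    simp only [List.map_cons, List.map_map]
    rfl
  have hopt : ∀ (s : Bool) (w₁ : UWord (Fin k ⊕ Fin n)),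
      w₁ ∈ URE.lang (URE.opt (URE.concList
        (vsym k n j :: ((List.finRange k).filter (fun i => (j, s) ∈ lits i)).map (dsym k n))))
        ↔ w₁ = cw lits j s ∨ w₁ = UWord.zero := by
    intro s w₁
    rw [hrw s, mem_lang_opt]
    constructor
    · rintro (h | h)
      · exact Or.inl (((mem_lang_concList_sym _ _).1 h).trans (cw_eq lits j s))
      · exact Or.inr h
    · rintro (rfl | rfl)
      · exact Or.inl ((mem_lang_concList_sym _ _).2 (cw_eq lits j s).symm)
      · exact Or.inr rfl
  show (∃ w₁ ∈ URE.lang (URE.opt _), ∃ w₂ ∈ URE.lang (URE.opt _), w = w₁.add w₂) ↔ _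
  constructor
  · rintro ⟨w₁, h₁, w₂, h₂, rfl⟩
    rcases (hopt true w₁).1 h₁ with rfl | rfl <;> rcases (hopt false w₂).1 h₂ with rfl | rfl
    · exact ⟨true, true, rfl⟩
    · exact ⟨true, false, rfl⟩
    · exact ⟨false, true, rfl⟩
    · exact ⟨false, false, rfl⟩
  · rintro ⟨a, b, rfl⟩
    refine ⟨_, (hopt true _).2 ?_, _, (hopt false _).2 ?_, rfl⟩
    · cases a
      · exact Or.inr rfl
      · exact Or.inl rfl
    · cases b
      · exact Or.inr rfl
      · exact Or.inl rfl

lemma mem_lang_E8 (lits : Fin k → Finset (Fin n × Bool)) (w : UWord (Fin k ⊕ Fin n)) :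
    w ∈ URE.lang (E8 lits) ↔ ∃ A B : Fin n → Bool,
      w = listSum ((List.finRange n).map (fun j =>
        (if A j then cw lits j true else UWord.zero).add
        (if B j then cw lits j false else UWord.zero))) := by
  rw [E8, mem_lang_concList_map (X8 lits) _ (List.nodup_finRange n)]
  constructor
  · rintro ⟨g, hg, rfl⟩
    choose A B hab using fun j => (mem_lang_X8 lits j (g j)).1 (hg j (List.mem_finRange j))
    exact ⟨A, B, congrArg listSum (List.map_congr_left (fun j _ => hab j))⟩
  · rintro ⟨A, B, rfl⟩
    exact ⟨_, fun j _ => (mem_lang_X8 lits j _).2 ⟨A j, B j, rfl⟩, rfl⟩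

lemma eval_sum (lits : Fin k → Finset (Fin n × Bool)) (A B : Fin n → Bool)
    (x : Fin k ⊕ Fin n) :
    listSum ((List.finRange n).map (fun j =>
        (if A j then cw lits j true else UWord.zero).add
        (if B j then cw lits j false else UWord.zero))) x
      = ∑ j : Fin n, ((if A j then cw lits j true else UWord.zero) x
          + (if B j then cw lits j false else UWord.zero) x) := by
  rw [listSum_apply, List.map_map, Fin.sum_univ_def]
  rfl

lemma card_eq8 (lits : Fin k → Finset (Fin n × Bool)) (v : Fin n → Bool) (i : Fin k) :
    (Finset.univ.filter (fun j => (j, v j) ∈ lits i)).card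
      = ((lits i).filter (fun ℓ => v ℓ.1 = ℓ.2)).card := by
  apply Finset.card_bij (fun j _ => (j, v j))
  · intro j hj
    rw [Finset.mem_filter] at hj ⊢
    exact ⟨hj.2, rfl⟩
  · intro j₁ _ j₂ _ h
    exact congrArg Prod.fst h
  · intro ℓ hℓ
    simp only [Finset.mem_filter, Finset.mem_univ, true_and] at hℓ
    refine ⟨ℓ.1, ?_, ?_⟩
    · simp only [Finset.mem_filter, Finset.mem_univ, true_and]
      rw [hℓ.2]; exact hℓ.1
    · rw [hℓ.2]

lemma existsUnique_iff_card8 (lits : Fin k → Finset (Fin n × Bool)) (v : Fin n → Bool)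
    (i : Fin k) :
    (∃! ℓ : Fin n × Bool, ℓ ∈ lits i ∧ v ℓ.1 = ℓ.2) ↔
      ((lits i).filter (fun ℓ => v ℓ.1 = ℓ.2)).card = 1 := by
  rw [Finset.card_eq_one]
  constructor
  · rintro ⟨ℓ, ⟨h1, h2⟩, hu⟩
    refine ⟨ℓ, Finset.eq_singleton_iff_unique_mem.2 ⟨by simp [h1, h2], fun x hx => ?_⟩⟩
    rw [Finset.mem_filter] at hx
    exact hu x hx
  · rintro ⟨ℓ, hℓ⟩
    obtain ⟨h1, h2⟩ := Finset.eq_singleton_iff_unique_mem.1 hℓ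
    rw [Finset.mem_filter] at h1
    exact ⟨ℓ, h1, fun x hx => h2 x (Finset.mem_filter.2 hx)⟩

end main

/-- `φ` has a valuation making exactly one literal of each clause true
(a 1-in-3 valuation) if and only if `w_φ ∈ L(E_φ)`. -/
theorem statement8 (k n : ℕ) (lits : Fin k → Finset (Fin n × Bool))
    (h3 : ∀ i : Fin k, (lits i).card = 3) :
    (∃ v : Fin n → Bool, ∀ i : Fin k,
        ∃! ℓ : Fin n × Bool, ℓ ∈ lits i ∧ v ℓ.1 = ℓ.2) ↔
      w8 k n ∈ URE.lang (E8 lits) := by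
  rw [mem_lang_E8]
  constructor
  · rintro ⟨v, hv⟩
    refine ⟨v, fun j => !v j, ?_⟩
    funext x
    show (1 : ℕ) = _
    rw [eval_sum]
    cases x with
    | inr j =>
      have hterm : ∀ j' : Fin n,
          ((if v j' then cw lits j' true else UWord.zero) (Sum.inr j)
            + (if !v j' then cw lits j' false else UWord.zero) (Sum.inr j))
            = if j = j' then 1 else 0 := by
        intro j'
        cases hv' : v j' <;> simp [cw, UWord.zero]
      rw [Finset.sum_congr rfl (fun j' _ => hterm j'), Finset.sum_ite_eq]
      simp
    | inl i =>
      have hterm : ∀ j' : Fin n,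
          ((if v j' then cw lits j' true else UWord.zero) (Sum.inl i)
            + (if !v j' then cw lits j' false else UWord.zero) (Sum.inl i))
            = if (j', v j') ∈ lits i then 1 else 0 := by
        intro j'
        cases hv' : v j' <;> simp [cw, UWord.zero, hv']
      rw [Finset.sum_congr rfl (fun j' _ => hterm j'), Finset.sum_boole]
      have h1 : ((Finset.univ.filter (fun j' => (j', v j') ∈ lits i)).card) = 1 := by
        rw [card_eq8]
        exact (existsUnique_iff_card8 lits v i).1 (hv i)
      rw [h1]
      simp
  · rintro ⟨A, B, hw⟩
    have hx : ∀ x : Fin k ⊕ Fin n,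
        (1 : ℕ) = ∑ j : Fin n, ((if A j then cw lits j true else UWord.zero) x
          + (if B j then cw lits j false else UWord.zero) x) := by
      intro x
      rw [← eval_sum]
      exact congrFun hw x
    have hone : ∀ j : Fin n,
        (if A j then 1 else 0) + (if B j then 1 else 0) = (1 : ℕ) := by
      intro j
      have h := hx (Sum.inr j)
      have hterm : ∀ j' : Fin n,
          ((if A j' then cw lits j' true else UWord.zero) (Sum.inr j)
            + (if B j' then cw lits j' false else UWord.zero) (Sum.inr j))
            = if j = j' then ((if A j' then 1 else 0) + (if B j' then 1 else 0)) else 0 := by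
        intro j'
        by_cases hj : j = j' <;> cases hA : A j' <;> cases hB : B j' <;>
          simp [cw, UWord.zero, hj]
      rw [Finset.sum_congr rfl (fun j' _ => hterm j'), Finset.sum_ite_eq] at h
      simpa using h.symm
    refine ⟨A, fun i => ?_⟩
    rw [existsUnique_iff_card8, ← card_eq8]
    have h := hx (Sum.inl i)
    have hterm : ∀ j' : Fin n,
        ((if A j' then cw lits j' true else UWord.zero) (Sum.inl i)
          + (if B j' then cw lits j' false else UWord.zero) (Sum.inl i))
          = if (j', A j') ∈ lits i then 1 else 0 := by
      intro j'
      have h1 := hone j'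
      cases hA : A j' <;> cases hB : B j' <;> simp [hA, hB] at h1 ⊢ <;>
        simp [cw, UWord.zero, hA, hB]
    rw [Finset.sum_congr rfl (fun j' _ => hterm j'), Finset.sum_boole] at h
    exact_mod_cast h.symm
end

section
/- Let ψ = ∀x₁,…,x_n ∃y₁,…,y_m. φ where φ = c₁ ∧ … ∧ c_k is a quantifier-free CNF formula. Over the alphabet {d₁,…,d_k, t₁,f₁,…,t_n,f_n}, define E_ψ = d₁ || … || d_k || X₁ || … || X_n where X_i = ((t_i || d_{a₁} || … || d_{a_l}) | (f_i || d_{b₁} || … || d_{b_s})) with d_{a₁},…,d_{a_l} the symbols of the clauses using the literal x_i and d_{b₁},…,d_{b_s} those of the clauses using ¬x_i; and define E'_ψ = X'₁ || … || X'_n || Y₁ || … || Y_m where X'_i = ((t_i || d_{a₁}* || … || d_{a_l}*) | (f_i || d_{b₁}* || … || d_{b_s}*)) with the same correspondence of d's for x_i, and Y_j = ((d_{a₁}* || … || d_{a_l}*) | (d_{b₁}* || … || d_{b_s}*)) with d_{a₁},…,d_{a_l} the symbols of the clauses using the literal y_j and d_{b₁},…,d_{b_s} those using ¬y_j. Then ψ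 is true (for every valuation of x₁,…,x_n there exists a valuation of y₁,…,y_m satisfying φ) if and only if L(E_ψ) ⊆ L(E'_ψ). -/
set_option autoImplicit false

universe u v w

/- The alphabet `{d₁,…,d_k, t₁,f₁,…,t_n,f_n}`: `Sum.inl i` is the symbol `d_i` of the
clause `c_i`, `Sum.inr (Sum.inl i)` is `t_i`, and `Sum.inr (Sum.inr i)` is `f_i`.
The quantifier-free CNF formula `φ = c₁ ∧ … ∧ c_k` over the universal variables
`x₁,…,x_n` and the existential variables `y₁,…,y_m` is given by its sets of literals
`lits i` (a literal is a variable `Fin n ⊕ Fin m` together with a sign). -/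

/-- The alphabet for the formula `ψ`. -/
abbrev QSym (k n : ℕ) : Type := Fin k ⊕ (Fin n ⊕ Fin n)

/-- The URE `d_i`. -/
def qd (k n : ℕ) (i : Fin k) : URE (QSym k n) := URE.sym (Sum.inl i)
/-- The URE `t_i`. -/
def qt (k n : ℕ) (i : Fin n) : URE (QSym k n) := URE.sym (Sum.inr (Sum.inl i))
/-- The URE `f_i`. -/
def qf (k n : ℕ) (i : Fin n) : URE (QSym k n) := URE.sym (Sum.inr (Sum.inr i))

/-- The list of (indices `i` of) clauses `c_i` using the literal given by
variable `x` and sign `s`. -/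
def clausesUsing {k n m : ℕ} (lits : Fin k → Finset ((Fin n ⊕ Fin m) × Bool))
    (x : Fin n ⊕ Fin m) (s : Bool) : List (Fin k) :=
  (List.finRange k).filter (fun i => (x, s) ∈ lits i)

/-- `X_i = ((t_i || d_{a₁} || … || d_{a_l}) | (f_i || d_{b₁} || … || d_{b_s}))`. -/
def X9 {k n m : ℕ} (lits : Fin k → Finset ((Fin n ⊕ Fin m) × Bool)) (i : Fin n) :
    URE (QSym k n) :=
  URE.alt
    (URE.concList (qt k n i :: (clausesUsing lits (Sum.inl i) true).map (qd k n)))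
    (URE.concList (qf k n i :: (clausesUsing lits (Sum.inl i) false).map (qd k n)))

/-- `E_ψ = d₁ || … || d_k || X₁ || … || X_n`. -/
def E9 {k n m : ℕ} (lits : Fin k → Finset ((Fin n ⊕ Fin m) × Bool)) : URE (QSym k n) :=
  URE.conc
    (URE.concList ((List.finRange k).map (qd k n)))
    (URE.concList ((List.finRange n).map (X9 lits)))

/-- `X'_i = ((t_i || d_{a₁}* || … || d_{a_l}*) | (f_i || d_{b₁}* || … || d_{b_s}*))`. -/
def X9' {k n m : ℕ} (lits : Fin k → Finset ((Fin n ⊕ Fin m) × Bool)) (i : Fin n) :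
    URE (QSym k n) :=
  URE.alt
    (URE.concList (qt k n i ::
      (clausesUsing lits (Sum.inl i) true).map (fun c => URE.star (qd k n c))))
    (URE.concList (qf k n i ::
      (clausesUsing lits (Sum.inl i) false).map (fun c => URE.star (qd k n c))))

/-- `Y_j = ((d_{a₁}* || … || d_{a_l}*) | (d_{b₁}* || … || d_{b_s}*))`. -/
def Y9 {k n m : ℕ} (lits : Fin k → Finset ((Fin n ⊕ Fin m) × Bool)) (j : Fin m) :
    URE (QSym k n) :=
  URE.alt
    (URE.concList ((clausesUsing lits (Sum.inr j) true).map (fun c => URE.star (qd k n c))))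
    (URE.concList ((clausesUsing lits (Sum.inr j) false).map (fun c => URE.star (qd k n c))))

/-- `E'_ψ = X'₁ || … || X'_n || Y₁ || … || Y_m`. -/
def E9' {k n m : ℕ} (lits : Fin k → Finset ((Fin n ⊕ Fin m) × Bool)) : URE (QSym k n) :=
  URE.conc
    (URE.concList ((List.finRange n).map (X9' lits)))
    (URE.concList ((List.finRange m).map (Y9 lits)))

namespace S9

variable {σ : Type u} [DecidableEq σ]

omit [DecidableEq σ] in
lemma listSum_apply (l : List (UWord σ)) (a : σ) :
    listSum l a = (l.map (fun w => w a)).sum := by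
  induction l with
  | nil => rfl
  | cons w l ih =>
      show (w.add (listSum l)) a = _
      simp [UWord.add, ih]

lemma mem_star_sym {a : σ} {w : UWord σ} :
    w ∈ (URE.star (URE.sym a)).lang ↔ ∀ b, b ≠ a → w b = 0 := by
  constructor
  · rintro ⟨l, hl, rfl⟩ b hb
    rw [listSum_apply]
    apply List.sum_eq_zero
    intro x hx
    simp only [List.mem_map] at hx
    obtain ⟨u, hu, rfl⟩ := hx
    have : u = UWord.single a := hl u hu
    simp [this, UWord.single, hb]
  · intro h
    refine ⟨List.replicate (w a) (UWord.single a), ?_, ?_⟩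
    · intro x hx; simp only [List.mem_replicate] at hx; exact hx.2 ▸ rfl
    · funext b
      rw [listSum_apply, List.map_replicate, List.sum_replicate, smul_eq_mul]
      by_cases hb : b = a
      · subst hb; simp [UWord.single]
      · simp [UWord.single, hb, h b hb]

lemma mem_concList_finRange (N : ℕ) (F : Fin N → URE σ) (w : UWord σ) :
    w ∈ (URE.concList ((List.finRange N).map F)).lang ↔
      ∃ u : Fin N → UWord σ, (∀ i, u i ∈ (F i).lang) ∧ ∀ a, w a = ∑ i, u i a := by
  induction N generalizing w with
  | zero =>
      simp only [List.finRange_zero, List.map_nil]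
      constructor
      · rintro (rfl : w = UWord.zero)
        exact ⟨Fin.elim0, fun i => Fin.elim0 i, fun a => by simp [UWord.zero]⟩
      · rintro ⟨u, -, hsum⟩
        have : w = UWord.zero := funext fun a => by simpa [UWord.zero] using hsum a
        exact this ▸ rfl
  | succ N ih =>
      rw [List.finRange_succ]
      simp only [List.map_cons, List.map_map]
      constructor
      · rintro ⟨w1, h1, w2, h2, rfl⟩
        obtain ⟨u, hu, hsum⟩ := (ih (fun i => F i.succ) w2).mp h2
        refine ⟨Fin.cases w1 u, ?_, ?_⟩
        · intro i
          refine Fin.cases ?_ ?_ i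
          · exact h1
          · intro j; exact hu j
        · intro a
          rw [Fin.sum_univ_succ]
          show w1 a + w2 a = _
          simp [hsum a]
      · rintro ⟨u, hu, hsum⟩
        refine ⟨u 0, hu 0, fun a => ∑ i : Fin N, u i.succ a, ?_, ?_⟩
        · exact (ih (fun i => F i.succ) _).mpr ⟨fun i => u i.succ, fun i => hu i.succ, fun a => rfl⟩
        · funext a
          rw [hsum a, Fin.sum_univ_succ]
          rfl

/-- Words supported only on the `d`-symbols of the list `S`. -/
def DOnly {k n : ℕ} (S : List (Fin k)) (w : UWord (QSym k n)) : Prop :=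
  ∀ s : QSym k n, (∀ c ∈ S, s ≠ Sum.inl c) → w s = 0

lemma mem_starList {k n : ℕ} (S : List (Fin k)) (w : UWord (QSym k n)) :
    w ∈ (URE.concList (S.map (fun c => URE.star (qd k n c)))).lang ↔ DOnly S w := by
  induction S generalizing w with
  | nil =>
      constructor
      · rintro (rfl : w = UWord.zero); intro s _; rfl
      · intro h
        have : w = UWord.zero := funext fun s => h s (by simp)
        exact this ▸ rfl
  | cons c S ih =>
      constructor
      · rintro ⟨w1, h1, w2, h2, rfl⟩
        intro s hs
        have hs1 : w1 s = 0 := mem_star_sym.mp h1 s (hs c (by simp))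
        have hs2 : w2 s = 0 := (ih w2).mp h2 s (fun c' hc' => hs c' (by simp [hc']))
        show w1 s + w2 s = 0
        omega
      · intro h
        refine ⟨fun s => if s = Sum.inl c then w s else 0, ?_,
                fun s => if s = Sum.inl c then 0 else w s, ?_, ?_⟩
        · apply mem_star_sym.mpr
          intro b hb; simp [hb]
        · apply (ih _).mpr
          intro s hs
          by_cases h1 : s = Sum.inl c
          · simp [h1]
          · simp only [h1, if_neg, if_false]
            exact h s (by
              intro c' hc'
              rcases List.mem_cons.mp hc' with rfl | hc'
              · exact h1
              · exact hs c' hc')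
        · funext s
          show w s = (if s = Sum.inl c then w s else 0) + (if s = Sum.inl c then 0 else w s)
          by_cases h1 : s = Sum.inl c <;> simp [h1]

/-- The word counting the `d`-symbols of a list. -/
def cwd {k n : ℕ} (S : List (Fin k)) : UWord (QSym k n) :=
  Sum.elim (fun c => S.count c) (fun _ => 0)

lemma mem_dList {k n : ℕ} (S : List (Fin k)) (w : UWord (QSym k n)) :
    w ∈ (URE.concList (S.map (qd k n))).lang ↔ w = cwd S := by
  induction S generalizing w with
  | nil =>
      constructor
      · rintro (rfl : w = UWord.zero)
        funext s; cases s <;> simp [UWord.zero, cwd]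
      · rintro rfl
        show cwd [] = UWord.zero
        funext s; cases s <;> simp [UWord.zero, cwd]
  | cons c S ih =>
      constructor
      · rintro ⟨w1, h1, w2, h2, rfl⟩
        have hw1 : w1 = UWord.single (Sum.inl c) := h1
        have hw2 : w2 = cwd S := (ih w2).mp h2
        subst hw1; subst hw2
        funext s
        show UWord.single (Sum.inl c) s + cwd S s = cwd (c :: S) s
        cases s with
        | inl c' =>
            show (UWord.single (Sum.inl c) : UWord (QSym k n)) _ + cwd S _ = _
            unfold cwd UWord.single
            simp only [Sum.elim_inl, List.count_cons]
            by_cases hc : c' = c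
            · subst hc; simp [Nat.add_comm]
            · simp [hc, Ne.symm hc]
        | inr x => simp [UWord.single, cwd]
      · rintro rfl
        refine ⟨UWord.single (Sum.inl c), rfl, cwd S, (ih _).mpr rfl, ?_⟩
        funext s
        show cwd (c :: S) s = UWord.single (Sum.inl c) s + cwd S s
        cases s with
        | inl c' =>
            show cwd (c :: S) _ = (UWord.single (Sum.inl c) : UWord (QSym k n)) _ + cwd S _
            unfold cwd UWord.single
            simp only [Sum.elim_inl, List.count_cons]
            by_cases hc : c' = c
            · subst hc; simp [Nat.add_comm]
            · simp [hc, Ne.symm hc]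
        | inr x => simp [UWord.single, cwd]

end S9
namespace S9

variable {k n m : ℕ} (lits : Fin k → Finset ((Fin n ⊕ Fin m) × Bool))

lemma mem_clausesUsing {x : Fin n ⊕ Fin m} {s : Bool} {c : Fin k} :
    c ∈ clausesUsing lits x s ↔ (x, s) ∈ lits c := by
  simp [clausesUsing, List.mem_filter]

/-- The symbol `t_i` (if `b = true`) or `f_i` (if `b = false`). -/
def tfSym (i : Fin n) (b : Bool) : QSym k n :=
  Sum.inr (if b then Sum.inl i else Sum.inr i)

lemma tfSym_eq {i i' : Fin n} {b b' : Bool} :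
    (tfSym (k := k) i b = tfSym i' b') ↔ (i = i' ∧ b = b') := by
  cases b <;> cases b' <;> simp [tfSym]

lemma mem_X9 {i : Fin n} {w : UWord (QSym k n)} :
    w ∈ (X9 lits i).lang ↔
      ∃ b : Bool, w = (UWord.single (tfSym i b)).add
        (cwd (clausesUsing lits (Sum.inl i) b)) := by
  constructor
  · rintro (⟨w1, h1, w2, h2, rfl⟩ | ⟨w1, h1, w2, h2, rfl⟩)
    · exact ⟨true, by rw [show w1 = UWord.single (tfSym i true) from h1,
        (mem_dList _ _).mp h2]⟩
    · exact ⟨false, by rw [show w1 = UWord.single (tfSym i false) from h1,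
        (mem_dList _ _).mp h2]⟩
  · rintro ⟨b, rfl⟩
    cases b
    · exact Or.inr ⟨_, rfl, _, (mem_dList _ _).mpr rfl, rfl⟩
    · exact Or.inl ⟨_, rfl, _, (mem_dList _ _).mpr rfl, rfl⟩

lemma mem_X9' {i : Fin n} {w : UWord (QSym k n)} :
    w ∈ (X9' lits i).lang ↔
      ∃ (b : Bool) (g : UWord (QSym k n)),
        DOnly (clausesUsing lits (Sum.inl i) b) g ∧
        w = (UWord.single (tfSym i b)).add g := by
  constructor
  · rintro (⟨w1, h1, w2, h2, rfl⟩ | ⟨w1, h1, w2, h2, rfl⟩)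
    · exact ⟨true, w2, (mem_starList _ _).mp h2,
        by rw [show w1 = UWord.single (tfSym i true) from h1]⟩
    · exact ⟨false, w2, (mem_starList _ _).mp h2,
        by rw [show w1 = UWord.single (tfSym i false) from h1]⟩
  · rintro ⟨b, g, hg, rfl⟩
    cases b
    · exact Or.inr ⟨_, rfl, g, (mem_starList _ _).mpr hg, rfl⟩
    · exact Or.inl ⟨_, rfl, g, (mem_starList _ _).mpr hg, rfl⟩

lemma mem_Y9 {j : Fin m} {w : UWord (QSym k n)} :
    w ∈ (Y9 lits j).lang ↔
      ∃ b : Bool, DOnly (clausesUsing lits (Sum.inr j) b) w := by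
  constructor
  · rintro (h | h)
    · exact ⟨true, (mem_starList _ _).mp h⟩
    · exact ⟨false, (mem_starList _ _).mp h⟩
  · rintro ⟨b, hb⟩
    cases b
    · exact Or.inr ((mem_starList _ _).mpr hb)
    · exact Or.inl ((mem_starList _ _).mpr hb)

lemma mem_E9 {w : UWord (QSym k n)} :
    w ∈ (E9 lits).lang ↔
      ∃ vx : Fin n → Bool, ∀ s, w s = cwd (List.finRange k) s +
        ∑ i : Fin n, ((UWord.single (tfSym i (vx i))).add
          (cwd (clausesUsing lits (Sum.inl i) (vx i)))) s := by
  constructor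
  · rintro ⟨w1, h1, w2, h2, rfl⟩
    obtain ⟨u, hu, hsum⟩ := (mem_concList_finRange n (X9 lits) w2).mp h2
    choose b hb using fun i => (mem_X9 lits).mp (hu i)
    refine ⟨b, fun s => ?_⟩
    show w1 s + w2 s = _
    rw [(mem_dList _ _).mp h1, hsum s]
    congr 1
    exact Finset.sum_congr rfl fun i _ => by rw [hb i]
  · rintro ⟨vx, hw⟩
    refine ⟨cwd (List.finRange k), (mem_dList _ _).mpr rfl,
      fun s => ∑ i : Fin n, ((UWord.single (tfSym i (vx i))).add
          (cwd (clausesUsing lits (Sum.inl i) (vx i)))) s, ?_, funext hw⟩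
    exact (mem_concList_finRange n (X9 lits) _).mpr
      ⟨_, fun i => (mem_X9 lits).mpr ⟨vx i, rfl⟩, fun a => rfl⟩

lemma mem_E9' {w : UWord (QSym k n)} :
    w ∈ (E9' lits).lang ↔
      ∃ (u : Fin n → UWord (QSym k n)) (v : Fin m → UWord (QSym k n)),
        (∀ i, u i ∈ (X9' lits i).lang) ∧ (∀ j, v j ∈ (Y9 lits j).lang) ∧
        ∀ s, w s = (∑ i : Fin n, u i s) + ∑ j : Fin m, v j s := by
  constructor
  · rintro ⟨w1, h1, w2, h2, rfl⟩
    obtain ⟨u, hu, hsum1⟩ := (mem_concList_finRange n (X9' lits) w1).mp h1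
    obtain ⟨v, hv, hsum2⟩ := (mem_concList_finRange m (Y9 lits) w2).mp h2
    exact ⟨u, v, hu, hv, fun s => by show w1 s + w2 s = _; rw [hsum1 s, hsum2 s]⟩
  · rintro ⟨u, v, hu, hv, hsum⟩
    refine ⟨fun s => ∑ i : Fin n, u i s,
      (mem_concList_finRange n (X9' lits) _).mpr ⟨u, hu, fun a => rfl⟩,
      fun s => ∑ j : Fin m, v j s,
      (mem_concList_finRange m (Y9 lits) _).mpr ⟨v, hv, fun a => rfl⟩, funext hsum⟩

end S9
namespace S9

variable {k n m : ℕ} (lits : Fin k → Finset ((Fin n ⊕ Fin m) × Bool))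

lemma DOnly_inr {S : List (Fin k)} {w : UWord (QSym k n)} (h : DOnly S w)
    (x : Fin n ⊕ Fin n) : w (Sum.inr x) = 0 :=
  h _ (fun c _ => by simp)

lemma sum_single_tfSym (b : Fin n → Bool) (i : Fin n) (bb : Bool) :
    (∑ i' : Fin n, (UWord.single (tfSym (k := k) i' (b i'))) (tfSym i bb))
      = if b i = bb then 1 else 0 := by
  have h0 : ∀ i' ∈ Finset.univ, i' ≠ i →
      (UWord.single (tfSym (k := k) i' (b i'))) (tfSym i bb) = 0 := by
    intro i' _ hne
    unfold UWord.single
    rw [if_neg]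
    rw [tfSym_eq]
    exact fun h => hne h.1.symm
  rw [Finset.sum_eq_single i h0 (fun h => absurd (Finset.mem_univ i) h)]
  simp only [UWord.single, tfSym_eq, true_and]
  by_cases hb : b i = bb
  · simp [hb]
  · simp [hb, Ne.symm hb]

end S9


/-- `ψ = ∀x₁,…,x_n ∃y₁,…,y_m. φ` is true if and only if
`L(E_ψ) ⊆ L(E'_ψ)`. -/
theorem statement9 (k n m : ℕ) (lits : Fin k → Finset ((Fin n ⊕ Fin m) × Bool)) :
    (∀ vx : Fin n → Bool, ∃ vy : Fin m → Bool, ∀ i : Fin k,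
        ∃ ℓ ∈ lits i, Sum.elim vx vy ℓ.1 = ℓ.2) ↔
      URE.lang (E9 lits) ⊆ URE.lang (E9' lits) := by
  constructor
  · -- ψ true → inclusion
    intro hψ w hw
    obtain ⟨vx, hw⟩ := (S9.mem_E9 lits).mp hw
    obtain ⟨vy, hvy⟩ := hψ vx
    choose ℓ hℓmem hℓsat using hvy
    set extra : (Fin n ⊕ Fin m) → UWord (QSym k n) :=
      fun t => Sum.elim (fun c => if (ℓ c).1 = t then 1 else 0) (fun _ => 0) with hextra
    have hkey : ∀ (c : Fin k) (t : Fin n ⊕ Fin m), (ℓ c).1 = t →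
        c ∈ clausesUsing lits t (Sum.elim vx vy t) := by
      intro c t ht
      apply (S9.mem_clausesUsing lits).mpr
      have h2 : (ℓ c).2 = Sum.elim vx vy t := by rw [← hℓsat c, ht]
      have h1 : ℓ c = (t, Sum.elim vx vy t) := Prod.ext ht h2
      exact h1 ▸ hℓmem c
    refine (S9.mem_E9' lits).mpr
      ⟨fun i s => ((UWord.single (S9.tfSym i (vx i))).add
          (S9.cwd (clausesUsing lits (Sum.inl i) (vx i)))) s + extra (Sum.inl i) s,
       fun j => extra (Sum.inr j), ?_, ?_, ?_⟩
    · intro i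
      refine (S9.mem_X9' lits).mpr ⟨vx i,
        fun s => S9.cwd (clausesUsing lits (Sum.inl i) (vx i)) s + extra (Sum.inl i) s,
        ?_, funext fun s => by simp [UWord.add, Nat.add_assoc]⟩
      intro s hs
      cases s with
      | inr x => simp [S9.cwd, hextra]
      | inl c =>
          have hc : c ∉ clausesUsing lits (Sum.inl i) (vx i) :=
            fun hmem => (hs c hmem) rfl
          have h1 : S9.cwd (k := k) (n := n)
              (clausesUsing lits (Sum.inl i) (vx i)) (Sum.inl c) = 0 := by
            simp [S9.cwd, List.count_eq_zero, hc]
          have h2 : (ℓ c).1 ≠ Sum.inl i := by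
            intro hd
            exact hc (hkey c (Sum.inl i) hd)
          simp [hextra, h1, h2]
    · intro j
      refine (S9.mem_Y9 lits).mpr ⟨vy j, ?_⟩
      intro s hs
      cases s with
      | inr x => simp [hextra]
      | inl c =>
          have h2 : (ℓ c).1 ≠ Sum.inr j := by
            intro hd
            exact (hs c (hkey c (Sum.inr j) hd)) rfl
          simp [hextra, h2]
    · intro s
      simp only []
      rw [hw s, Finset.sum_add_distrib]
      have hpart : S9.cwd (k := k) (n := n) (List.finRange k) s =
          (∑ i : Fin n, extra (Sum.inl i) s) + ∑ j : Fin m, extra (Sum.inr j) s := by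
        cases s with
        | inr x => simp [S9.cwd, hextra]
        | inl c =>
            have h1 : (List.finRange k).count c = 1 :=
              List.count_eq_one_of_mem (List.nodup_finRange k) (List.mem_finRange c)
            rcases hd : (ℓ c).1 with i0 | j0 <;>
              simp [S9.cwd, hextra, h1, hd, Finset.sum_ite_eq]
      omega
  · -- inclusion → ψ true
    intro hsub vx
    have hw : (fun s => S9.cwd (List.finRange k) s +
        ∑ i : Fin n, ((UWord.single (S9.tfSym i (vx i))).add
          (S9.cwd (clausesUsing lits (Sum.inl i) (vx i)))) s) ∈ (E9 lits).lang :=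
      (S9.mem_E9 lits).mpr ⟨vx, fun s => rfl⟩
    obtain ⟨u', v, hu', hv, hsum⟩ := (S9.mem_E9' lits).mp (hsub hw)
    choose bX gX hgX hXeq using fun i => (S9.mem_X9' lits).mp (hu' i)
    choose bY hbY using fun j => (S9.mem_Y9 lits).mp (hv j)
    have hbx : ∀ i, bX i = vx i := by
      intro i
      have h : S9.cwd (k := k) (n := n) (List.finRange k) (S9.tfSym i (vx i)) +
          (∑ i' : Fin n, ((UWord.single (S9.tfSym i' (vx i'))).add
            (S9.cwd (clausesUsing lits (Sum.inl i') (vx i')))) (S9.tfSym i (vx i)))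
          = (∑ i' : Fin n, u' i' (S9.tfSym i (vx i))) +
            ∑ j : Fin m, v j (S9.tfSym i (vx i)) := hsum _
      have hL : (∑ i' : Fin n, ((UWord.single (S9.tfSym i' (vx i'))).add
          (S9.cwd (clausesUsing lits (Sum.inl i') (vx i')))) (S9.tfSym i (vx i))) = 1 := by
        have h1 : ∀ i', ((UWord.single (S9.tfSym i' (vx i'))).add
            (S9.cwd (clausesUsing lits (Sum.inl i') (vx i')))) (S9.tfSym i (vx i))
            = (UWord.single (S9.tfSym (k := k) i' (vx i')) : UWord (QSym k n)) (S9.tfSym i (vx i)) := by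
          intro i'
          show _ + _ = _
          have h2 : S9.cwd (k := k) (n := n)
              (clausesUsing lits (Sum.inl i') (vx i')) (S9.tfSym i (vx i)) = 0 := rfl
          omega
        rw [Finset.sum_congr rfl (fun i' _ => h1 i'), S9.sum_single_tfSym]
        simp
      have hR1 : ∀ i', u' i' (S9.tfSym i (vx i)) =
          (UWord.single (S9.tfSym (k := k) i' (bX i')) : UWord (QSym k n)) (S9.tfSym i (vx i)) := by
        intro i'
        rw [hXeq i']
        show _ + _ = _
        have h3 : gX i' (S9.tfSym i (vx i)) = 0 := S9.DOnly_inr (hgX i') _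
        omega
      have hR2 : ∀ j, v j (S9.tfSym i (vx i)) = 0 :=
        fun j => S9.DOnly_inr (hbY j) _
      rw [Finset.sum_congr rfl (fun i' _ => hR1 i'),
        Finset.sum_congr rfl (fun j _ => hR2 j), S9.sum_single_tfSym, hL] at h
      have hL2 : S9.cwd (k := k) (n := n) (List.finRange k) (S9.tfSym i (vx i)) = 0 := rfl
      rw [hL2] at h
      by_contra hne
      simp [hne] at h
    refine ⟨bY, fun c => ?_⟩
    have h : S9.cwd (k := k) (n := n) (List.finRange k) (Sum.inl c) +
        (∑ i : Fin n, ((UWord.single (S9.tfSym i (vx i))).add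
          (S9.cwd (clausesUsing lits (Sum.inl i) (vx i)))) (Sum.inl c))
        = (∑ i : Fin n, u' i (Sum.inl c)) + ∑ j : Fin m, v j (Sum.inl c) := hsum _
    have hL : S9.cwd (k := k) (n := n) (List.finRange k) (Sum.inl c) = 1 := by
      show (List.finRange k).count c = 1
      exact List.count_eq_one_of_mem (List.nodup_finRange k) (List.mem_finRange c)
    have hR1 : ∀ i, u' i (Sum.inl c) = gX i (Sum.inl c) := by
      intro i
      rw [hXeq i]
      show UWord.single _ _ + gX i _ = gX i _
      simp [UWord.single, S9.tfSym]
    rw [hL, Finset.sum_congr rfl (fun i _ => hR1 i)] at h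
    have hpos : (∑ i : Fin n, gX i (Sum.inl c)) + (∑ j : Fin m, v j (Sum.inl c)) ≠ 0 := by
      omega
    by_cases h1 : (∑ i : Fin n, gX i (Sum.inl c)) = 0
    · have h2 : (∑ j : Fin m, v j (Sum.inl c)) ≠ 0 := by omega
      obtain ⟨j, -, hj⟩ := Finset.exists_ne_zero_of_sum_ne_zero h2
      have hx : ¬ ∀ c' ∈ clausesUsing lits (Sum.inr j) (bY j),
          (Sum.inl c : QSym k n) ≠ Sum.inl c' :=
        fun hall => hj (hbY j _ hall)
      push_neg at hx
      obtain ⟨c', hc', hcc⟩ := hx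
      obtain rfl : c = c' := by simpa using hcc
      exact ⟨(Sum.inr j, bY j), (S9.mem_clausesUsing lits).mp hc', rfl⟩
    · obtain ⟨i, -, hi⟩ := Finset.exists_ne_zero_of_sum_ne_zero h1
      have hx : ¬ ∀ c' ∈ clausesUsing lits (Sum.inl i) (bX i),
          (Sum.inl c : QSym k n) ≠ Sum.inl c' :=
        fun hall => hi (hgX i _ hall)
      push_neg at hx
      obtain ⟨c', hc', hcc⟩ := hx
      obtain rfl : c = c' := by simpa using hcc
      rw [hbx i] at hc'
      exact ⟨(Sum.inl i, vx i), (S9.mem_clausesUsing lits).mp hc', rfl⟩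
end

section
/- Let φ = c₁ ∧ … ∧ c_k be a 3CNF formula over variables x₁,…,x_n in which each variable occurs at most once in each clause. Over the alphabet {a_{ij} | 1 ≤ i ≤ k, 1 ≤ j ≤ n, clause c_i uses x_j or ¬x_j}, define E_φ = X₁ || … || X_n where X_j = ((a_{t₁j} || … || a_{t_l j}) | (a_{f₁j} || … || a_{f_m j})) with c_{t₁},…,c_{t_l} the clauses using the literal x_j and c_{f₁},…,c_{f_m} the clauses using ¬x_j; and define E'_φ = (C₁ | … | C_k)^{[0,k−1]} where C_i = (a_{ij₁} | … | a_{ij_p})⁺ with x_{j₁},…,x_{j_p} the variables used by clause c_i. Then φ is satisfiable if and only if L(E_φ) is not contained in L(E'_φ). Note that no symbol is repeated in E_φ or in E'_φ. -/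
set_option autoImplicit false
set_option linter.unusedSectionVars false
set_option linter.unusedVariables false
set_option linter.unreachableTactic false
set_option linter.unusedTactic false

universe u v w

/- The alphabet `{a_{ij}}`: the pair `(i, j) : Fin k × Fin n` is the symbol `a_{ij}`.
The 3CNF formula `φ = c₁ ∧ … ∧ c_k` over variables `x₁,…,x_n` is given by its sets of
literals `lits i` (a literal is a variable together with a sign). -/

/-- The URE `a_{ij}`. -/
def asym (k n : ℕ) (i : Fin k) (j : Fin n) : URE (Fin k × Fin n) := URE.sym (i, j)

/-- The clause `c_i` uses the variable `x_j` (positively or negatively). -/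
def usesVar {k n : ℕ} (lits : Fin k → Finset (Fin n × Bool)) (i : Fin k) (j : Fin n) :
    Prop :=
  (j, true) ∈ lits i ∨ (j, false) ∈ lits i

/-- `X_j = ((a_{t₁j} || … || a_{t_l j}) | (a_{f₁j} || … || a_{f_m j}))` where
`c_{t₁},…,c_{t_l}` are the clauses using the literal `x_j` and `c_{f₁},…,c_{f_m}`
the clauses using `¬x_j`. -/
def X10 {k n : ℕ} (lits : Fin k → Finset (Fin n × Bool)) (j : Fin n) :
    URE (Fin k × Fin n) :=
  URE.alt
    (URE.concList (((List.finRange k).filter (fun i => (j, true) ∈ lits i)).map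
      (fun i => asym k n i j)))
    (URE.concList (((List.finRange k).filter (fun i => (j, false) ∈ lits i)).map
      (fun i => asym k n i j)))

/-- `E_φ = X₁ || … || X_n`. -/
def E10 {k n : ℕ} (lits : Fin k → Finset (Fin n × Bool)) : URE (Fin k × Fin n) :=
  URE.concList ((List.finRange n).map (X10 lits))

/-- `C_i = (a_{ij₁} | … | a_{ij_p})⁺` where `x_{j₁},…,x_{j_p}` are the variables used
by the clause `c_i`. -/
def C10 {k n : ℕ} (lits : Fin k → Finset (Fin n × Bool)) (i : Fin k) :
    URE (Fin k × Fin n) :=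
  URE.plus (URE.altList
    (((List.finRange n).filter (fun j => (j, true) ∈ lits i ∨ (j, false) ∈ lits i)).map
      (fun j => asym k n i j)))

/-- `L(E'_φ)` where `E'_φ = (C₁ | … | C_k)^[0,k−1]`. -/
def E10'lang {k n : ℕ} (lits : Fin k → Finset (Fin n × Bool)) :
    Set (UWord (Fin k × Fin n)) :=
  URE.langIter (URE.altList ((List.finRange k).map (C10 lits))) 0 (k - 1)

namespace S10

variable {σ : Type u} [DecidableEq σ]

lemma listSum_cons (x : UWord σ) (l : List (UWord σ)) :
    listSum (x :: l) = x.add (listSum l) := rfl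

lemma listSum_apply (l : List (UWord σ)) (a : σ) :
    listSum l a = (l.map (fun w => w a)).sum := by
  induction l with
  | nil => rfl
  | cons x l ih => simp [listSum_cons, UWord.add, ih]

lemma exists_of_listSum_ne (l : List (UWord σ)) (p : σ) (h : listSum l p ≠ 0) :
    ∃ x ∈ l, x p ≠ 0 := by
  induction l with
  | nil => exact absurd rfl h
  | cons x l ih =>
    by_cases hx : x p = 0
    · have h' : listSum l p ≠ 0 := by
        simpa [listSum_cons, UWord.add, hx] using h
      obtain ⟨y, hy, hyp⟩ := ih h'
      exact ⟨y, List.mem_cons_of_mem _ hy, hyp⟩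
    · exact ⟨x, List.mem_cons_self, hx⟩

lemma mem_concList_map {α : Type v} (l : List α) (f : α → URE σ) (g : α → UWord σ)
    (h : ∀ x ∈ l, g x ∈ (f x).lang) :
    listSum (l.map g) ∈ (URE.concList (l.map f)).lang := by
  induction l with
  | nil => exact rfl
  | cons x l ih =>
    exact ⟨g x, h x (List.mem_cons_self), listSum (l.map g),
      ih (fun y hy => h y (List.mem_cons_of_mem _ hy)), rfl⟩

lemma lang_concList_sym (as : List σ) :
    (URE.concList (as.map URE.sym)).lang = {listSum (as.map UWord.single)} := by
  induction as with
  | nil => rfl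
  | cons a as ih =>
    show (URE.conc (URE.sym a) (URE.concList (as.map URE.sym))).lang = _
    ext w
    simp only [URE.lang, ih, Set.mem_singleton_iff, Set.mem_setOf_eq]
    constructor
    · rintro ⟨w₁, rfl, w₂, rfl, rfl⟩; rfl
    · rintro rfl; exact ⟨_, rfl, _, rfl, rfl⟩

lemma listSum_map_single {as : List σ} (nd : as.Nodup) (p : σ) :
    listSum (as.map UWord.single) p = if p ∈ as then 1 else 0 := by
  induction as with
  | nil => simp [listSum, UWord.zero]
  | cons a as ih =>
    have ha : a ∉ as := (List.nodup_cons.mp nd).1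
    show UWord.single a p + listSum (as.map UWord.single) p = _
    rw [ih (List.nodup_cons.mp nd).2]
    by_cases h : p = a
    · subst h; simp [UWord.single, ha]
    · simp [UWord.single, h]

lemma mem_altList_of {l : List (URE σ)} {E : URE σ} (hE : E ∈ l) {w : UWord σ}
    (hw : w ∈ E.lang) : w ∈ (URE.altList l).lang := by
  induction l with
  | nil => cases hE
  | cons F l ih =>
    cases l with
    | nil =>
      rw [List.mem_singleton] at hE; subst hE; exact hw
    | cons G l =>
      rcases List.mem_cons.mp hE with rfl | h
      · exact Set.mem_union_left _ hw
      · exact Set.mem_union_right _ (ih h)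

lemma exists_of_mem_altList {l : List (URE σ)} (hl : l ≠ []) {w : UWord σ}
    (hw : w ∈ (URE.altList l).lang) : ∃ E ∈ l, w ∈ E.lang := by
  induction l with
  | nil => exact absurd rfl hl
  | cons F l ih =>
    cases l with
    | nil => exact ⟨F, List.mem_singleton_self F, hw⟩
    | cons G l =>
      rcases hw with hw | hw
      · exact ⟨F, List.mem_cons_self, hw⟩
      · obtain ⟨E, hE, h⟩ := ih (by simp) hw
        exact ⟨E, List.mem_cons_of_mem _ hE, h⟩

lemma exists_list_decomp [Fintype σ] :
    ∀ (N : ℕ) (w : UWord σ), (∑ a, w a) ≤ N →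
    ∃ as : List σ, (∀ a ∈ as, w a ≠ 0) ∧ w = listSum (as.map UWord.single) := by
  intro N
  induction N with
  | zero =>
    intro w hw
    refine ⟨[], by simp, funext fun a => ?_⟩
    exact Finset.sum_eq_zero_iff.mp (Nat.le_zero.mp hw) a (Finset.mem_univ a)
  | succ N ih =>
    intro w hw
    by_cases h0 : ∀ a, w a = 0
    · exact ⟨[], by simp, funext fun a => h0 a⟩
    · push_neg at h0; obtain ⟨a, ha⟩ := h0
      set w' : UWord σ := fun b => if b = a then w b - 1 else w b with hw'
      have hlt : ∑ b, w' b < ∑ b, w b := by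
        apply Finset.sum_lt_sum
        · intro b _; by_cases hb : b = a <;> simp [hw', hb] <;> omega
        · exact ⟨a, Finset.mem_univ a, by simp [hw']; omega⟩
      obtain ⟨as, h1, h2⟩ := ih w' (by omega)
      refine ⟨a :: as, ?_, funext fun b => ?_⟩
      · intro b hb
        rcases List.mem_cons.mp hb with rfl | hb
        · exact ha
        · intro hz; exact h1 b hb (by simp [hw', hz])
      · have hb : w b = UWord.single a b + w' b := by
          by_cases hb : b = a
          · subst hb; simp [UWord.single, hw']; omega
          · simp [UWord.single, hw', hb]
        simpa [listSum_cons, UWord.add, ← h2] using hb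


section Specific

variable {k n : ℕ} (lits : Fin k → Finset (Fin n × Bool))

/-- The word contributed by the branch `b` of `X_j`. -/
def colWord (j : Fin n) (b : Bool) : UWord (Fin k × Fin n) :=
  fun p => if p.2 = j ∧ (j, b) ∈ lits p.1 then 1 else 0

/-- The word corresponding to the assignment `v`. -/
def wAssign (v : Fin n → Bool) : UWord (Fin k × Fin n) :=
  fun p => if (p.2, v p.2) ∈ lits p.1 then 1 else 0

lemma colWord_eq (j : Fin n) (b : Bool) :
    colWord lits j b =
      listSum ((((List.finRange k).filter (fun i => (j, b) ∈ lits i)).map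
        (fun i => ((i, j) : Fin k × Fin n))).map UWord.single) := by
  funext p
  have nd : ((((List.finRange k).filter (fun i => (j, b) ∈ lits i)).map
      (fun i => ((i, j) : Fin k × Fin n)))).Nodup :=
    ((List.nodup_finRange k).filter _).map (fun i i' h => (Prod.mk.injEq _ _ _ _).mp h |>.1)
  rw [listSum_map_single nd]
  by_cases hp : p ∈ (((List.finRange k).filter (fun i => (j, b) ∈ lits i)).map
      (fun i => ((i, j) : Fin k × Fin n)))
  · rw [if_pos hp]
    obtain ⟨i, hi, rfl⟩ := List.mem_map.mp hp
    have := List.of_mem_filter hi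
    simp at this
    simp [colWord, this]
  · rw [if_neg hp]
    rcases p with ⟨i', j'⟩
    simp only [List.mem_map, List.mem_filter, List.mem_finRange, true_and] at hp
    push_neg at hp
    simp only [colWord, ite_eq_right_iff]
    rintro ⟨rfl, hmem⟩
    exact absurd rfl (hp i' (by simpa using hmem))

lemma branch_lang (j : Fin n) (b : Bool) :
    (URE.concList (((List.finRange k).filter (fun i => (j, b) ∈ lits i)).map
      (fun i => asym k n i j))).lang = {colWord lits j b} := by
  have hmap : ((List.finRange k).filter (fun i => (j, b) ∈ lits i)).map
      (fun i => asym k n i j)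
      = ((((List.finRange k).filter (fun i => (j, b) ∈ lits i)).map
        (fun i => ((i, j) : Fin k × Fin n))).map URE.sym) := by
    rw [List.map_map]; rfl
  rw [hmap, lang_concList_sym, colWord_eq]

lemma colWord_mem (j : Fin n) (b : Bool) : colWord lits j b ∈ (X10 lits j).lang := by
  cases b with
  | true => exact Set.mem_union_left _ (by rw [branch_lang]; rfl)
  | false => exact Set.mem_union_right _ (by rw [branch_lang]; rfl)

lemma X10_lang_sub (j : Fin n) {u : UWord (Fin k × Fin n)} (hu : u ∈ (X10 lits j).lang) :
    ∃ b : Bool, u = colWord lits j b := by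
  rcases hu with hu | hu
  · exact ⟨true, by rwa [branch_lang, Set.mem_singleton_iff] at hu⟩
  · exact ⟨false, by rwa [branch_lang, Set.mem_singleton_iff] at hu⟩

lemma listSum_colWords (v : Fin n → Bool) :
    listSum ((List.finRange n).map fun j => colWord lits j (v j)) = wAssign lits v := by
  funext p
  rw [listSum_apply, List.map_map]
  have : ((List.finRange n).map fun j => colWord lits j (v j) p).sum
      = ∑ j : Fin n, colWord lits j (v j) p := (Fin.sum_univ_def _).symm
  rw [show ((List.finRange n).map ((fun w : UWord (Fin k × Fin n) => w p) ∘
      fun j => colWord lits j (v j))) = ((List.finRange n).map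
      fun j => colWord lits j (v j) p) from rfl, this]
  have hstep : ∀ j : Fin n, colWord lits j (v j) p
      = if p.2 = j then (if (j, v j) ∈ lits p.1 then 1 else 0) else 0 := by
    intro j
    simp [colWord, and_comm, ite_and]
  simp only [hstep]
  rw [Finset.sum_ite_eq]
  simp [wAssign]

lemma wAssign_mem (v : Fin n → Bool) : wAssign lits v ∈ (E10 lits).lang := by
  rw [← listSum_colWords]
  exact mem_concList_map _ _ _ (fun j _ => colWord_mem lits j (v j))

lemma exists_choice_of_mem_concList {α : Type v} [DecidableEq α]
    (f : α → URE (Fin k × Fin n)) (h : α → Bool → UWord (Fin k × Fin n))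
    (hf : ∀ x, ∀ u ∈ (f x).lang, ∃ b, u = h x b) :
    ∀ (l : List α), l.Nodup → ∀ w ∈ (URE.concList (l.map f)).lang,
      ∃ b : α → Bool, w = listSum (l.map fun x => h x (b x)) := by
  intro l
  induction l with
  | nil => intro _ w hw; exact ⟨fun _ => true, hw⟩
  | cons x l ih =>
    intro hnd w hw
    obtain ⟨w₁, h₁, w₂, h₂, rfl⟩ := hw
    obtain ⟨bx, rfl⟩ := hf x _ h₁
    obtain ⟨b, rfl⟩ := ih hnd.of_cons w₂ h₂
    have hx : x ∉ l := (List.nodup_cons.mp hnd).1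
    refine ⟨Function.update b x bx, ?_⟩
    rw [List.map_cons, listSum_cons, Function.update_self]
    refine congrArg (UWord.add _) (congrArg listSum ?_)
    refine (List.map_congr_left fun y hy => ?_).symm
    rw [Function.update_of_ne (by rintro rfl; exact hx hy)]

lemma exists_v {w : UWord (Fin k × Fin n)} (hw : w ∈ (E10 lits).lang) :
    ∃ v : Fin n → Bool, w = wAssign lits v := by
  obtain ⟨v, rfl⟩ := exists_choice_of_mem_concList (X10 lits) (colWord lits)
    (fun j u hu => X10_lang_sub lits j hu) (List.finRange n) (List.nodup_finRange n) w hw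
  exact ⟨v, listSum_colWords lits v⟩


lemma support_altC (i : Fin k) {u : UWord (Fin k × Fin n)}
    (hu : u ∈ (URE.altList (((List.finRange n).filter
      (fun j => (j, true) ∈ lits i ∨ (j, false) ∈ lits i)).map
      (fun j => asym k n i j))).lang) :
    ∀ p, u p ≠ 0 → p.1 = i := by
  intro p hp
  by_cases hl : (((List.finRange n).filter
      (fun j => (j, true) ∈ lits i ∨ (j, false) ∈ lits i)).map
      (fun j => asym k n i j)) = []
  · rw [hl] at hu
    have : u = UWord.zero := hu
    exact absurd (congrFun this p) hp
  · obtain ⟨E, hE, huE⟩ := exists_of_mem_altList hl hu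
    obtain ⟨j, -, rfl⟩ := List.mem_map.mp hE
    have : u = UWord.single (i, j) := huE
    subst this
    by_contra hne
    apply hp
    simp only [UWord.single, ite_eq_right_iff]
    rintro rfl
    exact absurd rfl hne

lemma support_C10 (i : Fin k) {x : UWord (Fin k × Fin n)}
    (hx : x ∈ (C10 lits i).lang) : ∀ p, x p ≠ 0 → p.1 = i := by
  obtain ⟨w₁, h₁, w₂, h₂, rfl⟩ := hx
  obtain ⟨l, hl, rfl⟩ := h₂
  intro p hp
  have : w₁ p ≠ 0 ∨ listSum l p ≠ 0 := by
    by_contra hc; push_neg at hc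
    exact hp (by simp [UWord.add, hc.1, hc.2])
  rcases this with h | h
  · exact support_altC lits i h₁ p h
  · obtain ⟨y, hy, hyp⟩ := exists_of_listSum_ne l p h
    exact support_altC lits i (hl y hy) p hyp

lemma mem_C10 (i : Fin k) (r : UWord (Fin k × Fin n)) (hne : ∃ p, r p ≠ 0)
    (hsupp : ∀ p, r p ≠ 0 → p.1 = i ∧ usesVar lits i p.2) :
    r ∈ (C10 lits i).lang := by
  obtain ⟨as, h1, h2⟩ := exists_list_decomp (∑ p, r p) r le_rfl
  have has : ∀ a ∈ as, UWord.single a ∈ (URE.altList (((List.finRange n).filter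
      (fun j => (j, true) ∈ lits i ∨ (j, false) ∈ lits i)).map
      (fun j => asym k n i j))).lang := by
    rintro ⟨i', j'⟩ ha
    obtain ⟨hi', hj'⟩ := hsupp _ (h1 _ ha)
    dsimp at hi'
    subst hi'
    refine mem_altList_of (E := asym k n i' j') ?_ rfl
    exact List.mem_map.mpr ⟨j', List.mem_filter.mpr ⟨List.mem_finRange j', by
      simpa [usesVar] using hj'⟩, rfl⟩
  match as, h2, has with
  | [], h2, _ =>
    obtain ⟨p, hp⟩ := hne
    rw [h2] at hp
    exact absurd rfl hp
  | a :: as', h2, has =>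
    refine ⟨UWord.single a, has a (List.mem_cons_self),
      listSum (as'.map UWord.single),
      ⟨as'.map UWord.single, ?_, rfl⟩, h2⟩
    rintro x hx
    obtain ⟨a', ha', rfl⟩ := List.mem_map.mp hx
    exact has a' (List.mem_cons_of_mem _ ha')

lemma not_mem_E10' (hk : 0 < k) (v : Fin n → Bool)
    (hv : ∀ i : Fin k, ∃ ℓ ∈ lits i, v ℓ.1 = ℓ.2) :
    wAssign lits v ∉ E10'lang lits := by
  rintro ⟨l, hmem, -, hlen, heq⟩
  have hrow : ∀ x ∈ l, ∃ i : Fin k, ∀ p, x p ≠ 0 → p.1 = i := by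
    intro x hx
    have hnil : ((List.finRange k).map (C10 lits)) ≠ [] := by
      intro h
      have := congrArg List.length h
      simp at this
      omega
    obtain ⟨E, hE, hxE⟩ := exists_of_mem_altList hnil (hmem x hx)
    obtain ⟨i, -, rfl⟩ := List.mem_map.mp hE
    exact ⟨i, support_C10 lits i hxE⟩
  have H : ∀ i : Fin k, ∃ m : Fin l.length, ∃ j, l.get m (i, j) ≠ 0 := by
    intro i
    obtain ⟨ℓ, hℓ, hvℓ⟩ := hv i
    have hne : wAssign lits v (i, ℓ.1) ≠ 0 := by
      simp only [wAssign]
      rw [if_pos (by rwa [hvℓ, Prod.mk.eta])]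
      omega
    rw [heq] at hne
    obtain ⟨x, hx, hxp⟩ := exists_of_listSum_ne l _ hne
    obtain ⟨m, rfl⟩ := List.mem_iff_get.mp hx
    exact ⟨m, ℓ.1, hxp⟩
  choose m j hm using H
  have hinj : Function.Injective m := by
    intro i i' he
    obtain ⟨r, hr⟩ := hrow (l.get (m i)) (l.get_mem _)
    have h1 : i = r := hr _ (hm i)
    have h2 : i' = r := hr _ (by rw [he]; exact hm i')
    rw [h1, h2]
  have := Fintype.card_le_of_injective m hinj
  simp [Fintype.card_fin] at this
  omega

lemma mem_E10'_of_unsat (v : Fin n → Bool) (i₀ : Fin k)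
    (h : ∀ j : Fin n, (j, v j) ∉ lits i₀) :
    wAssign lits v ∈ E10'lang lits := by
  classical
  have hrow0 : ∀ j, wAssign lits v (i₀, j) = 0 := by
    intro j
    simp only [wAssign]
    exact if_neg (h j)
  set R : Finset (Fin k) :=
    Finset.univ.filter (fun i => ∃ j, wAssign lits v (i, j) ≠ 0) with hR
  refine ⟨R.toList.map (fun i => fun p => if p.1 = i then wAssign lits v p else 0),
    ?_, by omega, ?_, ?_⟩
  · intro x hx
    obtain ⟨i, hi, rfl⟩ := List.mem_map.mp hx
    rw [Finset.mem_toList, hR, Finset.mem_filter] at hi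
    obtain ⟨-, jw, hjw⟩ := hi
    refine mem_altList_of (E := C10 lits i)
      (List.mem_map.mpr ⟨i, List.mem_finRange i, rfl⟩) ?_
    refine mem_C10 lits i _ ⟨(i, jw), by simpa using hjw⟩ ?_
    rintro ⟨i', j'⟩ hp
    have hii : i' = i := by
      by_contra hc
      exact hp (if_neg hc)
    subst hii
    rw [if_pos rfl] at hp
    refine ⟨rfl, ?_⟩
    simp only [wAssign] at hp
    have hmem : (j', v j') ∈ lits i' := by
      by_contra hc
      exact hp (if_neg hc)
    cases hvj : v j' with
    | true => exact Or.inl (by rwa [hvj] at hmem)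
    | false => exact Or.inr (by rwa [hvj] at hmem)
  · erw [List.length_map, Finset.length_toList]
    have hsub : R ⊆ Finset.univ.erase i₀ := by
      intro i hi
      rw [hR, Finset.mem_filter] at hi
      obtain ⟨-, jw, hjw⟩ := hi
      refine Finset.mem_erase.mpr ⟨?_, Finset.mem_univ i⟩
      rintro rfl
      exact hjw (hrow0 jw)
    have := Finset.card_le_card hsub
    rw [Finset.card_erase_of_mem (Finset.mem_univ i₀), Finset.card_univ,
      Fintype.card_fin] at this
    omega
  · funext p
    rw [listSum_apply]
    erw [List.map_map]
    have : ((R.toList.map ((fun w : UWord (Fin k × Fin n) => w p) ∘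
        (fun i => fun q => if q.1 = i then wAssign lits v q else 0)))).sum
        = ∑ i ∈ R, (if p.1 = i then wAssign lits v p else 0) := by
      rw [← Finset.sum_map_toList]
      rfl
    rw [this, Finset.sum_ite_eq]
    by_cases hp : p.1 ∈ R
    · rw [if_pos hp]
    · rw [if_neg hp]
      rw [hR, Finset.mem_filter] at hp
      push_neg at hp
      have := hp (Finset.mem_univ p.1) p.2
      rwa [Prod.mk.eta] at this

end Specific

end S10

/-- For a 3CNF formula `φ` in which each variable occurs at most once
in each clause: `φ` is satisfiable if and only if `L(E_φ)` is not contained in `L(E'_φ)`. -/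
theorem statement10 (k n : ℕ) (hk : 0 < k) (lits : Fin k → Finset (Fin n × Bool))
    (h3 : ∀ i : Fin k, (lits i).card = 3)
    (honce : ∀ (i : Fin k) (j : Fin n) (s s' : Bool),
        (j, s) ∈ lits i → (j, s') ∈ lits i → s = s') :
    (∃ v : Fin n → Bool, ∀ i : Fin k, ∃ ℓ ∈ lits i, v ℓ.1 = ℓ.2) ↔
      ¬ (URE.lang (E10 lits) ⊆ E10'lang lits) := by
  constructor
  · rintro ⟨v, hv⟩ hsub
    exact S10.not_mem_E10' lits hk v hv (hsub (S10.wAssign_mem lits v))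
  · intro hns
    obtain ⟨w, hw, hw2⟩ := Set.not_subset.mp hns
    obtain ⟨v, rfl⟩ := S10.exists_v lits hw
    refine ⟨v, fun i => ?_⟩
    by_contra hcl
    push_neg at hcl
    refine hw2 (S10.mem_E10'_of_unsat lits v i fun j hj => ?_)
    exact hcl (j, v j) hj rfl
end
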